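/- arXiv:1309.6103 — 5 statements merged into one kernel-verified Lean document; each statement's English description precedes it below -/
import Mathlib

section
/- Let f : G → ℂ be continuous and Γ-left-invariant (f(γg) = f(g) for all γ ∈ Γ, g ∈ G). Then for every T ∈ SL(2,ℤ), every M ∈ SL(2,ℝ) and every m ∈ ℤ²: f̂(TM, m) = f̂(M, m·ᵗT⁻¹), where ᵗT⁻¹ is the transpose of T⁻¹ acting on the row vector m on the right (note m·ᵗT⁻¹ ∈ ℤ²). In particular, for every n ∈ ℤ the function f̃_n satisfies f̃_n([[1,x],[0,1]]·M) = f̃_n(M) for all x ∈ ℤ and M ∈ SL(2,ℝ), and f̃₀(T·M) = f̃₀(M) for all T ∈ SL(2,ℤ) and M ∈ SL(2,ℝ). -/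
open MeasureTheory Real Matrix Set
open scoped ENNReal

noncomputable section

instance : MeasurableSpace (Matrix (Fin 2) (Fin 2) ℝ) := borel _
instance : BorelSpace (Matrix (Fin 2) (Fin 2) ℝ) := ⟨rfl⟩

/-- The ambient space containing the group `G = SL(2,ℝ) ⋉ ℝ²` (pairs of a `2×2`
real matrix and a row vector). -/
abbrev GG : Type := Matrix (Fin 2) (Fin 2) ℝ × (Fin 2 → ℝ)

/-- The multiplication law `(M,v)(M',v') = (MM', vM' + v')`. -/
def gmul (g h : GG) : GG := (g.1 * h.1, Matrix.vecMul g.2 h.1 + h.2)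

/-- `G`, i.e. the set of pairs whose matrix part has determinant one. -/
def GSet : Set GG := {g | g.1.det = 1}

/-- `Γ = SL(2,ℤ) ⋉ ℤ²`. -/
def GammaSet : Set GG :=
  {g | g.1.det = 1 ∧ (∀ i j, ∃ n : ℤ, g.1 i j = (n : ℝ)) ∧ ∀ i, ∃ n : ℤ, g.2 i = (n : ℝ)}

/-- `U^x`. -/
def uElt (x : ℝ) : GG := (!![1, x; 0, 1], 0)

/-- `a(y)`. -/
def aElt (y : ℝ) : GG := (!![Real.sqrt y, 0; 0, (Real.sqrt y)⁻¹], 0)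

/-- `(1₂, ξ)`. -/
def transl (ξ : Fin 2 → ℝ) : GG := (1, ξ)

/-- The five one-parameter subgroups `e₁,…,e₅`. -/
def eFlow : Fin 5 → ℝ → GG :=
  ![fun t => (!![1, t; 0, 1], 0),
    fun t => (!![1, 0; t, 1], 0),
    fun t => (!![Real.exp t, 0; 0, Real.exp (-t)], 0),
    fun t => (1, ![t, 0]),
    fun t => (1, ![0, t])]

/-- Left invariant derivative in the direction `e_i`. -/
def Dder (i : Fin 5) (F : GG → ℝ) : GG → ℝ :=
  fun g => deriv (fun t : ℝ => F (gmul g (eFlow i t))) 0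

/-- Iterated left invariant derivative `D_w` associated to a word `w`. -/
def Dword : List (Fin 5) → (GG → ℝ) → GG → ℝ
  | [], F => F
  | i :: w, F => Dder i (Dword w F)

/-- `f ∈ C_b^k(Γ\G)` : `f` is `Γ`-left-invariant and all its left invariant
derivatives of order `≤ k` exist on `G`, are continuous and bounded there. -/
def InCb (k : ℕ) (f : GG → ℝ) : Prop :=
  (∀ γ ∈ GammaSet, ∀ g ∈ GSet, f (gmul γ g) = f g) ∧
  (∀ w : List (Fin 5), w.length ≤ k →
      ContinuousOn (Dword w f) GSet ∧ ∃ B : ℝ, ∀ g ∈ GSet, |Dword w f g| ≤ B) ∧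
  (∀ (i : Fin 5) (w : List (Fin 5)), (i :: w).length ≤ k → ∀ g ∈ GSet,
      DifferentiableAt ℝ (fun t : ℝ => Dword w f (gmul g (eFlow i t))) 0)

/-- The norm `‖f‖_{C_b^k} = ∑_w sup_{g ∈ G} |D_w f(g)|`, summed over all words of
length `≤ k`. -/
def CbNorm (k : ℕ) (f : GG → ℝ) : ℝ :=
  ∑ n ∈ Finset.range (k + 1), ∑ w : Fin n → Fin 5,
    ⨆ g : GSet, |Dword (List.ofFn w) f (g : GG)|

/-- `ν` is a left Haar measure on `G` (viewed as a measure on the ambient space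
which is concentrated on `GSet`): left invariant, finite on compacts and positive
on nonempty relatively open subsets of `G`. -/
def IsHaarOnG (ν : Measure GG) : Prop :=
  ν GSetᶜ = 0 ∧
  (∀ g ∈ GSet, MeasurePreserving (fun h => gmul g h) ν ν) ∧
  (∀ K : Set GG, IsCompact K → ν K < ⊤) ∧
  (∀ U : Set GG, IsOpen U → (U ∩ GSet).Nonempty → 0 < ν U)

/-- `F` is a `ν`-measurable fundamental domain for the left action of `Γ` on `G`. -/
def IsFundDom (ν : Measure GG) (F : Set GG) : Prop :=
  MeasurableSet F ∧ F ⊆ GSet ∧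
  ν (GSet \ ⋃ γ ∈ GammaSet, gmul γ '' F) = 0 ∧
  ∀ γ₁ ∈ GammaSet, ∀ γ₂ ∈ GammaSet, γ₁ ≠ γ₂ → ν (gmul γ₁ '' F ∩ gmul γ₂ '' F) = 0

/-- `∫_X f dμ = ν(F)⁻¹ ∫_F f dν`. -/
def XAvg (ν : Measure GG) (F : Set GG) (f : GG → ℝ) : ℝ :=
  (ν F).toReal⁻¹ * ∫ g in F, f g ∂ν

/-- `⟨x⟩`, the distance from `x` to the nearest integer. -/
def nint (x : ℝ) : ℝ := |x - (round x : ℝ)|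

/-- The majorant `b_{ξ,L}(y)`, computed in `[0,∞]` with the convention `a/0 = ∞`. -/
def bMajE (ξ : Fin 2 → ℝ) (L y : ℝ) : ℝ≥0∞ :=
  ⨆ q : ℕ+, min (min (ENNReal.ofReal (1 / (q : ℝ) ^ 2))
      (ENNReal.ofReal (Real.sqrt y) / ENNReal.ofReal (L * (q : ℝ) * nint ((q : ℝ) * ξ 0))))
    (ENNReal.ofReal (Real.sqrt y) / ENNReal.ofReal ((q : ℝ) * nint ((q : ℝ) * ξ 1)))

/-- The majorant `b_{ξ,L}(y)` as a real number (it is always `≤ 1`). -/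
def bMaj (ξ : Fin 2 → ℝ) (L y : ℝ) : ℝ := (bMajE ξ L y).toReal

/-- The Euclidean norm on `ℝ²`. -/
def eNorm2 (v : Fin 2 → ℝ) : ℝ := Real.sqrt (v 0 ^ 2 + v 1 ^ 2)

/-- `ℓ(M)`: the Euclidean length of the shortest nonzero vector of `ℤ²M`. -/
def ellM (M : Matrix (Fin 2) (Fin 2) ℝ) : ℝ :=
  ⨅ m : {m : Fin 2 → ℤ // m ≠ 0}, eNorm2 (Matrix.vecMul (fun i => (m.1 i : ℝ)) M)

/-- `y_g(T) = T⁻¹ ℓ(g a(T))⁻²`. -/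
def ygT (g : GG) (T : ℝ) : ℝ := T⁻¹ * (ellM ((gmul g (aElt T)).1) ^ 2)⁻¹

/-- The set of `δ > 0` such that for all `1 ≤ q ≤ δ^{-1/2}`, the set `(q⁻¹ℤ²)g`
is disjoint from `(1/(δq²)) 𝔯_T`. -/
def bgSet (g : GG) (T : ℝ) : Set ℝ :=
  {δ | 0 < δ ∧ ∀ q : ℕ+, ((q : ℕ) : ℝ) ≤ (Real.sqrt δ)⁻¹ → ∀ m : Fin 2 → ℤ,
    ¬ (|Matrix.vecMul (fun i => (m i : ℝ) / ((q : ℕ) : ℝ)) g.1 0 + g.2 0| ≤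
          1 / (δ * ((q : ℕ) : ℝ) ^ 2 * T) ∧
       |Matrix.vecMul (fun i => (m i : ℝ) / ((q : ℕ) : ℝ)) g.1 1 + g.2 1| ≤
          1 / (δ * ((q : ℕ) : ℝ) ^ 2))}

/-- `b_g(T)`, computed in `[0,∞]` (it is `∞` if no `δ > 0` qualifies). -/
def bgE (g : GG) (T : ℝ) : ℝ≥0∞ := sInf (ENNReal.ofReal '' bgSet g T)

/-- The Sobolev norm `‖φ‖_{W^{k,1}}`. -/
def W11Norm (k : ℕ) (φ : ℝ → ℝ) : ℝ :=
  ∑ j ∈ Finset.range (k + 1), ∫ x : ℝ, |iteratedDeriv j φ x|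

/-- `𝔐̃_ξ(X) = ∑_{k≥1} σ(k) min(1/k², 1/(Xk⟨kξ⟩))`, a term with `⟨kξ⟩ = 0` being
read as `σ(k)/k²`. -/
def Mtilde (ξ X : ℝ) : ℝ :=
  ∑' k : ℕ+, (((k : ℕ).divisors.card : ℝ) *
    (if nint (((k : ℕ) : ℝ) * ξ) = 0 then 1 / ((k : ℕ) : ℝ) ^ 2
     else min (1 / ((k : ℕ) : ℝ) ^ 2) (1 / (X * ((k : ℕ) : ℝ) * nint (((k : ℕ) : ℝ) * ξ)))))

/-- `e(x) = e^{2πix}`. -/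
def e2πi (x : ℝ) : ℂ := Complex.exp (2 * (Real.pi : ℂ) * Complex.I * (x : ℂ))

/-- The Fourier coefficient `f̂(M,m)` of a `Γ`-invariant function on `G`. -/
def fhat (f : GG → ℂ) (M : Matrix (Fin 2) (Fin 2) ℝ) (m : Fin 2 → ℤ) : ℂ :=
  ∫ ξ in Set.univ.pi fun _ : Fin 2 => Set.Icc (0:ℝ) 1,
    f (gmul (transl ξ) (M, 0)) * e2πi (-(∑ i, (m i : ℝ) * ξ i))

/-- `f̃_n(M) = f̂(M,(n,0))`. -/
def ftilde (f : GG → ℂ) (n : ℤ) (M : Matrix (Fin 2) (Fin 2) ℝ) : ℂ := fhat f M ![n, 0]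

end


noncomputable section

def phiT (T' Ti' : Matrix (Fin 2) (Fin 2) ℝ) (h1 : T' * Ti' = 1) (h2 : Ti' * T' = 1) :
    (Fin 2 → ℝ) ≃ₗ[ℝ] (Fin 2 → ℝ) :=
  LinearEquiv.ofLinear (Matrix.toLin' T'ᵀ) (Matrix.toLin' Ti'ᵀ)
    (by rw [← Matrix.toLin'_mul, ← Matrix.transpose_mul, h2, Matrix.transpose_one, Matrix.toLin'_one])
    (by rw [← Matrix.toLin'_mul, ← Matrix.transpose_mul, h1, Matrix.transpose_one, Matrix.toLin'_one])

lemma phiT_apply (T' Ti' : Matrix (Fin 2) (Fin 2) ℝ) (h1 h2) (x : Fin 2 → ℝ) :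
    phiT T' Ti' h1 h2 x = Matrix.vecMul x T' := by
  simp [phiT, Matrix.toLin'_apply, Matrix.mulVec_transpose]

lemma phiT_symm_apply (T' Ti' : Matrix (Fin 2) (Fin 2) ℝ) (h1 h2) (x : Fin 2 → ℝ) :
    (phiT T' Ti' h1 h2).symm x = Matrix.vecMul x Ti' := by
  simp [phiT, Matrix.toLin'_apply, Matrix.mulVec_transpose]

lemma phiT_measurePreserving (T' Ti' : Matrix (Fin 2) (Fin 2) ℝ) (h1 h2) (hd : T'.det = 1) :
    MeasurePreserving (phiT T' Ti' h1 h2) volume volume := by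
  have hdet : LinearMap.det ((phiT T' Ti' h1 h2).toLinearMap) = 1 := by
    show LinearMap.det (Matrix.toLin' T'ᵀ) = 1
    rw [LinearMap.det_toLin', Matrix.det_transpose, hd]
  have hcont : Continuous (phiT T' Ti' h1 h2) :=
    LinearMap.continuous_of_finiteDimensional _
  refine ⟨hcont.measurable, ?_⟩
  have : ⇑(phiT T' Ti' h1 h2) = ⇑((phiT T' Ti' h1 h2).toLinearMap) := rfl
  rw [this, Real.map_linearMap_volume_pi_eq_smul_volume_pi (f := (phiT T' Ti' h1 h2).toLinearMap)
    (by rw [hdet]; norm_num), hdet]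
  norm_num

lemma mem_intlat_iff (x : Fin 2 → ℝ) :
    x ∈ Submodule.span ℤ (Set.range (Pi.basisFun ℝ (Fin 2))) ↔
      ∃ m : Fin 2 → ℤ, ∀ i, x i = (m i : ℝ) := by
  constructor
  · intro hx
    induction hx using Submodule.span_induction with
    | mem y hy =>
      obtain ⟨i, rfl⟩ := hy
      exact ⟨fun j => if j = i then 1 else 0, fun j => by
        simp [Pi.basisFun_apply, Pi.single_apply]⟩
    | zero => exact ⟨0, by simp⟩
    | add y z _ _ hy hz =>
      obtain ⟨a, ha⟩ := hy; obtain ⟨b, hb⟩ := hz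
      exact ⟨a + b, fun i => by simp [ha i, hb i]⟩
    | smul c y _ hy =>
      obtain ⟨a, ha⟩ := hy
      exact ⟨c • a, fun i => by simp [ha i]⟩
  · rintro ⟨m, hm⟩
    have : x = ∑ i, (m i : ℤ) • (Pi.basisFun ℝ (Fin 2)) i := by
      funext j
      simp [Pi.basisFun_apply, Pi.single_apply, hm j, Finset.sum_apply]
    rw [this]
    exact Submodule.sum_mem _ fun i _ => Submodule.smul_mem _ _
      (Submodule.subset_span ⟨i, rfl⟩)

lemma vecMul_intCast' (m : Fin 2 → ℤ) (A : Matrix (Fin 2) (Fin 2) ℤ) (j : Fin 2) :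
    Matrix.vecMul (fun i => (m i : ℝ)) (A.map ((↑) : ℤ → ℝ)) j
      = ((Matrix.vecMul m A j : ℤ) : ℝ) := by
  simp [Matrix.vecMul, dotProduct, Matrix.map_apply]

lemma cube_ae :
    (Set.univ.pi fun _ : Fin 2 => Set.Icc (0:ℝ) 1) =ᵐ[(volume : Measure (Fin 2 → ℝ))]
      (Set.univ.pi fun _ : Fin 2 => Set.Ico (0:ℝ) 1) := by
  rw [MeasureTheory.ae_eq_set]
  constructor
  · have hsub : (Set.univ.pi fun _ : Fin 2 => Set.Ico (0:ℝ) 1) ⊆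
        (Set.univ.pi fun _ : Fin 2 => Set.Icc (0:ℝ) 1) :=
      Set.pi_mono fun i _ => Set.Ico_subset_Icc_self
    have h1 : volume (Set.univ.pi fun _ : Fin 2 => Set.Icc (0:ℝ) 1) = 1 := by
      rw [volume_pi_pi]; simp
    have h2 : volume (Set.univ.pi fun _ : Fin 2 => Set.Ico (0:ℝ) 1) = 1 := by
      rw [volume_pi_pi]; simp
    have hmeas : MeasurableSet (Set.univ.pi fun _ : Fin 2 => Set.Ico (0:ℝ) 1) :=
      MeasurableSet.univ_pi fun _ => measurableSet_Ico
    rw [measure_diff hsub hmeas.nullMeasurableSet (by rw [h2]; exact ENNReal.one_ne_top), h1, h2]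
    simp
  · rw [Set.diff_eq_empty.2 (Set.pi_mono fun i _ => Set.Ico_subset_Icc_self)]
    simp

/-- Change of variables by `T ∈ SL(2,ℤ)` for integrals of `ℤ²`-periodic functions over the cube. -/
lemma key_cov (T : Matrix (Fin 2) (Fin 2) ℤ) (hT : T.det = 1) (G : (Fin 2 → ℝ) → ℂ)
    (hG : ∀ (m : Fin 2 → ℤ) (η : Fin 2 → ℝ), G ((fun i => (m i : ℝ)) + η) = G η) :
    ∫ ξ in Set.univ.pi fun _ : Fin 2 => Set.Icc (0:ℝ) 1,
        G (Matrix.vecMul ξ (T.map ((↑) : ℤ → ℝ)))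
      = ∫ ξ in Set.univ.pi fun _ : Fin 2 => Set.Icc (0:ℝ) 1, G ξ := by
  have hU : IsUnit T.det := by rw [hT]; exact isUnit_one
  have hTr : T * T⁻¹ = 1 := Matrix.mul_nonsing_inv T hU
  have hTl : T⁻¹ * T = 1 := Matrix.nonsing_inv_mul T hU
  set T' := T.map ((↑) : ℤ → ℝ) with hT'
  set Ti' := (T⁻¹).map ((↑) : ℤ → ℝ) with hTi'
  have hmm : ∀ A B : Matrix (Fin 2) (Fin 2) ℤ, (A * B).map ((↑) : ℤ → ℝ)
      = A.map ((↑) : ℤ → ℝ) * B.map ((↑) : ℤ → ℝ) := fun A B => by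
    ext i j; simp [Matrix.mul_apply, Matrix.map_apply]
  have hone : (1 : Matrix (Fin 2) (Fin 2) ℤ).map ((↑) : ℤ → ℝ) = 1 :=
    Matrix.map_one _ (by simp) (by simp)
  have h1 : T' * Ti' = 1 := by rw [hT', hTi', ← hmm, hTr, hone]
  have h2 : Ti' * T' = 1 := by rw [hT', hTi', ← hmm, hTl, hone]
  have hd : T'.det = 1 := by
    have := congrArg (fun z : ℤ => (z : ℝ)) hT
    rw [Matrix.det_fin_two] at this
    rw [hT', Matrix.det_fin_two]
    simp only [Matrix.map_apply]
    push_cast at this ⊢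
    linarith
  set φ := phiT T' Ti' h1 h2 with hφ
  have hmp : MeasurePreserving φ volume volume := phiT_measurePreserving T' Ti' h1 h2 hd
  have hcont : Continuous φ := LinearMap.continuous_of_finiteDimensional _
  have hcont' : Continuous φ.symm := LinearMap.continuous_of_finiteDimensional _
  have hemb : MeasurableEmbedding φ :=
    (MeasurableEquiv.mk φ.toEquiv hcont.measurable hcont'.measurable).measurableEmbedding
  set b0 := Pi.basisFun ℝ (Fin 2) with hb0
  set b1 := b0.map φ with hb1
  -- the two lattices coincide
  have hspan : Submodule.span ℤ (Set.range ⇑b1) = Submodule.span ℤ (Set.range ⇑b0) := by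
    rw [← ZSpan.map b0 φ]
    ext x
    simp only [Submodule.mem_map, LinearEquiv.restrictScalars_apply]
    constructor
    · rintro ⟨y, hy, rfl⟩
      obtain ⟨m, hm⟩ := (mem_intlat_iff y).1 hy
      rw [mem_intlat_iff]
      refine ⟨Matrix.vecMul m T, fun i => ?_⟩
      have : y = fun i => (m i : ℝ) := funext hm
      rw [hφ]; show phiT T' Ti' h1 h2 y i = _
      rw [phiT_apply, this, hT', vecMul_intCast']
    · intro hx
      obtain ⟨m, hm⟩ := (mem_intlat_iff x).1 hx
      refine ⟨fun i => ((Matrix.vecMul m T⁻¹ i : ℤ) : ℝ), ?_, ?_⟩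
      · rw [mem_intlat_iff]; exact ⟨Matrix.vecMul m T⁻¹, fun i => rfl⟩
      · funext j
        rw [hφ]; show phiT T' Ti' h1 h2 (fun i => ((Matrix.vecMul m T⁻¹ i : ℤ) : ℝ)) j = _
        rw [phiT_apply, hT', vecMul_intCast', Matrix.vecMul_vecMul, hTl,
          Matrix.vecMul_one, hm j]
  have hfd0 : IsAddFundamentalDomain (Submodule.span ℤ (Set.range ⇑b0))
      (ZSpan.fundamentalDomain b0) volume := ZSpan.isAddFundamentalDomain b0 volume
  have hfd1 : IsAddFundamentalDomain (Submodule.span ℤ (Set.range ⇑b0))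
      (ZSpan.fundamentalDomain b1) volume := by
    have := ZSpan.isAddFundamentalDomain b1 volume
    rwa [hspan] at this
  have hpre : ⇑φ ⁻¹' (ZSpan.fundamentalDomain b1) = ZSpan.fundamentalDomain b0 := by
    rw [← ZSpan.map_fundamentalDomain b0 φ, Set.preimage_image_eq _ φ.injective]
  have : MeasurableVAdd ↥(Submodule.span ℤ (Set.range ⇑b0)) (Fin 2 → ℝ) :=
    (inferInstance : MeasurableVAdd (Submodule.span ℤ (Set.range ⇑b0)).toAddSubgroup (Fin 2 → ℝ))
  have : VAddInvariantMeasure ↥(Submodule.span ℤ (Set.range ⇑b0)) (Fin 2 → ℝ) volume :=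
    (inferInstance : VAddInvariantMeasure (Submodule.span ℤ (Set.range ⇑b0)).toAddSubgroup
      (Fin 2 → ℝ) volume)
  have hinv : ∀ (g : ↥(Submodule.span ℤ (Set.range ⇑b0))) (x : Fin 2 → ℝ),
      G (g +ᵥ x) = G x := by
    rintro ⟨g, hg⟩ x
    obtain ⟨m, hm⟩ := (mem_intlat_iff g).1 hg
    have hgm : g = fun i => (m i : ℝ) := funext hm
    show G (g + x) = G x
    rw [hgm]; exact hG m x
  calc ∫ ξ in Set.univ.pi fun _ : Fin 2 => Set.Icc (0:ℝ) 1, G (Matrix.vecMul ξ T')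
      = ∫ ξ in Set.univ.pi fun _ : Fin 2 => Set.Ico (0:ℝ) 1, G (φ ξ) := by
        refine MeasureTheory.setIntegral_congr_set cube_ae |>.trans ?_
        refine setIntegral_congr_fun (MeasurableSet.univ_pi fun _ => measurableSet_Ico)
          fun ξ _ => ?_
        rw [hφ, phiT_apply]
    _ = ∫ ξ in φ ⁻¹' (ZSpan.fundamentalDomain b1), G (φ ξ) := by
        rw [hpre, ZSpan.fundamentalDomain_pi_basisFun]
    _ = ∫ η in ZSpan.fundamentalDomain b1, G η :=
        hmp.setIntegral_preimage_emb hemb _ _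
    _ = ∫ η in ZSpan.fundamentalDomain b0, G η :=
        hfd1.setIntegral_eq hfd0 hinv
    _ = ∫ ξ in Set.univ.pi fun _ : Fin 2 => Set.Icc (0:ℝ) 1, G ξ := by
        rw [ZSpan.fundamentalDomain_pi_basisFun]
        exact (MeasureTheory.setIntegral_congr_set cube_ae).symm


lemma e2pi_add (x y : ℝ) : e2πi (x + y) = e2πi x * e2πi y := by
  simp only [e2πi, ← Complex.exp_add]
  congr 1
  push_cast
  ring

lemma e2pi_int (k : ℤ) : e2πi (k : ℝ) = 1 := by
  simp only [e2πi]
  rw [show (2 * (Real.pi : ℂ) * Complex.I * ((k : ℝ) : ℂ)) = (k : ℂ) * (2 * Real.pi * Complex.I) by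
    push_cast; ring]
  exact Complex.exp_int_mul_two_pi_mul_I k

lemma det_map_cast (T : Matrix (Fin 2) (Fin 2) ℤ) (hT : T.det = 1) :
    (T.map ((↑) : ℤ → ℝ)).det = 1 := by
  have := congrArg (fun z : ℤ => (z : ℝ)) hT
  rw [Matrix.det_fin_two] at this
  rw [Matrix.det_fin_two]
  simp only [Matrix.map_apply]
  push_cast at this ⊢
  linarith

lemma gamma_transl (ℓ : Fin 2 → ℤ) :
    (((1 : Matrix (Fin 2) (Fin 2) ℝ), fun i => (ℓ i : ℝ)) : GG) ∈ GammaSet := by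
  refine ⟨Matrix.det_one, fun i j => ⟨if i = j then 1 else 0, ?_⟩, fun i => ⟨ℓ i, rfl⟩⟩
  by_cases h : i = j <;> simp [Matrix.one_apply, h]

lemma gamma_mat (T : Matrix (Fin 2) (Fin 2) ℤ) (hT : T.det = 1) :
    ((T.map ((↑) : ℤ → ℝ), (0 : Fin 2 → ℝ)) : GG) ∈ GammaSet :=
  ⟨det_map_cast T hT, fun i j => ⟨T i j, rfl⟩, fun i => ⟨0, by simp⟩⟩

/-- **Lemma 4.1 (invariance of Fourier coefficients).** For continuous
`Γ`-left-invariant `f : G → ℂ` one has `f̂(TM,m) = f̂(M, m ᵗT⁻¹)` for all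
`T ∈ SL(2,ℤ)`, `M ∈ SL(2,ℝ)`, `m ∈ ℤ²`; in particular each `f̃_n` is left
`Γ'_∞`-invariant, and `f̃₀` is left `SL(2,ℤ)`-invariant. -/
theorem fourier_coefficient_invariance
    (f : GG → ℂ) (hfc : ContinuousOn f GSet)
    (hfinv : ∀ γ ∈ GammaSet, ∀ g ∈ GSet, f (gmul γ g) = f g) :
    (∀ T : Matrix (Fin 2) (Fin 2) ℤ, T.det = 1 →
      ∀ M : Matrix (Fin 2) (Fin 2) ℝ, M.det = 1 → ∀ m : Fin 2 → ℤ,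
        fhat f (T.map ((↑) : ℤ → ℝ) * M) m = fhat f M (Matrix.vecMul m (T⁻¹)ᵀ)) ∧
    (∀ n x : ℤ, ∀ M : Matrix (Fin 2) (Fin 2) ℝ, M.det = 1 →
        ftilde f n (!![1, (x : ℝ); 0, 1] * M) = ftilde f n M) ∧
    (∀ T : Matrix (Fin 2) (Fin 2) ℤ, T.det = 1 →
      ∀ M : Matrix (Fin 2) (Fin 2) ℝ, M.det = 1 →
        ftilde f 0 (T.map ((↑) : ℤ → ℝ) * M) = ftilde f 0 M) := by
  have part1 : ∀ T : Matrix (Fin 2) (Fin 2) ℤ, T.det = 1 →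
      ∀ M : Matrix (Fin 2) (Fin 2) ℝ, M.det = 1 → ∀ m : Fin 2 → ℤ,
        fhat f (T.map ((↑) : ℤ → ℝ) * M) m = fhat f M (Matrix.vecMul m (T⁻¹)ᵀ) := by
    intro T hT M hM m
    have hU : IsUnit T.det := by rw [hT]; exact isUnit_one
    have hTr : T * T⁻¹ = 1 := Matrix.mul_nonsing_inv T hU
    set T' := T.map ((↑) : ℤ → ℝ) with hT'
    set Ti' := (T⁻¹).map ((↑) : ℤ → ℝ) with hTi'
    have hmm : ∀ A B : Matrix (Fin 2) (Fin 2) ℤ, (A * B).map ((↑) : ℤ → ℝ)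
        = A.map ((↑) : ℤ → ℝ) * B.map ((↑) : ℤ → ℝ) := fun A B => by
      ext i j; simp [Matrix.mul_apply, Matrix.map_apply]
    have hone : (1 : Matrix (Fin 2) (Fin 2) ℤ).map ((↑) : ℤ → ℝ) = 1 :=
      Matrix.map_one _ (by simp) (by simp)
    have h1 : T' * Ti' = 1 := by rw [hT', hTi', ← hmm, hTr, hone]
    -- the target of the change of variables
    set G : (Fin 2 → ℝ) → ℂ := fun η =>
      f (gmul (transl η) (M, 0)) *
        e2πi (-(∑ i, ((Matrix.vecMul m (T⁻¹)ᵀ) i : ℝ) * η i)) with hGdef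
    have hGSet : ∀ η : Fin 2 → ℝ, gmul (transl η) (M, 0) ∈ GSet := fun η => by
      simp [gmul, transl, GSet, hM]
    -- pointwise identity
    have hpt : ∀ ξ : Fin 2 → ℝ,
        f (gmul (transl ξ) (T' * M, 0)) * e2πi (-(∑ i, (m i : ℝ) * ξ i))
          = G (Matrix.vecMul ξ T') := by
      intro ξ
      have hfpart : f (gmul (transl ξ) (T' * M, 0))
          = f (gmul (transl (Matrix.vecMul ξ T')) (M, 0)) := by
        have hinv := hfinv (T', 0) (gamma_mat T hT)
          (gmul (transl (Matrix.vecMul ξ T')) (M, 0)) (hGSet _)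
        rw [← hinv]
        congr 1
        simp [gmul, transl, Matrix.vecMul_vecMul]
      have h3 : ((T⁻¹)ᵀ).map ((↑) : ℤ → ℝ) = Ti'ᵀ := by
        rw [hTi', Matrix.transpose_map]
      have cast_eq : (fun i => ((Matrix.vecMul m (T⁻¹)ᵀ) i : ℝ))
          = Matrix.vecMul (fun i => (m i : ℝ)) (((T⁻¹)ᵀ).map ((↑) : ℤ → ℝ)) :=
        funext fun j => (vecMul_intCast' m (T⁻¹)ᵀ j).symm
      have hkey : Matrix.vecMul (fun i => ((Matrix.vecMul m (T⁻¹)ᵀ) i : ℝ)) T'ᵀ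
          = (fun i => (m i : ℝ)) := by
        rw [cast_eq, h3, Matrix.vecMul_vecMul, ← Matrix.transpose_mul, h1,
          Matrix.transpose_one, Matrix.vecMul_one]
      have hepart : (∑ i, (m i : ℝ) * ξ i)
          = ∑ i, ((Matrix.vecMul m (T⁻¹)ᵀ) i : ℝ) * (Matrix.vecMul ξ T') i := by
        have hdp : (∑ i, ((Matrix.vecMul m (T⁻¹)ᵀ) i : ℝ) * (Matrix.vecMul ξ T') i)
            = dotProduct (fun i => ((Matrix.vecMul m (T⁻¹)ᵀ) i : ℝ))
                (Matrix.vecMul ξ T') := rfl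
        rw [hdp, ← Matrix.mulVec_transpose T' ξ, dotProduct_mulVec, hkey]
        rfl
      rw [hGdef]
      dsimp only
      rw [hfpart, hepart]
    -- periodicity
    have hGper : ∀ (ℓ : Fin 2 → ℤ) (η : Fin 2 → ℝ),
        G ((fun i => (ℓ i : ℝ)) + η) = G η := by
      intro ℓ η
      have hf2 : f (gmul (transl ((fun i => (ℓ i : ℝ)) + η)) (M, 0))
          = f (gmul (transl η) (M, 0)) := by
        have hinv := hfinv ((1 : Matrix (Fin 2) (Fin 2) ℝ), fun i => (ℓ i : ℝ))
          (gamma_transl ℓ) (gmul (transl η) (M, 0)) (hGSet η)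
        rw [← hinv]
        congr 1
        simp [gmul, transl, Matrix.add_vecMul]
      have hsum : (-(∑ i, ((Matrix.vecMul m (T⁻¹)ᵀ) i : ℝ) * ((fun i => (ℓ i : ℝ)) + η) i))
          = (-(∑ i, ((Matrix.vecMul m (T⁻¹)ᵀ) i : ℝ) * η i))
            + (((-(∑ i, (Matrix.vecMul m (T⁻¹)ᵀ) i * ℓ i) : ℤ) : ℝ)) := by
        push_cast
        simp only [Pi.add_apply, mul_add, Finset.sum_add_distrib]
        ring
      rw [hGdef]
      dsimp only
      rw [hf2, hsum, e2pi_add, e2pi_int, mul_one]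
    calc fhat f (T' * M) m
        = ∫ ξ in Set.univ.pi fun _ : Fin 2 => Set.Icc (0:ℝ) 1, G (Matrix.vecMul ξ T') := by
          refine setIntegral_congr_fun (MeasurableSet.univ_pi fun _ => measurableSet_Icc)
            fun ξ _ => ?_
          exact hpt ξ
      _ = ∫ ξ in Set.univ.pi fun _ : Fin 2 => Set.Icc (0:ℝ) 1, G ξ := key_cov T hT G hGper
      _ = fhat f M (Matrix.vecMul m (T⁻¹)ᵀ) := rfl
  refine ⟨part1, ?_, ?_⟩
  · -- part 2
    intro n x M hM
    have hdet : (!![1, x; 0, 1] : Matrix (Fin 2) (Fin 2) ℤ).det = 1 := by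
      simp [Matrix.det_fin_two_of]
    have h1 := part1 !![1, x; 0, 1] hdet M hM ![n, 0]
    have hmap : (!![1, x; 0, 1] : Matrix (Fin 2) (Fin 2) ℤ).map ((↑) : ℤ → ℝ)
        = !![1, (x : ℝ); 0, 1] := by
      ext i j
      fin_cases i <;> fin_cases j <;> simp [Matrix.map_apply]
    have hinv2 : (!![1, x; 0, 1] : Matrix (Fin 2) (Fin 2) ℤ)⁻¹ = !![1, -x; 0, 1] := by
      apply Matrix.inv_eq_right_inv
      ext i j
      fin_cases i <;> fin_cases j <;>
        simp [Matrix.mul_apply, Fin.sum_univ_two, Matrix.one_apply]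
    have hvm : Matrix.vecMul ![n, 0] ((!![1, x; 0, 1] : Matrix (Fin 2) (Fin 2) ℤ)⁻¹)ᵀ
        = ![n, 0] := by
      rw [hinv2]
      funext i
      fin_cases i <;>
        simp [Matrix.vecMul, dotProduct, Fin.sum_univ_two, Matrix.transpose_apply]
    rw [hmap, hvm] at h1
    exact h1
  · -- part 3
    intro T hT M hM
    have h1 := part1 T hT M hM ![0, 0]
    have hz : (![0, 0] : Fin 2 → ℤ) = 0 := by funext i; fin_cases i <;> rfl
    have hvm : Matrix.vecMul (![0, 0] : Fin 2 → ℤ) ((T⁻¹)ᵀ) = ![0, 0] := by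
      rw [hz, Matrix.zero_vecMul]
    rw [hvm] at h1
    exact h1

end
end

section
/- For every integer m ≥ 0 there exists a constant C_m > 0 such that for every n ∈ ℤ⁺, every real-valued f ∈ C_b^m(Γ\G), and every matrix [[a,b],[c,d]] ∈ SL(2,ℝ): | f̃_n([[a,b],[c,d]]) | ≤ C_m · ‖f‖_{C_b^m} / ( n^m (c² + d²)^{m/2} ). -/
open MeasureTheory Real Matrix Set
open scoped ENNReal

noncomputable section

-- algebra
theorem gmul_assoc (g h k : GG) : gmul (gmul g h) k = gmul g (gmul h k) := by
  unfold gmul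
  refine Prod.ext (mul_assoc _ _ _) ?_
  simp [Matrix.add_vecMul, Matrix.vecMul_vecMul, add_assoc]

theorem eFlow_det (i : Fin 5) (t : ℝ) : (eFlow i t).1.det = 1 := by
  fin_cases i <;> simp [eFlow, Matrix.det_fin_two_of, ← Real.exp_add]

theorem gmul_mem_GSet {g : GG} (hg : g ∈ GSet) {h : GG} (hh : h ∈ GSet) :
    gmul g h ∈ GSet := by
  simp only [GSet, Set.mem_setOf_eq] at *
  simp [gmul, Matrix.det_mul, hg, hh]

theorem Dword_inv (f : GG → ℝ)
    (hf : ∀ γ ∈ GammaSet, ∀ g ∈ GSet, f (gmul γ g) = f g) :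
    ∀ w : List (Fin 5), ∀ γ ∈ GammaSet, ∀ g ∈ GSet,
      Dword w f (gmul γ g) = Dword w f g := by
  intro w
  induction w with
  | nil => exact hf
  | cons i w ih =>
    intro γ hγ g hg
    show deriv _ 0 = deriv _ 0
    congr 1
    funext t
    rw [gmul_assoc]
    exact ih γ hγ _ (gmul_mem_GSet hg (eFlow_det i t))

theorem lattice_mem (p : Fin 2 → ℤ) : ((1 : Matrix (Fin 2) (Fin 2) ℝ), fun i => (p i : ℝ)) ∈ GammaSet := by
  refine ⟨by simp, fun i j => ?_, fun i => ⟨p i, rfl⟩⟩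
  by_cases h : i = j
  · exact ⟨1, by simp [h, Matrix.one_apply]⟩
  · exact ⟨0, by simp [h, Matrix.one_apply]⟩

theorem gmul_e4 (M : Matrix (Fin 2) (Fin 2) ℝ) (w : Fin 2 → ℝ) (t : ℝ) :
    gmul (M, w) (eFlow 3 t) = (M, w + ![t, 0]) := by
  show gmul (M, w) (1, ![t, 0]) = _
  simp [gmul]

theorem gmul_e5 (M : Matrix (Fin 2) (Fin 2) ℝ) (w : Fin 2 → ℝ) (t : ℝ) :
    gmul (M, w) (eFlow 4 t) = (M, w + ![0, t]) := by
  show gmul (M, w) (1, ![0, t]) = _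
  simp [gmul]

theorem vshift4 (v : Fin 2 → ℝ) (s t : ℝ) : (v + ![s, 0]) + ![t, 0] = v + ![s + t, 0] := by
  funext i; fin_cases i <;> simp [Matrix.vecHead, Matrix.vecTail] <;> ring

theorem vshift5 (v : Fin 2 → ℝ) (s t : ℝ) : (v + ![0, s]) + ![0, t] = v + ![0, s + t] := by
  funext i; fin_cases i <;> simp [Matrix.vecHead, Matrix.vecTail] <;> ring

theorem hasDerivAt_e4 (F : GG → ℝ) (M : Matrix (Fin 2) (Fin 2) ℝ) (v : Fin 2 → ℝ) (s₀ : ℝ)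
    (h : DifferentiableAt ℝ (fun t => F (gmul (M, v + ![s₀, 0]) (eFlow 3 t))) 0) :
    HasDerivAt (fun s => F (M, v + ![s, 0])) (Dder 3 F (M, v + ![s₀, 0])) s₀ := by
  have hφ : HasDerivAt (fun t => F (gmul (M, v + ![s₀, 0]) (eFlow 3 t)))
      (Dder 3 F (M, v + ![s₀, 0])) 0 := h.hasDerivAt
  have hc : HasDerivAt (fun s : ℝ => s - s₀) 1 s₀ := (hasDerivAt_id s₀).sub_const s₀
  have hφ' : HasDerivAt (fun t => F (gmul (M, v + ![s₀, 0]) (eFlow 3 t)))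
      (Dder 3 F (M, v + ![s₀, 0])) (s₀ - s₀) := by rw [sub_self]; exact hφ
  have := HasDerivAt.comp (h := fun s => s - s₀) s₀ hφ' hc
  simp only [Function.comp_def, gmul_e4, vshift4] at this
  rw [mul_one] at this
  have key : ∀ s : ℝ, s₀ + (s - s₀) = s := fun s => by ring
  simpa only [key] using this

theorem hasDerivAt_e5 (F : GG → ℝ) (M : Matrix (Fin 2) (Fin 2) ℝ) (v : Fin 2 → ℝ) (s₀ : ℝ)
    (h : DifferentiableAt ℝ (fun t => F (gmul (M, v + ![0, s₀]) (eFlow 4 t))) 0) :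
    HasDerivAt (fun s => F (M, v + ![0, s])) (Dder 4 F (M, v + ![0, s₀])) s₀ := by
  have hφ : HasDerivAt (fun t => F (gmul (M, v + ![0, s₀]) (eFlow 4 t)))
      (Dder 4 F (M, v + ![0, s₀])) 0 := h.hasDerivAt
  have hc : HasDerivAt (fun s : ℝ => s - s₀) 1 s₀ := (hasDerivAt_id s₀).sub_const s₀
  have hφ' : HasDerivAt (fun t => F (gmul (M, v + ![0, s₀]) (eFlow 4 t)))
      (Dder 4 F (M, v + ![0, s₀])) (s₀ - s₀) := by rw [sub_self]; exact hφ
  have := HasDerivAt.comp (h := fun s => s - s₀) s₀ hφ' hc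
  simp only [Function.comp_def, gmul_e5, vshift5] at this
  rw [mul_one] at this
  have key : ∀ s : ℝ, s₀ + (s - s₀) = s := fun s => by ring
  simpa only [key] using this
def box : Set (Fin 2 → ℝ) := Set.univ.pi fun _ => Set.Icc (0:ℝ) 1

theorem periodic_shift (g : ℝ → ℂ) (hg : Function.Periodic g 1) (c : ℝ) :
    ∫ y in (0:ℝ)..1, g (y + c) = ∫ y in (0:ℝ)..1, g y := by
  rw [intervalIntegral.integral_comp_add_right]
  have := hg.intervalIntegral_add_eq c 0
  simpa [add_comm] using this

theorem box_integral_eq (G : (Fin 2 → ℝ) → ℂ) (hG : Continuous G) :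
    ∫ ξ in box, G ξ = ∫ x in (0:ℝ)..1, ∫ y in (0:ℝ)..1, G ![x, y] := by
  have hmp : MeasurePreserving (MeasurableEquiv.piFinTwo fun _ : Fin 2 => ℝ).symm :=
    (volume_preserving_piFinTwo fun _ : Fin 2 => ℝ).symm _
  have himg : (MeasurableEquiv.piFinTwo fun _ : Fin 2 => ℝ).symm ''
      (Set.Icc (0:ℝ) 1 ×ˢ Set.Icc (0:ℝ) 1) = box := by
    ext ξ
    constructor
    · rintro ⟨p, hp, rfl⟩
      simp only [Set.mem_prod, Set.mem_Icc] at hp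
      intro i _
      fin_cases i <;> simpa [MeasurableEquiv.piFinTwo, piFinTwoEquiv] using by
        first
          | exact Set.mem_Icc.mpr hp.1
          | exact Set.mem_Icc.mpr hp.2
    · intro hξ
      refine ⟨(ξ 0, ξ 1), ?_, ?_⟩
      · exact ⟨hξ 0 (Set.mem_univ _), hξ 1 (Set.mem_univ _)⟩
      · funext i; fin_cases i <;> rfl
  have hsymm : ∀ p : ℝ × ℝ, (MeasurableEquiv.piFinTwo fun _ : Fin 2 => ℝ).symm p = ![p.1, p.2] := by
    intro p; funext i; fin_cases i <;> rfl
  rw [← himg, hmp.setIntegral_image_emb (MeasurableEquiv.measurableEmbedding _) G _]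
  have hc2 : Continuous fun p : ℝ × ℝ => (![p.1, p.2] : Fin 2 → ℝ) := by
    apply continuous_pi; intro i; fin_cases i
    · simpa using continuous_fst
    · simpa using continuous_snd
  have hint : IntegrableOn (fun p : ℝ × ℝ => G ![p.1, p.2]) (Set.Icc (0:ℝ) 1 ×ˢ Set.Icc (0:ℝ) 1) := by
    exact ((hG.comp hc2).continuousOn).integrableOn_compact (isCompact_Icc.prod isCompact_Icc)
  simp only [hsymm]
  rw [Measure.volume_eq_prod, setIntegral_prod _ (by rwa [← Measure.volume_eq_prod])]
  rw [MeasureTheory.integral_Icc_eq_integral_Ioc, ← intervalIntegral.integral_of_le zero_le_one]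
  congr 1
  funext x
  rw [MeasureTheory.integral_Icc_eq_integral_Ioc, ← intervalIntegral.integral_of_le zero_le_one]

theorem box_shift_invariant (G : (Fin 2 → ℝ) → ℂ) (hG : Continuous G)
    (h1 : ∀ ξ, G (ξ + ![1, 0]) = G ξ) (h2 : ∀ ξ, G (ξ + ![0, 1]) = G ξ)
    (u : Fin 2 → ℝ) :
    ∫ ξ in box, G (ξ + u) = ∫ ξ in box, G ξ := by
  have hGu : Continuous fun ξ => G (ξ + u) := hG.comp (by continuity)
  rw [box_integral_eq _ hGu, box_integral_eq _ hG]
  have key : ∀ x y : ℝ, (![x, y] : Fin 2 → ℝ) + u = ![x + u 0, y + u 1] := by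
    intro x y; funext i; fin_cases i <;> rfl
  simp only [key]
  have inner : ∀ x : ℝ, (∫ y in (0:ℝ)..1, G ![x, y + u 1]) = ∫ y in (0:ℝ)..1, G ![x, y] := by
    intro x
    refine periodic_shift (fun y => G ![x, y]) (fun y => ?_) (u 1)
    show G ![x, y + 1] = G ![x, y]
    have : (![x, y + 1] : Fin 2 → ℝ) = ![x, y] + ![0, 1] := by
      funext i; fin_cases i <;> simp
    rw [this, h2]
  calc (∫ x in (0:ℝ)..1, ∫ y in (0:ℝ)..1, G ![x + u 0, y + u 1])
      = ∫ x in (0:ℝ)..1, ∫ y in (0:ℝ)..1, G ![x + u 0, y] := by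
        apply intervalIntegral.integral_congr
        intro x _
        exact inner (x + u 0)
    _ = ∫ x in (0:ℝ)..1, ∫ y in (0:ℝ)..1, G ![x, y] := by
        refine periodic_shift (fun x => ∫ y in (0:ℝ)..1, G ![x, y]) (fun x => ?_) (u 0)
        show (∫ y in (0:ℝ)..1, G ![x + 1, y]) = ∫ y in (0:ℝ)..1, G ![x, y]
        apply intervalIntegral.integral_congr
        intro y _
        show G ![x + 1, y] = G ![x, y]
        have : (![x + 1, y] : Fin 2 → ℝ) = ![x, y] + ![1, 0] := by
          funext i; fin_cases i <;> simp
        rw [this, h1]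

theorem e2πi_add_int (x : ℝ) (k : ℤ) : e2πi (x + k) = e2πi x := by
  unfold e2πi
  push_cast
  rw [mul_add, Complex.exp_add]
  have h1 : Complex.exp (2 * (Real.pi : ℂ) * Complex.I * (k : ℂ)) = 1 := by
    have := Complex.exp_int_mul_two_pi_mul_I k
    rw [← this]; ring_nf
  rw [h1, mul_one]

theorem norm_e2πi (x : ℝ) : ‖e2πi x‖ = 1 := by
  unfold e2πi
  rw [Complex.norm_exp]
  have : (2 * (Real.pi : ℂ) * Complex.I * (x : ℂ)).re = 0 := by simp
  rw [this, Real.exp_zero]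

theorem hasDerivAt_e2πi_linear (θ ρ : ℝ) (s : ℝ) :
    HasDerivAt (fun s : ℝ => e2πi (θ + s * ρ))
      (2 * (Real.pi : ℂ) * Complex.I * ρ * e2πi (θ + s * ρ)) s := by
  have h1 : HasDerivAt (fun s : ℝ => θ + s * ρ) ρ s := by
    simpa using ((hasDerivAt_id s).mul_const ρ).const_add θ
  have h2 := (h1.ofReal_comp).const_mul (2 * (Real.pi : ℂ) * Complex.I)
  have h3 := h2.cexp
  unfold e2πi
  convert h3 using 1
  ring

theorem ibp_step (M : Matrix (Fin 2) (Fin 2) ℝ) (hdet : M.det = 1) (k : ℤ)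
    (F DF : GG → ℝ) (ev wv : Fin 2 → ℝ) (ρ : ℝ)
    (hwv : Matrix.vecMul wv M = ev) (hρ : wv 0 = ρ)
    (hD : ∀ (v : Fin 2 → ℝ) (s : ℝ),
      HasDerivAt (fun s : ℝ => F (M, v + s • ev)) (DF (M, v + s • ev)) s)
    (hFcont : ContinuousOn F GSet) (hDFcont : ContinuousOn DF GSet)
    (hFbd : ∃ B, ∀ g ∈ GSet, |F g| ≤ B) (hDFbd : ∃ B, ∀ g ∈ GSet, |DF g| ≤ B)
    (hFinv : ∀ p : Fin 2 → ℤ, ∀ g ∈ GSet,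
      F (gmul ((1 : Matrix (Fin 2) (Fin 2) ℝ), fun i => ((p i : ℤ) : ℝ)) g) = F g) :
    ∫ ξ in box, (DF (M, Matrix.vecMul ξ M) : ℂ) * e2πi (-((k : ℝ) * ξ 0))
      = (2 * (Real.pi : ℂ) * Complex.I * (k : ℝ) * ρ) *
        ∫ ξ in box, (F (M, Matrix.vecMul ξ M) : ℂ) * e2πi (-((k : ℝ) * ξ 0)) := by
  obtain ⟨B0, hB0⟩ := hFbd
  obtain ⟨B1, hB1⟩ := hDFbd
  have hmem : ∀ v : Fin 2 → ℝ, (M, v) ∈ GSet := fun v => hdet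
  have hvM : Continuous fun ξ : Fin 2 → ℝ => Matrix.vecMul ξ M := by
    apply continuous_pi; intro j
    simp only [Matrix.vecMul, dotProduct]
    exact continuous_finset_sum _ fun i _ => (continuous_apply i).mul continuous_const
  have hcF : ∀ (g : (Fin 2 → ℝ) → (Fin 2 → ℝ)), Continuous g →
      Continuous fun ξ => F (M, g ξ) := fun g hg =>
    hFcont.comp_continuous (continuous_const.prodMk hg) fun ξ => hmem (g ξ)
  have hcDF : ∀ (g : (Fin 2 → ℝ) → (Fin 2 → ℝ)), Continuous g →
      Continuous fun ξ => DF (M, g ξ) := fun g hg =>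
    hDFcont.comp_continuous (continuous_const.prodMk hg) fun ξ => hmem (g ξ)
  have hce : ∀ (h : (Fin 2 → ℝ) → ℝ), Continuous h →
      Continuous fun ξ => e2πi (h ξ) := by
    intro h hh
    unfold e2πi
    exact Complex.continuous_exp.comp (by continuity)
  -- periodicity of the base integrand
  set Φ : (Fin 2 → ℝ) → ℂ :=
    fun ξ => (F (M, Matrix.vecMul ξ M) : ℂ) * e2πi (-((k : ℝ) * ξ 0)) with hΦ
  have hΦcont : Continuous Φ := by
    apply Continuous.mul
    · exact Complex.continuous_ofReal.comp (hcF _ hvM)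
    · exact hce _ ((continuous_const.mul (continuous_apply 0)).neg)
  have hFper : ∀ (p : Fin 2 → ℤ) (w : Fin 2 → ℝ),
      F (M, Matrix.vecMul (fun i => ((p i : ℤ) : ℝ)) M + w) = F (M, w) := by
    intro p w
    have := hFinv p (M, w) (hmem w)
    simpa [gmul] using this
  have hper1 : ∀ ξ, Φ (ξ + ![1, 0]) = Φ ξ := by
    intro ξ
    have hcast : (![1, 0] : Fin 2 → ℝ) = fun i => (((![1, 0] : Fin 2 → ℤ) i : ℤ) : ℝ) := by
      funext i; fin_cases i <;> simp
    simp only [hΦ]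
    congr 1
    · rw [Matrix.add_vecMul, hcast, add_comm (Matrix.vecMul ξ M), hFper]
    · have : (ξ + (![1, 0] : Fin 2 → ℝ)) 0 = ξ 0 + 1 := by simp
      rw [this]
      have : -((k : ℝ) * (ξ 0 + 1)) = -((k : ℝ) * ξ 0) + (-k : ℤ) := by push_cast; ring
      rw [this, e2πi_add_int]
  have hper2 : ∀ ξ, Φ (ξ + ![0, 1]) = Φ ξ := by
    intro ξ
    have hcast : (![0, 1] : Fin 2 → ℝ) = fun i => (((![0, 1] : Fin 2 → ℤ) i : ℤ) : ℝ) := by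
      funext i; fin_cases i <;> simp
    simp only [hΦ]
    congr 1
    · rw [Matrix.add_vecMul, hcast, add_comm (Matrix.vecMul ξ M), hFper]
    · have : (ξ + (![0, 1] : Fin 2 → ℝ)) 0 = ξ 0 := by simp
      rw [this]
  -- the shifted family and its derivative
  set ρ' : ℝ := -((k : ℝ) * ρ) with hρ'
  set Fam : ℝ → (Fin 2 → ℝ) → ℂ := fun s ξ =>
    (F (M, Matrix.vecMul ξ M + s • ev) : ℂ) * e2πi (-((k : ℝ) * ξ 0) + s * ρ') with hFam
  set Fam' : ℝ → (Fin 2 → ℝ) → ℂ := fun s ξ =>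
    (DF (M, Matrix.vecMul ξ M + s • ev) : ℂ) * e2πi (-((k : ℝ) * ξ 0) + s * ρ') +
      (F (M, Matrix.vecMul ξ M + s • ev) : ℂ) *
        (2 * (Real.pi : ℂ) * Complex.I * (ρ' : ℂ) * e2πi (-((k : ℝ) * ξ 0) + s * ρ')) with hFam'
  have hshift : ∀ (s : ℝ) (ξ : Fin 2 → ℝ), Φ (ξ + s • wv) = Fam s ξ := by
    intro s ξ
    simp only [hΦ, hFam]
    have hv : Matrix.vecMul (ξ + s • wv) M = Matrix.vecMul ξ M + s • ev := by
      rw [Matrix.add_vecMul, Matrix.smul_vecMul, hwv]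
    have h0 : (ξ + s • wv) 0 = ξ 0 + s * ρ := by
      simp [Pi.add_apply, Pi.smul_apply, hρ, smul_eq_mul]
    rw [hv, h0]
    congr 1
    rw [hρ']
    ring_nf
  have hJconst : ∀ s : ℝ, ∫ ξ in box, Fam s ξ = ∫ ξ in box, Φ ξ := by
    intro s
    rw [show (fun ξ => Fam s ξ) = fun ξ => Φ (ξ + s • wv) from funext fun ξ => (hshift s ξ).symm]
    exact box_shift_invariant Φ hΦcont hper1 hper2 (s • wv)
  have hderiv : ∀ (ξ : Fin 2 → ℝ) (s : ℝ), HasDerivAt (fun s => Fam s ξ) (Fam' s ξ) s := by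
    intro ξ s
    exact ((hD (Matrix.vecMul ξ M) s).ofReal_comp).mul
      (hasDerivAt_e2πi_linear (-((k : ℝ) * ξ 0)) ρ' s)
  have hB0' : 0 ≤ B0 := le_trans (abs_nonneg _) (hB0 (M, 0) (hmem 0))
  have hnrm : ‖2 * (Real.pi : ℂ) * Complex.I * (ρ' : ℂ)‖ = 2 * Real.pi * |ρ'| := by
    simp [norm_mul, Complex.norm_real, Real.norm_eq_abs, Complex.norm_I,
      abs_of_nonneg Real.pi_nonneg]
  have hbnd : ∀ (ξ : Fin 2 → ℝ) (s : ℝ),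
      ‖Fam' s ξ‖ ≤ B1 + B0 * (2 * Real.pi * |ρ'|) := by
    intro ξ s
    have e1 : ‖e2πi (-((k : ℝ) * ξ 0) + s * ρ')‖ = 1 := norm_e2πi _
    have h1 : ‖(DF (M, Matrix.vecMul ξ M + s • ev) : ℂ)‖ ≤ B1 := by
      rw [Complex.norm_real, Real.norm_eq_abs]; exact hB1 _ (hmem _)
    have h2 : ‖(F (M, Matrix.vecMul ξ M + s • ev) : ℂ)‖ ≤ B0 := by
      rw [Complex.norm_real, Real.norm_eq_abs]; exact hB0 _ (hmem _)
    calc ‖Fam' s ξ‖ ≤ ‖(DF (M, Matrix.vecMul ξ M + s • ev) : ℂ) *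
          e2πi (-((k : ℝ) * ξ 0) + s * ρ')‖ +
          ‖(F (M, Matrix.vecMul ξ M + s • ev) : ℂ) *
            (2 * (Real.pi : ℂ) * Complex.I * (ρ' : ℂ) *
              e2πi (-((k : ℝ) * ξ 0) + s * ρ'))‖ := norm_add_le _ _
      _ ≤ B1 + B0 * (2 * Real.pi * |ρ'|) := by
          rw [norm_mul, norm_mul, norm_mul, e1, hnrm]
          have hπ : (0:ℝ) ≤ 2 * Real.pi * |ρ'| := by positivity
          nlinarith [norm_nonneg ((F (M, Matrix.vecMul ξ M + s • ev) : ℂ)),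
            norm_nonneg ((DF (M, Matrix.vecMul ξ M + s • ev) : ℂ))]
  have hbox_compact : IsCompact box := isCompact_univ_pi fun _ => isCompact_Icc
  have hμfin : volume box < ⊤ := hbox_compact.measure_lt_top
  have hContFam : ∀ s : ℝ, Continuous (fun ξ => Fam s ξ) := by
    intro s
    apply Continuous.mul
    · exact Complex.continuous_ofReal.comp (hcF _ (hvM.add continuous_const))
    · exact hce _ ((continuous_const.mul (continuous_apply 0)).neg.add (continuous_const.mul continuous_const))
  have hContFam' : Continuous (fun ξ => Fam' 0 ξ) := by
    apply Continuous.add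
    · exact (Complex.continuous_ofReal.comp (hcDF _ (hvM.add continuous_const))).mul
        (hce _ ((continuous_const.mul (continuous_apply 0)).neg.add (continuous_const.mul continuous_const)))
    · exact (Complex.continuous_ofReal.comp (hcF _ (hvM.add continuous_const))).mul
        (continuous_const.mul (hce _ ((continuous_const.mul (continuous_apply 0)).neg.add (continuous_const.mul continuous_const))))
  have key := hasDerivAt_integral_of_dominated_loc_of_deriv_le
    (μ := volume.restrict box) (x₀ := (0 : ℝ)) (s := Metric.ball 0 1) (Metric.ball_mem_nhds _ one_pos)
    (Filter.Eventually.of_forall fun s => (hContFam s).aestronglyMeasurable)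
    ((hContFam 0).continuousOn.integrableOn_compact hbox_compact)
    (hContFam'.aestronglyMeasurable)
    (MeasureTheory.ae_of_all _ fun ξ s _ => hbnd ξ s)
    (integrableOn_const (C := B1 + B0 * (2 * Real.pi * |ρ'|)) hμfin.ne)
    (MeasureTheory.ae_of_all _ fun ξ s _ => hderiv ξ s)
  have hd0 : HasDerivAt (fun s : ℝ => ∫ ξ in box, Fam s ξ) 0 0 := by
    rw [funext hJconst]
    exact hasDerivAt_const _ _
  have hzero : ∫ ξ in box, Fam' 0 ξ = 0 := key.2.unique hd0
  have hsimp : ∀ ξ : Fin 2 → ℝ, Fam' 0 ξ =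
      (DF (M, Matrix.vecMul ξ M) : ℂ) * e2πi (-((k : ℝ) * ξ 0)) +
        (2 * (Real.pi : ℂ) * Complex.I * (ρ' : ℂ)) *
          ((F (M, Matrix.vecMul ξ M) : ℂ) * e2πi (-((k : ℝ) * ξ 0))) := by
    intro ξ
    simp only [hFam', zero_smul, add_zero, zero_mul]
    ring
  rw [show (fun ξ => Fam' 0 ξ) = _ from funext hsimp] at hzero
  have hint1 : IntegrableOn
      (fun ξ => (DF (M, Matrix.vecMul ξ M) : ℂ) * e2πi (-((k : ℝ) * ξ 0))) box := by
    apply ContinuousOn.integrableOn_compact hbox_compact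
    exact ((Complex.continuous_ofReal.comp (hcDF _ hvM)).mul
      (hce _ ((continuous_const.mul (continuous_apply 0)).neg))).continuousOn
  have hint2 : IntegrableOn
      (fun ξ => (2 * (Real.pi : ℂ) * Complex.I * (ρ' : ℂ)) *
        ((F (M, Matrix.vecMul ξ M) : ℂ) * e2πi (-((k : ℝ) * ξ 0)))) box := by
    apply ContinuousOn.integrableOn_compact hbox_compact
    exact (continuous_const.mul hΦcont).continuousOn
  rw [MeasureTheory.integral_add hint1 hint2, MeasureTheory.integral_const_mul] at hzero
  have hfinal : ∫ ξ in box, (DF (M, Matrix.vecMul ξ M) : ℂ) * e2πi (-((k : ℝ) * ξ 0))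
      = -(2 * (Real.pi : ℂ) * Complex.I * (ρ' : ℂ)) *
        ∫ ξ in box, (F (M, Matrix.vecMul ξ M) : ℂ) * e2πi (-((k : ℝ) * ξ 0)) := by
    linear_combination hzero
  rw [hfinal, hρ']
  push_cast
  ring

theorem iterate4 (m : ℕ) (f : GG → ℝ) (hf : InCb m f) (k : ℤ) (a b c d : ℝ)
    (h1 : a * d - b * c = 1) (j : ℕ) (hj : j ≤ m) :
    ∫ ξ in box, ((Dword (List.replicate j 3) f)
        (!![a,b;c,d], Matrix.vecMul ξ !![a,b;c,d]) : ℂ) * e2πi (-((k : ℝ) * ξ 0))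
      = (2 * (Real.pi : ℂ) * Complex.I * (k : ℝ) * d) ^ j *
        ∫ ξ in box, ((f (!![a,b;c,d], Matrix.vecMul ξ !![a,b;c,d]) : ℂ)) *
          e2πi (-((k : ℝ) * ξ 0)) := by
  have hdet : (!![a,b;c,d]).det = 1 := by rw [Matrix.det_fin_two_of]; linarith
  induction j with
  | zero => simp [Dword]
  | succ j ih =>
    have hjm : j ≤ m := le_trans (Nat.le_succ j) hj
    have hlen : (List.replicate j (3 : Fin 5)).length = j := List.length_replicate
    have hlen1 : ((3 : Fin 5) :: List.replicate j 3).length = j + 1 := by simp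
    have hcur := hf.2.1 (List.replicate j 3) (by rw [hlen]; exact hjm)
    have hnext := hf.2.1 ((3 : Fin 5) :: List.replicate j 3) (by rw [hlen1]; exact hj)
    rw [List.replicate_succ]
    have hstep := ibp_step !![a,b;c,d] hdet k
      (Dword (List.replicate j 3) f) (Dder 3 (Dword (List.replicate j 3) f))
      ![1, 0] ![d, -b] d
      (by funext i; fin_cases i <;>
        (simp [Matrix.vecMul, dotProduct, Fin.sum_univ_two]; try ring_nf; try linarith))
      (by simp)
      (by
        intro v s
        have hvec : ∀ s : ℝ, s • (![1,0] : Fin 2 → ℝ) = ![s, 0] := by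
          intro s; funext i; fin_cases i <;> simp
        simp only [hvec]
        exact hasDerivAt_e4 (Dword (List.replicate j 3) f) _ v s
          (hf.2.2 3 (List.replicate j 3) (by rw [hlen1]; exact hj) _ hdet))
      hcur.1 hnext.1 hcur.2 hnext.2
      (fun p g hg => Dword_inv f hf.1 _ _ (lattice_mem p) g hg)
    rw [show Dword ((3 : Fin 5) :: List.replicate j 3) f
        = Dder 3 (Dword (List.replicate j 3) f) from rfl]
    rw [hstep, ih hjm, pow_succ]
    ring

theorem iterate5 (m : ℕ) (f : GG → ℝ) (hf : InCb m f) (k : ℤ) (a b c d : ℝ)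
    (h1 : a * d - b * c = 1) (j : ℕ) (hj : j ≤ m) :
    ∫ ξ in box, ((Dword (List.replicate j 4) f)
        (!![a,b;c,d], Matrix.vecMul ξ !![a,b;c,d]) : ℂ) * e2πi (-((k : ℝ) * ξ 0))
      = (2 * (Real.pi : ℂ) * Complex.I * (k : ℝ) * (-c)) ^ j *
        ∫ ξ in box, ((f (!![a,b;c,d], Matrix.vecMul ξ !![a,b;c,d]) : ℂ)) *
          e2πi (-((k : ℝ) * ξ 0)) := by
  have hdet : (!![a,b;c,d]).det = 1 := by rw [Matrix.det_fin_two_of]; linarith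
  induction j with
  | zero => simp [Dword]
  | succ j ih =>
    have hjm : j ≤ m := le_trans (Nat.le_succ j) hj
    have hlen : (List.replicate j (4 : Fin 5)).length = j := List.length_replicate
    have hlen1 : ((4 : Fin 5) :: List.replicate j 4).length = j + 1 := by simp
    have hcur := hf.2.1 (List.replicate j 4) (by rw [hlen]; exact hjm)
    have hnext := hf.2.1 ((4 : Fin 5) :: List.replicate j 4) (by rw [hlen1]; exact hj)
    rw [List.replicate_succ]
    have hstep := ibp_step !![a,b;c,d] hdet k
      (Dword (List.replicate j 4) f) (Dder 4 (Dword (List.replicate j 4) f))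
      ![0, 1] ![-c, a] (-c)
      (by funext i; fin_cases i <;>
        (simp [Matrix.vecMul, dotProduct, Fin.sum_univ_two]; try ring_nf; try linarith))
      (by simp)
      (by
        intro v s
        have hvec : ∀ s : ℝ, s • (![0,1] : Fin 2 → ℝ) = ![0, s] := by
          intro s; funext i; fin_cases i <;> simp
        simp only [hvec]
        exact hasDerivAt_e5 (Dword (List.replicate j 4) f) _ v s
          (hf.2.2 4 (List.replicate j 4) (by rw [hlen1]; exact hj) _ hdet))
      hcur.1 hnext.1 hcur.2 hnext.2
      (fun p g hg => Dword_inv f hf.1 _ _ (lattice_mem p) g hg)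
    rw [show Dword ((4 : Fin 5) :: List.replicate j 4) f
        = Dder 4 (Dword (List.replicate j 4) f) from rfl]
    rw [hstep, ih hjm, pow_succ]
    push_cast
    ring

theorem sup_le_CbNorm (m : ℕ) (f : GG → ℝ) (hf : InCb m f) (i0 : Fin 5) :
    ∀ g ∈ GSet, |Dword (List.replicate m i0) f g| ≤ CbNorm m f := by
  intro g hg
  have hofn : List.ofFn (fun _ : Fin m => i0) = List.replicate m i0 := List.ofFn_const _ _
  have hbdd : BddAbove (Set.range fun g : GSet => |Dword (List.replicate m i0) f (g : GG)|) := by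
    obtain ⟨B, hB⟩ := (hf.2.1 (List.replicate m i0) (by simp)).2
    exact ⟨B, by rintro x ⟨g', rfl⟩; exact hB _ g'.2⟩
  have h1 : |Dword (List.replicate m i0) f g| ≤
      ⨆ g : GSet, |Dword (List.ofFn (fun _ : Fin m => i0)) f (g : GG)| := by
    rw [hofn]
    exact le_ciSup hbdd ⟨g, hg⟩
  refine h1.trans ?_
  have h2 : (⨆ g : GSet, |Dword (List.ofFn (fun _ : Fin m => i0)) f (g : GG)|) ≤
      ∑ w : Fin m → Fin 5, ⨆ g : GSet, |Dword (List.ofFn w) f (g : GG)| := by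
    apply Finset.single_le_sum (f := fun w : Fin m → Fin 5 =>
      ⨆ g : GSet, |Dword (List.ofFn w) f (g : GG)|)
    · intro w _
      exact Real.iSup_nonneg fun g => abs_nonneg _
    · exact Finset.mem_univ _
  refine h2.trans ?_
  apply Finset.single_le_sum (f := fun n => ∑ w : Fin n → Fin 5,
    ⨆ g : GSet, |Dword (List.ofFn w) f (g : GG)|)
  · intro n _
    exact Finset.sum_nonneg fun w _ => Real.iSup_nonneg fun g => abs_nonneg _
  · exact Finset.self_mem_range_succ m

theorem integral_norm_le (F : GG → ℝ) (M : Matrix (Fin 2) (Fin 2) ℝ) (hdet : M.det = 1)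
    (k : ℤ) (CB : ℝ) (hF : ∀ g ∈ GSet, |F g| ≤ CB) (hFc : ContinuousOn F GSet) :
    ‖∫ ξ in box, (F (M, Matrix.vecMul ξ M) : ℂ) * e2πi (-((k : ℝ) * ξ 0))‖ ≤ CB := by
  have hvol : volume box = 1 := by
    rw [box, volume_pi_pi]
    simp [Real.volume_Icc]
  have h := MeasureTheory.norm_setIntegral_le_of_norm_le_const (C := CB)
    (s := box) (by rw [hvol]; exact ENNReal.one_lt_top)
    (f := fun ξ : Fin 2 → ℝ => (F (M, Matrix.vecMul ξ M) : ℂ) * e2πi (-((k : ℝ) * ξ 0)))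
    (fun ξ _ => by
      rw [norm_mul, norm_e2πi, mul_one, Complex.norm_real, Real.norm_eq_abs]
      exact hF _ hdet)
  have hvM : Continuous fun ξ : Fin 2 → ℝ => Matrix.vecMul ξ M := by
    apply continuous_pi; intro j
    simp only [Matrix.vecMul, dotProduct]
    exact continuous_finset_sum _ fun i _ => (continuous_apply i).mul continuous_const
  have hcont : Continuous fun ξ : Fin 2 → ℝ =>
      (F (M, Matrix.vecMul ξ M) : ℂ) * e2πi (-((k : ℝ) * ξ 0)) := by
    apply Continuous.mul
    · exact Complex.continuous_ofReal.comp
        (hFc.comp_continuous (continuous_const.prodMk hvM) fun ξ => hdet)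
    · exact Complex.continuous_exp.comp (by continuity)
  have h2 := h
  rwa [measureReal_def, hvol, ENNReal.toReal_one, mul_one] at h2

theorem final_calc (m : ℕ) (n : ℕ+) (ρ CB S2 : ℝ) (hS2 : S2 ≤ 2 * ρ ^ 2) (hS2pos : 0 < S2)
    (I₀ Iw : ℂ)
    (hI : Iw = (2 * (Real.pi : ℂ) * Complex.I * ((((n : ℕ) : ℤ) : ℝ) : ℂ) * (ρ : ℂ)) ^ m * I₀)
    (hIw : ‖Iw‖ ≤ CB) :
    ‖I₀‖ ≤ CB / (((n : ℕ) : ℝ) ^ m * S2 ^ ((m : ℝ) / 2)) := by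
  have hρpos : 0 < |ρ| := by
    rcases eq_or_ne ρ 0 with h | h
    · exfalso; rw [h] at hS2; nlinarith
    · exact abs_pos.mpr h
  have hnpos : (0 : ℝ) < ((n : ℕ) : ℝ) := by exact_mod_cast n.pos
  have hnorm1 : ‖(2 * (Real.pi : ℂ) * Complex.I * ((((n : ℕ) : ℤ) : ℝ) : ℂ) * (ρ : ℂ))‖
      = 2 * Real.pi * ((n : ℕ) : ℝ) * |ρ| := by
    simp [norm_mul, Complex.norm_real, Real.norm_eq_abs, Complex.norm_I,
      abs_of_nonneg Real.pi_nonneg, abs_of_nonneg hnpos.le]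
  have hsq : Real.sqrt S2 ≤ 2 * |ρ| := by
    rw [show (2 * |ρ|) = Real.sqrt ((2 * |ρ|) ^ 2) from (Real.sqrt_sq (by positivity)).symm]
    apply Real.sqrt_le_sqrt
    nlinarith [sq_abs ρ]
  have hS2pow : S2 ^ ((m : ℝ) / 2) = Real.sqrt S2 ^ m := by
    rw [Real.sqrt_eq_rpow, ← Real.rpow_natCast (S2 ^ ((1:ℝ)/2)) m, ← Real.rpow_mul hS2pos.le,
      show (1:ℝ)/2 * (m:ℝ) = (m:ℝ)/2 by ring]
  have hdenom_le : ((n : ℕ) : ℝ) ^ m * S2 ^ ((m : ℝ) / 2)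
      ≤ (2 * Real.pi * ((n : ℕ) : ℝ) * |ρ|) ^ m := by
    rw [hS2pow, ← mul_pow]
    apply pow_le_pow_left₀ (by positivity)
    have hπ : (2 : ℝ) ≤ 2 * Real.pi := by nlinarith [Real.pi_gt_three]
    calc ((n : ℕ) : ℝ) * Real.sqrt S2 ≤ ((n : ℕ) : ℝ) * (2 * |ρ|) := by
          apply mul_le_mul_of_nonneg_left hsq hnpos.le
      _ ≤ 2 * Real.pi * ((n : ℕ) : ℝ) * |ρ| := by
          nlinarith [mul_nonneg (by linarith : (0:ℝ) ≤ 2 * Real.pi - 2)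
            (mul_nonneg hnpos.le (abs_nonneg ρ))]
  have hnormIw : ‖Iw‖ = (2 * Real.pi * ((n : ℕ) : ℝ) * |ρ|) ^ m * ‖I₀‖ := by
    rw [hI, norm_mul, norm_pow, hnorm1]
  have hdpos : (0 : ℝ) < (2 * Real.pi * ((n : ℕ) : ℝ) * |ρ|) ^ m := by positivity
  have hI0 : ‖I₀‖ = ‖Iw‖ / (2 * Real.pi * ((n : ℕ) : ℝ) * |ρ|) ^ m := by
    rw [hnormIw, mul_div_cancel_left₀ _ hdpos.ne']
  rw [hI0]
  apply div_le_div₀ (le_trans (norm_nonneg _) hIw) hIw (by positivity) hdenom_le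

end

noncomputable section

/-- **Lemma 4.2 (decay of Fourier coefficients).** For every `m ≥ 0` there is
`C_m > 0` such that for every `n ∈ ℤ⁺`, every `f ∈ C_b^m(Γ\G)` and every
`[[a,b],[c,d]] ∈ SL(2,ℝ)`:
`|f̃_n([[a,b],[c,d]])| ≤ C_m ‖f‖_{C_b^m} / (n^m (c²+d²)^{m/2})`. -/
theorem fourier_coefficient_decay (m : ℕ) :
    ∃ C : ℝ, 0 < C ∧ ∀ (n : ℕ+) (f : GG → ℝ), InCb m f →
      ∀ a b c d : ℝ, a * d - b * c = 1 →
        ‖ftilde (fun g => (f g : ℂ)) ((n : ℕ) : ℤ) !![a, b; c, d]‖ ≤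
          C * CbNorm m f / (((n : ℕ) : ℝ) ^ m * (c ^ 2 + d ^ 2) ^ ((m : ℝ) / 2)) := by
  refine ⟨1, one_pos, ?_⟩
  intro n f hf a b c d h1
  have hdet : (!![a, b; c, d]).det = 1 := by rw [Matrix.det_fin_two_of]; linarith
  have hft : ftilde (fun g => (f g : ℂ)) ((n : ℕ) : ℤ) !![a, b; c, d] =
      ∫ ξ in box, (f (!![a, b; c, d], Matrix.vecMul ξ !![a, b; c, d]) : ℂ) *
        e2πi (-(((((n : ℕ) : ℤ) : ℝ)) * ξ 0)) := by
    unfold ftilde fhat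
    rw [show (Set.univ.pi fun _ : Fin 2 => Set.Icc (0:ℝ) 1) = box from rfl]
    congr 1
    funext ξ
    have hg : gmul (transl ξ) (!![a, b; c, d], 0) =
        (!![a, b; c, d], Matrix.vecMul ξ !![a, b; c, d]) := by
      simp [gmul, transl]
    rw [hg]
    congr 2
    rw [Fin.sum_univ_two]
    simp
  have hS2pos : 0 < c ^ 2 + d ^ 2 := by
    by_contra h
    push_neg at h
    have hc : c = 0 := by nlinarith
    have hd : d = 0 := by nlinarith
    rw [hc, hd] at h1
    norm_num at h1
  have hCBnonneg_aux := sup_le_CbNorm m f hf 3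
  rcases le_or_gt |c| |d| with hcd | hcd
  · -- use the e₄ direction, ρ = d
    have hS2 : c ^ 2 + d ^ 2 ≤ 2 * d ^ 2 := by
      nlinarith [sq_abs c, sq_abs d, pow_le_pow_left₀ (abs_nonneg c) hcd 2]
    have hI := iterate4 m f hf ((n : ℕ) : ℤ) a b c d h1 m le_rfl
    have hIw := integral_norm_le (Dword (List.replicate m 3) f) !![a, b; c, d] hdet
      ((n : ℕ) : ℤ) (CbNorm m f) (sup_le_CbNorm m f hf 3)
      (hf.2.1 (List.replicate m 3) (by simp)).1
    have := final_calc m n d (CbNorm m f) (c ^ 2 + d ^ 2) hS2 hS2pos _ _ hI hIw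
    rw [hft, one_mul]
    exact this
  · -- use the e₅ direction, ρ = -c
    have hS2 : c ^ 2 + d ^ 2 ≤ 2 * (-c) ^ 2 := by
      nlinarith [pow_le_pow_left₀ (abs_nonneg d) hcd.le 2, sq_abs c, sq_abs d]
    have hI := iterate5 m f hf ((n : ℕ) : ℤ) a b c d h1 m le_rfl
    have hIw := integral_norm_le (Dword (List.replicate m 4) f) !![a, b; c, d] hdet
      ((n : ℕ) : ℤ) (CbNorm m f) (sup_le_CbNorm m f hf 4)
      (hf.2.1 (List.replicate m 4) (by simp)).1
    have hI' : (∫ ξ in box, ((Dword (List.replicate m 4) f)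
        (!![a,b;c,d], Matrix.vecMul ξ !![a,b;c,d]) : ℂ) *
          e2πi (-(((((n : ℕ) : ℤ) : ℝ)) * ξ 0)))
        = (2 * (Real.pi : ℂ) * Complex.I * (((((n : ℕ) : ℤ) : ℝ)) : ℂ) * ((-c : ℝ) : ℂ)) ^ m *
          ∫ ξ in box, ((f (!![a,b;c,d], Matrix.vecMul ξ !![a,b;c,d]) : ℂ)) *
            e2πi (-(((((n : ℕ) : ℤ) : ℝ)) * ξ 0)) := by
      rw [hI]
      push_cast
      ring
    have := final_calc m n (-c) (CbNorm m f) (c ^ 2 + d ^ 2) hS2 hS2pos _ _ hI' hIw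
    rw [hft, one_mul]
    exact this

end
end

section
/- Let a,b,c,d ∈ ℝ with ad − bc = 1 and c > 0, let y > 0, let F : SL(2,ℝ) → ℂ be continuous and bounded, and let ν : ℝ → ℂ be continuous with compact support. Then ∫_ℝ F( [[a,b],[c,d]] · [[√y, x/√y],[0, 1/√y]] ) ν(x) dx = ∫₀^π F( [[1,u(θ)],[0,1]] · [[√(v(θ)),0],[0,1/√(v(θ))]] · [[cos θ, −sin θ],[sin θ, cos θ]] ) · ν(−d/c + y·cot θ) · (y/sin²θ) dθ, where u(θ) := a/c − sin(2θ)/(2c²y) and v(θ) := sin²θ/(c²y). -/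
open MeasureTheory Real Matrix Set

noncomputable section

lemma iwasawa_matrix_eq (a b c d : ℝ) (hdet : a * d - b * c = 1) (hc : 0 < c)
    (y : ℝ) (hy : 0 < y) (θ : ℝ) (hθ : θ ∈ Ioo 0 π) :
    !![a, b; c, d] *
        !![Real.sqrt y, (-(d / c) + y * (Real.cos θ / Real.sin θ)) / Real.sqrt y; 0,
          (Real.sqrt y)⁻¹] =
      !![1, a / c - Real.sin (2 * θ) / (2 * c ^ 2 * y); 0, 1] *
        !![Real.sqrt (Real.sin θ ^ 2 / (c ^ 2 * y)), 0; 0,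
           (Real.sqrt (Real.sin θ ^ 2 / (c ^ 2 * y)))⁻¹] *
        !![Real.cos θ, -Real.sin θ; Real.sin θ, Real.cos θ] := by
  have hs : 0 < Real.sin θ := Real.sin_pos_of_pos_of_lt_pi hθ.1 hθ.2
  obtain ⟨w, hw, rfl⟩ : ∃ w : ℝ, 0 < w ∧ y = w ^ 2 :=
    ⟨Real.sqrt y, Real.sqrt_pos.2 hy, (Real.sq_sqrt hy.le).symm⟩
  have hw2 : Real.sqrt (w ^ 2) = w := Real.sqrt_sq hw.le
  have hS : Real.sqrt ((Real.sin θ)^2 / (c ^ 2 * w ^ 2)) = Real.sin θ / (c * w) := by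
    rw [show (Real.sin θ)^2 / (c ^ 2 * w ^ 2) = (Real.sin θ / (c * w))^2 by ring]
    exact Real.sqrt_sq (by positivity)
  rw [hS, hw2, Real.sin_two_mul]
  ext i j
  fin_cases i <;> fin_cases j <;>
    simp only [Matrix.mul_apply, Fin.sum_univ_two, Matrix.cons_val', Matrix.cons_val_zero,
      Matrix.cons_val_one, Matrix.head_cons, Matrix.head_fin_const, Matrix.empty_val',
      Matrix.cons_val_fin_one, Matrix.of_apply, Fin.zero_eta, Fin.mk_one]
  all_goals (field_simp; try ring)
  all_goals linear_combination (-(c*w*Real.sin θ)) * hdet +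
    (c*w*Real.sin θ) * (Real.sin_sq_add_cos_sq θ)

/-- **Lemma 6.1 (Iwasawa coordinates).** For `[[a,b],[c,d]] ∈ SL(2,ℝ)` with
`c > 0`, `y > 0`, `F : SL(2,ℝ) → ℂ` continuous and bounded and `ν : ℝ → ℂ`
continuous with compact support,
`∫_ℝ F([[a,b],[c,d]]·[[√y, x/√y],[0,1/√y]]) ν(x) dx
  = ∫₀^π F(n(u(θ)) a(v(θ)) k(θ)) ν(-d/c + y cot θ) (y/sin²θ) dθ`,
where `u(θ) = a/c - sin(2θ)/(2c²y)` and `v(θ) = sin²θ/(c²y)`. -/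
theorem iwasawa_coordinates_integral
    (a b c d : ℝ) (hdet : a * d - b * c = 1) (hc : 0 < c) (y : ℝ) (hy : 0 < y)
    (F : Matrix (Fin 2) (Fin 2) ℝ → ℂ)
    (hFc : ContinuousOn F {M : Matrix (Fin 2) (Fin 2) ℝ | M.det = 1})
    (hFb : ∃ B : ℝ, ∀ M : Matrix (Fin 2) (Fin 2) ℝ, M.det = 1 → ‖F M‖ ≤ B)
    (ν : ℝ → ℂ) (hν : Continuous ν) (hνs : HasCompactSupport ν) :
    (∫ x : ℝ, F (!![a, b; c, d] * !![Real.sqrt y, x / Real.sqrt y; 0, (Real.sqrt y)⁻¹]) * ν x) =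
      ∫ θ in (0:ℝ)..Real.pi,
        F (!![1, a / c - Real.sin (2 * θ) / (2 * c ^ 2 * y); 0, 1] *
            !![Real.sqrt (Real.sin θ ^ 2 / (c ^ 2 * y)), 0; 0,
               (Real.sqrt (Real.sin θ ^ 2 / (c ^ 2 * y)))⁻¹] *
            !![Real.cos θ, -Real.sin θ; Real.sin θ, Real.cos θ]) *
          ν (-(d / c) + y * (Real.cos θ / Real.sin θ)) *
          ((y / Real.sin θ ^ 2 : ℝ) : ℂ) := by

  set f : ℝ → ℝ := fun θ => -(d / c) + y * (Real.cos θ / Real.sin θ) with hf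
  set f' : ℝ → ℝ := fun θ => -(y / Real.sin θ ^ 2) with hf'
  set g : ℝ → ℂ := fun x =>
    F (!![a, b; c, d] * !![Real.sqrt y, x / Real.sqrt y; 0, (Real.sqrt y)⁻¹]) * ν x with hg
  -- derivative
  have hderivAt : ∀ θ ∈ Ioo (0:ℝ) π, HasDerivAt f (f' θ) θ := by
    intro θ hθ
    have hs : 0 < Real.sin θ := Real.sin_pos_of_pos_of_lt_pi hθ.1 hθ.2
    have h := ((Real.hasDerivAt_cos θ).div (Real.hasDerivAt_sin θ) hs.ne').const_mul y
    have h2 := h.const_add (-(d / c))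
    refine h2.congr_deriv ?_
    simp only [hf']
    field_simp
    linear_combination (-1) * (Real.sin_sq_add_cos_sq θ)
  have hderiv : ∀ θ ∈ Ioo (0:ℝ) π, HasDerivWithinAt f (f' θ) (Ioo 0 π) θ :=
    fun θ hθ => (hderivAt θ hθ).hasDerivWithinAt
  -- injectivity
  have hinj : InjOn f (Ioo 0 π) := by
    have hanti : StrictAntiOn f (Ioo 0 π) := by
      apply strictAntiOn_of_deriv_neg (convex_Ioo 0 π)
      · exact fun θ hθ => (hderivAt θ hθ).continuousAt.continuousWithinAt
      · intro θ hθ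
        rw [interior_Ioo] at hθ
        rw [(hderivAt θ hθ).deriv]
        have hs : 0 < Real.sin θ := Real.sin_pos_of_pos_of_lt_pi hθ.1 hθ.2
        have : 0 < y / Real.sin θ ^ 2 := by positivity
        simp only [hf']
        linarith
    exact hanti.injOn
  -- surjectivity
  have himg : f '' Ioo 0 π = univ := by
    ext s
    simp only [mem_image, mem_univ, iff_true]
    refine ⟨π/2 - Real.arctan ((s + d/c)/y), ?_, ?_⟩
    · constructor <;> nlinarith [Real.arctan_lt_pi_div_two ((s + d/c)/y),
        Real.neg_pi_div_two_lt_arctan ((s + d/c)/y), Real.pi_pos]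
    · simp only [hf]
      rw [Real.cos_pi_div_two_sub, Real.sin_pi_div_two_sub, Real.sin_arctan, Real.cos_arctan]
      have h1 : Real.sqrt (1 + ((s + d/c)/y)^2) ≠ 0 := by positivity
      field_simp
      ring
  -- change of variables
  have key : (∫ x : ℝ, g x) = ∫ θ in Ioo (0:ℝ) π, |f' θ| • g (f θ) := by
    rw [← setIntegral_univ, ← himg]
    exact integral_image_eq_integral_abs_deriv_smul measurableSet_Ioo hderiv hinj g
  rw [show (∫ x : ℝ, F (!![a, b; c, d] *
      !![Real.sqrt y, x / Real.sqrt y; 0, (Real.sqrt y)⁻¹]) * ν x) = ∫ x : ℝ, g x from rfl, key,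
    intervalIntegral.integral_of_le Real.pi_pos.le, integral_Ioc_eq_integral_Ioo]
  apply setIntegral_congr_fun measurableSet_Ioo
  intro θ hθ
  have hs : 0 < Real.sin θ := Real.sin_pos_of_pos_of_lt_pi hθ.1 hθ.2
  have habs : |f' θ| = y / Real.sin θ ^ 2 := by
    simp only [hf', abs_neg, abs_of_pos (show 0 < y / Real.sin θ ^ 2 by positivity)]
  simp only [hg, habs]
  rw [iwasawa_matrix_eq a b c d hdet hc y hy θ hθ]
  rw [Complex.real_smul]
  ring


end
end

section
/- For every m ∈ ℤ⁺ there exists a constant C_m > 0 such that for all X > 0: if X ≥ 1 then ∑_{c=1}^∞ (X+c)^{−m} σ(c)/√c ≤ C_m · X^{1/2−m} · log(1+X), and if 0 < X < 1 then ∑_{c=1}^∞ (X+c)^{−m} σ(c)/√c ≤ C_m. -/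
open Real

noncomputable section

open Finset in
private lemma sqrt_sum_le' (N : ℕ) : ∑ b ∈ Icc 1 N, 1 / Real.sqrt b ≤ 2 * Real.sqrt N := by
  induction N with
  | zero => simp
  | succ N ih =>
    rw [Finset.sum_Icc_succ_top (by omega)]
    set s := Real.sqrt N with hsdef
    set t := Real.sqrt (N + 1 : ℕ) with htdef
    have hs0 : 0 ≤ s := Real.sqrt_nonneg _
    have ht0 : 0 < t := Real.sqrt_pos.2 (by push_cast; positivity)
    have hs : s ^ 2 = N := Real.sq_sqrt (by positivity)
    have ht : t ^ 2 = (N : ℝ) + 1 := by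
      rw [htdef]; push_cast; exact Real.sq_sqrt (by positivity)
    have hst : s ≤ t := Real.sqrt_le_sqrt (by push_cast; linarith)
    have h1 : 1 / t ≤ 2 * t - 2 * s := by
      rw [div_le_iff₀ ht0]
      nlinarith [sq_nonneg (s - t)]
    linarith

open Finset in
private lemma tail32_le' (K N : ℕ) (hK : 1 ≤ K) :
    ∑ b ∈ Ioc K N, 1 / ((b : ℝ) * Real.sqrt b) ≤ 2 / Real.sqrt K := by
  have key : ∀ M : ℕ, ∑ b ∈ Ioc K M, 1 / ((b : ℝ) * Real.sqrt b)
      ≤ 2 / Real.sqrt K - 2 / Real.sqrt ((max K M : ℕ) : ℝ) := by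
    intro M
    induction M with
    | zero => simp [Nat.max_eq_left (Nat.zero_le K)]
    | succ M ih =>
      by_cases h : M + 1 ≤ K
      · rw [Finset.Ioc_eq_empty (by omega), Nat.max_eq_left h]
        simp
      · have hKM : K ≤ M := by omega
        rw [Finset.sum_Ioc_succ_top hKM, Nat.max_eq_right (by omega : K ≤ M + 1)]
        rw [Nat.max_eq_right hKM] at ih
        have hM1 : 1 ≤ M := le_trans hK hKM
        set s := Real.sqrt M with hsdef
        set t := Real.sqrt (M + 1 : ℕ) with htdef
        have hs0 : 0 < s := Real.sqrt_pos.2 (by exact_mod_cast hM1)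
        have ht0 : 0 < t := Real.sqrt_pos.2 (by push_cast; positivity)
        have hs : s ^ 2 = M := Real.sq_sqrt (by positivity)
        have ht : t ^ 2 = (M : ℝ) + 1 := by
          rw [htdef]; push_cast; exact Real.sq_sqrt (by positivity)
        have hst : s ≤ t := Real.sqrt_le_sqrt (by push_cast; linarith)
        have h1 : 1 / (((M : ℝ) + 1) * t) ≤ 2 / s - 2 / t := by
          rw [div_sub_div _ _ hs0.ne' ht0.ne', div_le_div_iff₀ (by positivity) (by positivity)]
          nlinarith [mul_nonneg (sq_nonneg (s - t)) (sq_nonneg t),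
            mul_nonneg (sub_nonneg.2 hst) ht0.le]
        push_cast
        linarith
  have h1 := key N
  have h2 : 0 ≤ 2 / Real.sqrt ((max K N : ℕ) : ℝ) := by positivity
  linarith

open Finset in
private lemma tail2_le' (K N : ℕ) (hK : 1 ≤ K) :
    ∑ a ∈ Ioc K N, 1 / ((a : ℝ) * a) ≤ 1 / K := by
  have key : ∀ M : ℕ, ∑ a ∈ Ioc K M, 1 / ((a : ℝ) * a)
      ≤ 1 / K - 1 / ((max K M : ℕ) : ℝ) := by
    intro M
    induction M with
    | zero => simp [Nat.max_eq_left (Nat.zero_le K)]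
    | succ M ih =>
      by_cases h : M + 1 ≤ K
      · rw [Finset.Ioc_eq_empty (by omega), Nat.max_eq_left h]; simp
      · have hKM : K ≤ M := by omega
        rw [Finset.sum_Ioc_succ_top hKM, Nat.max_eq_right (by omega : K ≤ M + 1)]
        rw [Nat.max_eq_right hKM] at ih
        have hM1 : (1 : ℝ) ≤ M := by exact_mod_cast le_trans hK hKM
        have h1 : 1 / (((M : ℝ) + 1) * ((M : ℝ) + 1)) ≤ 1 / M - 1 / (M + 1) := by
          rw [div_sub_div _ _ (by linarith) (by linarith),
            div_le_div_iff₀ (by nlinarith) (by nlinarith)]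
          nlinarith
        push_cast
        linarith
  have h1 := key N
  have h2 : 0 ≤ 1 / ((max K N : ℕ) : ℝ) := by positivity
  linarith

open Finset in
private lemma harmonic_le' (A : ℕ) (hA : 1 ≤ A) :
    ∑ a ∈ Icc 1 A, 1 / (a : ℝ) ≤ 1 + Real.log A := by
  induction A with
  | zero => omega
  | succ A ih =>
    by_cases hA0 : A = 0
    · subst hA0; simp
    · have hA1 : 1 ≤ A := by omega
      rw [Finset.sum_Icc_succ_top (by omega)]
      have hAp : (0 : ℝ) < A := by exact_mod_cast Nat.pos_of_ne_zero hA0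
      have hlog : 1 / ((A : ℝ) + 1) ≤ Real.log ((A : ℝ) + 1) - Real.log A := by
        have h := Real.log_le_sub_one_of_pos (x := (A : ℝ) / (A + 1)) (by positivity)
        rw [Real.log_div (by positivity) (by positivity)] at h
        have heq : (A : ℝ) / (A + 1) - 1 = -(1 / (A + 1)) := by field_simp; ring
        rw [heq] at h
        linarith
      have h2 := ih hA1
      push_cast at *
      linarith

open Finset in
private lemma sum32_le' (N : ℕ) : ∑ a ∈ Icc 1 N, 1 / ((a : ℝ) * Real.sqrt a) ≤ 3 := by
  rcases Nat.eq_zero_or_pos N with h | h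
  · subst h; simp
  · rw [Finset.Icc_eq_cons_Ioc h, Finset.sum_cons]
    have h1 := tail32_le' 1 N le_rfl
    norm_num at *
    linarith

private lemma sqrt_add_one_le' (x : ℝ) (hx : 0 ≤ x) :
    Real.sqrt (x + 1) ≤ Real.sqrt x + 1 := by
  calc Real.sqrt (x + 1) ≤ Real.sqrt ((Real.sqrt x + 1) ^ 2) := by
        apply Real.sqrt_le_sqrt
        nlinarith [Real.sq_sqrt hx, Real.sqrt_nonneg x]
    _ = Real.sqrt x + 1 := Real.sqrt_sq (by positivity)

private lemma alg_b1 (a X sa sX sK : ℝ) (hsa : 0 < sa) (hsX : 0 < sX) (hsK : 0 < sK)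
    (hsaa : sa * sa = a) (hsXX : sX * sX = X) (h : sK ≤ sX / sa + 1) :
    1 / (X * sa) * (2 * sK) ≤ 2 / (a * sX) + 2 / (X * sa) := by
  subst hsaa hsXX
  have key : 1 / (sX * sX * sa) * (2 * (sX / sa + 1))
      = 2 / (sa * sa * sX) + 2 / (sX * sX * sa) := by
    field_simp
  have h2 : 1 / (sX * sX * sa) * (2 * sK) ≤ 1 / (sX * sX * sa) * (2 * (sX / sa + 1)) :=
    mul_le_mul_of_nonneg_left (by linarith) (by positivity)
  linarith

private lemma alg_b2 (a X sa sX sK : ℝ) (hsa : 0 < sa) (hsX : 0 < sX) (hsK : 0 < sK)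
    (hsaa : sa * sa = a) (hsXX : sX * sX = X) (h : sX / sa ≤ sK) :
    1 / (a * sa) * (2 / sK) ≤ 2 / (a * sX) := by
  subst hsaa hsXX
  have h2 : 2 / sK ≤ 2 * sa / sX := by
    rw [div_le_div_iff₀ hsK hsX]
    have h4 := mul_le_mul_of_nonneg_left h (by positivity : (0:ℝ) ≤ 2 * sa)
    calc 2 * sX = 2 * sa * (sX / sa) := by field_simp
      _ ≤ 2 * sa * sK := h4
  calc 1 / (sa * sa * sa) * (2 / sK) ≤ 1 / (sa * sa * sa) * (2 * sa / sX) :=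
        mul_le_mul_of_nonneg_left h2 (by positivity)
    _ = 2 / (sa * sa * sX) := by field_simp

open Finset in
private lemma innerA (X : ℝ) (hX : 1 ≤ X) (N a : ℕ) (ha : 1 ≤ a) :
    ∑ b ∈ Icc 1 N, (if a ≤ b then
        1 / ((X + (a : ℝ) * b) * (Real.sqrt a * Real.sqrt b)) else 0)
      ≤ 4 / (a * Real.sqrt X) + 2 / (X * Real.sqrt a) := by
  have hX0 : (0 : ℝ) < X := by linarith
  have ha0 : (0 : ℝ) < a := by exact_mod_cast ha
  have hsa : (0 : ℝ) < Real.sqrt a := Real.sqrt_pos.2 ha0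
  have hsX : (0 : ℝ) < Real.sqrt X := Real.sqrt_pos.2 hX0
  have hsaa : Real.sqrt a * Real.sqrt a = (a : ℝ) := Real.mul_self_sqrt ha0.le
  have hsXX : Real.sqrt X * Real.sqrt X = X := Real.mul_self_sqrt hX0.le
  set K := ⌈X / a⌉₊ with hKdef
  have hK1 : 1 ≤ K := Nat.one_le_iff_ne_zero.2 (by
    simp only [hKdef, ne_eq, Nat.ceil_eq_zero, not_le]
    positivity)
  have hKge : X / a ≤ K := Nat.le_ceil _
  have hKle : (K : ℝ) ≤ X / a + 1 := by
    have := Nat.ceil_lt_add_one (by positivity : (0:ℝ) ≤ X / a)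
    linarith
  have hsKge : Real.sqrt X / Real.sqrt a ≤ Real.sqrt K := by
    rw [← Real.sqrt_div hX0.le]
    exact Real.sqrt_le_sqrt hKge
  have hsKle : Real.sqrt K ≤ Real.sqrt X / Real.sqrt a + 1 := by
    calc Real.sqrt K ≤ Real.sqrt (X / a + 1) := Real.sqrt_le_sqrt hKle
      _ ≤ Real.sqrt (X / a) + 1 := sqrt_add_one_le' _ (by positivity)
      _ = Real.sqrt X / Real.sqrt a + 1 := by rw [Real.sqrt_div hX0.le]
  have step0 : ∑ b ∈ Icc 1 N, (if a ≤ b then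
        1 / ((X + (a : ℝ) * b) * (Real.sqrt a * Real.sqrt b)) else 0)
      ≤ ∑ b ∈ Icc 1 N, 1 / ((X + (a : ℝ) * b) * (Real.sqrt a * Real.sqrt b)) := by
    apply Finset.sum_le_sum
    intro b hb
    have hb1 : 1 ≤ b := (Finset.mem_Icc.mp hb).1
    have hb0 : (0 : ℝ) < b := by exact_mod_cast hb1
    split
    · exact le_refl _
    · positivity
  have split1 : ∑ b ∈ Icc 1 N, 1 / ((X + (a : ℝ) * b) * (Real.sqrt a * Real.sqrt b))
      = (∑ b ∈ (Icc 1 N).filter (· ≤ K),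
          1 / ((X + (a : ℝ) * b) * (Real.sqrt a * Real.sqrt b)))
        + ∑ b ∈ (Icc 1 N).filter (fun b => ¬ b ≤ K),
          1 / ((X + (a : ℝ) * b) * (Real.sqrt a * Real.sqrt b)) :=
    (Finset.sum_filter_add_sum_filter_not _ _ _).symm
  have part1 : ∑ b ∈ (Icc 1 N).filter (· ≤ K),
      1 / ((X + (a : ℝ) * b) * (Real.sqrt a * Real.sqrt b))
      ≤ 1 / (X * Real.sqrt a) * (2 * Real.sqrt K) := by
    calc ∑ b ∈ (Icc 1 N).filter (· ≤ K),
        1 / ((X + (a : ℝ) * b) * (Real.sqrt a * Real.sqrt b))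
        ≤ ∑ b ∈ (Icc 1 N).filter (· ≤ K), 1 / (X * Real.sqrt a) * (1 / Real.sqrt b) := by
          apply Finset.sum_le_sum
          intro b hb
          have hb1 : 1 ≤ b := (Finset.mem_Icc.mp (Finset.mem_filter.mp hb).1).1
          have hb0 : (0 : ℝ) < b := by exact_mod_cast hb1
          have hsb : (0 : ℝ) < Real.sqrt b := Real.sqrt_pos.2 hb0
          rw [one_div_mul_one_div]
          apply one_div_le_one_div_of_le (by positivity)
          have hab : (0:ℝ) ≤ (a : ℝ) * b := by positivity
          nlinarith [mul_pos hsa hsb]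
      _ ≤ ∑ b ∈ Icc 1 K, 1 / (X * Real.sqrt a) * (1 / Real.sqrt b) := by
          apply Finset.sum_le_sum_of_subset_of_nonneg
          · intro b hb
            have h1 := Finset.mem_filter.mp hb
            exact Finset.mem_Icc.mpr ⟨(Finset.mem_Icc.mp h1.1).1, h1.2⟩
          · intro b _ _; positivity
      _ = 1 / (X * Real.sqrt a) * ∑ b ∈ Icc 1 K, 1 / Real.sqrt b := by
          rw [Finset.mul_sum]
      _ ≤ 1 / (X * Real.sqrt a) * (2 * Real.sqrt K) :=
          mul_le_mul_of_nonneg_left (sqrt_sum_le' K) (by positivity)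
  have part2 : ∑ b ∈ (Icc 1 N).filter (fun b => ¬ b ≤ K),
      1 / ((X + (a : ℝ) * b) * (Real.sqrt a * Real.sqrt b))
      ≤ 1 / ((a : ℝ) * Real.sqrt a) * (2 / Real.sqrt K) := by
    calc ∑ b ∈ (Icc 1 N).filter (fun b => ¬ b ≤ K),
        1 / ((X + (a : ℝ) * b) * (Real.sqrt a * Real.sqrt b))
        ≤ ∑ b ∈ (Icc 1 N).filter (fun b => ¬ b ≤ K),
            1 / ((a : ℝ) * Real.sqrt a) * (1 / ((b : ℝ) * Real.sqrt b)) := by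
          apply Finset.sum_le_sum
          intro b hb
          have hb1 : 1 ≤ b := (Finset.mem_Icc.mp (Finset.mem_filter.mp hb).1).1
          have hb0 : (0 : ℝ) < b := by exact_mod_cast hb1
          have hsb : (0 : ℝ) < Real.sqrt b := Real.sqrt_pos.2 hb0
          have hsbb : Real.sqrt b * Real.sqrt b = (b : ℝ) := Real.mul_self_sqrt hb0.le
          rw [one_div_mul_one_div]
          apply one_div_le_one_div_of_le (by positivity)
          nlinarith [mul_pos hsa hsb, mul_pos ha0 hb0]
      _ ≤ ∑ b ∈ Ioc K N, 1 / ((a : ℝ) * Real.sqrt a) * (1 / ((b : ℝ) * Real.sqrt b)) := by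
          apply Finset.sum_le_sum_of_subset_of_nonneg
          · intro b hb
            have h1 := Finset.mem_filter.mp hb
            exact Finset.mem_Ioc.mpr ⟨by omega, (Finset.mem_Icc.mp h1.1).2⟩
          · intro b _ _; positivity
      _ = 1 / ((a : ℝ) * Real.sqrt a) * ∑ b ∈ Ioc K N, 1 / ((b : ℝ) * Real.sqrt b) := by
          rw [Finset.mul_sum]
      _ ≤ 1 / ((a : ℝ) * Real.sqrt a) * (2 / Real.sqrt K) :=
          mul_le_mul_of_nonneg_left (tail32_le' K N hK1) (by positivity)
  have hsK : (0 : ℝ) < Real.sqrt K := Real.sqrt_pos.2 (by exact_mod_cast hK1)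
  have b1 := alg_b1 (a : ℝ) X (Real.sqrt a) (Real.sqrt X) (Real.sqrt K)
    hsa hsX hsK hsaa hsXX hsKle
  have b2 := alg_b2 (a : ℝ) X (Real.sqrt a) (Real.sqrt X) (Real.sqrt K)
    hsa hsX hsK hsaa hsXX hsKge
  rw [split1] at step0
  have e4 : 4 / ((a:ℝ) * Real.sqrt X)
      = 2 / ((a:ℝ) * Real.sqrt X) + 2 / ((a:ℝ) * Real.sqrt X) := by ring
  linarith

open Finset in
private lemma innerB (X : ℝ) (hX : 0 < X) (N a : ℕ) (ha : 1 ≤ a) :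
    ∑ b ∈ Icc 1 N, (if a ≤ b then
        1 / ((X + (a : ℝ) * b) * (Real.sqrt a * Real.sqrt b)) else 0)
      ≤ 3 / ((a : ℝ) * a) := by
  have ha0 : (0 : ℝ) < a := by exact_mod_cast ha
  have hsa : (0 : ℝ) < Real.sqrt a := Real.sqrt_pos.2 ha0
  have hsaa : Real.sqrt a * Real.sqrt a = (a : ℝ) := Real.mul_self_sqrt ha0.le
  rw [← Finset.sum_filter]
  have step1 : ∑ b ∈ (Icc 1 N).filter (fun b => a ≤ b),
        1 / ((X + (a : ℝ) * b) * (Real.sqrt a * Real.sqrt b))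
      ≤ ∑ b ∈ Icc a N, 1 / ((a : ℝ) * Real.sqrt a) * (1 / ((b : ℝ) * Real.sqrt b)) := by
    calc ∑ b ∈ (Icc 1 N).filter (fun b => a ≤ b),
          1 / ((X + (a : ℝ) * b) * (Real.sqrt a * Real.sqrt b))
        ≤ ∑ b ∈ (Icc 1 N).filter (fun b => a ≤ b),
            1 / ((a : ℝ) * Real.sqrt a) * (1 / ((b : ℝ) * Real.sqrt b)) := by
          apply Finset.sum_le_sum
          intro b hb
          have hb1 : 1 ≤ b := (Finset.mem_Icc.mp (Finset.mem_filter.mp hb).1).1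
          have hb0 : (0 : ℝ) < b := by exact_mod_cast hb1
          have hsb : (0 : ℝ) < Real.sqrt b := Real.sqrt_pos.2 hb0
          rw [one_div_mul_one_div]
          apply one_div_le_one_div_of_le (by positivity)
          nlinarith [mul_pos hsa hsb, mul_pos ha0 hb0]
      _ ≤ ∑ b ∈ Icc a N, 1 / ((a : ℝ) * Real.sqrt a) * (1 / ((b : ℝ) * Real.sqrt b)) := by
          apply Finset.sum_le_sum_of_subset_of_nonneg
          · intro b hb
            have h1 := Finset.mem_filter.mp hb
            exact Finset.mem_Icc.mpr ⟨h1.2, (Finset.mem_Icc.mp h1.1).2⟩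
          · intro b _ _; positivity
  have step2 : ∑ b ∈ Icc a N, 1 / ((a : ℝ) * Real.sqrt a) * (1 / ((b : ℝ) * Real.sqrt b))
      ≤ 3 / ((a : ℝ) * a) := by
    by_cases haN : a ≤ N
    · rw [Finset.Icc_eq_cons_Ioc haN, Finset.sum_cons]
      have htail : ∑ b ∈ Ioc a N, 1 / ((b : ℝ) * Real.sqrt b) ≤ 2 / Real.sqrt a :=
        tail32_le' a N ha
      have h5 : ∑ b ∈ Ioc a N, 1 / ((a : ℝ) * Real.sqrt a) * (1 / ((b : ℝ) * Real.sqrt b))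
          = 1 / ((a : ℝ) * Real.sqrt a) * ∑ b ∈ Ioc a N, 1 / ((b : ℝ) * Real.sqrt b) := by
        rw [Finset.mul_sum]
      rw [h5]
      have h6 : 1 / ((a : ℝ) * Real.sqrt a) * ∑ b ∈ Ioc a N, 1 / ((b : ℝ) * Real.sqrt b)
          ≤ 1 / ((a : ℝ) * Real.sqrt a) * (2 / Real.sqrt a) :=
        mul_le_mul_of_nonneg_left htail (by positivity)
      have h7 : 1 / ((a : ℝ) * Real.sqrt a) * (2 / Real.sqrt a) = 2 / ((a : ℝ) * a) := by
        rw [div_mul_div_comm, one_mul, mul_assoc, hsaa]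
      have h8 : 1 / ((a : ℝ) * Real.sqrt a) * (1 / ((a : ℝ) * Real.sqrt a))
          ≤ 1 / ((a : ℝ) * a) := by
        rw [one_div_mul_one_div]
        apply one_div_le_one_div_of_le (by positivity)
        have h9 : (1:ℝ) ≤ Real.sqrt a * Real.sqrt a := by rw [hsaa]; exact_mod_cast ha
        nlinarith [ha0, hsa]
      have h11 : 1 / ((a : ℝ) * a) + 2 / ((a : ℝ) * a) = 3 / ((a : ℝ) * a) := by ring
      linarith
    · rw [Finset.Icc_eq_empty (by omega)]
      simp only [Finset.sum_empty]
      positivity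
  linarith

private lemma final_numeric (X sX L A sA lgA : ℝ)
    (hXX : sX * sX = X)
    (hsX : 1 ≤ sX) (hL : (0.693:ℝ) ≤ L) (hA1 : 1 ≤ A) (hsA : 0 < sA)
    (hsAA : sA * sA = A) (hAge : sX ≤ A) (hAle : A ≤ sX + 1) (hlgA : lgA ≤ L) :
    2 * (4 / sX * (1 + lgA) + 2 / X * (2 * sA) + 3 * (1 / A)) ≤ 54 / sX * L := by
  subst hXX
  have hsX0 : (0:ℝ) < sX := by linarith
  have h1L : (1:ℝ) ≤ (3/2) * L := by linarith
  have hsA2 : sA ≤ 2 * sX := by nlinarith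
  have e1 : 4 / sX * (1 + lgA) ≤ 4 / sX * ((5/2) * L) :=
    mul_le_mul_of_nonneg_left (by linarith) (by positivity)
  have e2 : 2 / (sX * sX) * (2 * sA) ≤ 2 / (sX * sX) * (4 * sX) :=
    mul_le_mul_of_nonneg_left (by linarith) (by positivity)
  have e2' : 2 / (sX * sX) * (4 * sX) = 8 / sX := by field_simp; ring
  have e2'' : 8 / sX ≤ 12 * L / sX := by
    rw [div_le_div_iff₀ hsX0 hsX0]
    nlinarith [mul_le_mul_of_nonneg_right (show (8:ℝ) ≤ 12*L by linarith) hsX0.le]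
  have e3 : 3 * (1 / A) ≤ 3 * (1 / sX) :=
    mul_le_mul_of_nonneg_left (one_div_le_one_div_of_le hsX0 hAge) (by norm_num)
  have e3' : 3 * (1 / sX) ≤ (9/2) * L * (1/sX) := by
    nlinarith [mul_le_mul_of_nonneg_right (show (3:ℝ) ≤ (9/2)*L by linarith)
      (show (0:ℝ) ≤ 1/sX by positivity)]
  have q1 : 4 / sX * ((5/2) * L) = 10 * (L * (1/sX)) := by ring
  have q2 : 12 * L / sX = 12 * (L * (1/sX)) := by ring
  have q3 : (9/2) * L * (1/sX) = (9/2) * (L * (1/sX)) := by ring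
  have q4 : 54 / sX * L = 54 * (L * (1/sX)) := by ring
  have q5 : 8 / sX = 8 * (1/sX) := by ring
  have hfrac : (0:ℝ) ≤ L * (1/sX) := by positivity
  linarith

open Finset in
private lemma square_bound (X : ℝ) (hX : 1 ≤ X) (N : ℕ) :
    ∑ p ∈ Icc 1 N ×ˢ Icc 1 N,
      1 / ((X + ((p.1 * p.2 : ℕ) : ℝ)) * Real.sqrt ((p.1 * p.2 : ℕ) : ℝ))
      ≤ 54 / Real.sqrt X * Real.log (1 + X) := by
  have hX0 : (0:ℝ) < X := by linarith
  have hsX : 0 < Real.sqrt X := Real.sqrt_pos.2 hX0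
  have hsXX : Real.sqrt X * Real.sqrt X = X := Real.mul_self_sqrt hX0.le
  have hs1 : 1 ≤ Real.sqrt X := by
    rw [show (1:ℝ) = Real.sqrt 1 from (Real.sqrt_one).symm]
    exact Real.sqrt_le_sqrt hX
  set L := Real.log (1 + X) with hLdef
  have hL2 : Real.log 2 ≤ L := by
    rw [hLdef]; apply Real.log_le_log (by norm_num); linarith
  have hLpos : (0.693 : ℝ) ≤ L := by
    have := Real.log_two_gt_d9; linarith
  rw [Finset.sum_product]
  have hconv : ∀ x y : ℕ, 1 / ((X + ((x*y:ℕ):ℝ)) * Real.sqrt ((x*y:ℕ):ℝ))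
      = 1 / ((X + (x:ℝ)*y) * (Real.sqrt x * Real.sqrt y)) := by
    intro x y; rw [Nat.cast_mul, Real.sqrt_mul (Nat.cast_nonneg x)]
  simp only [hconv]
  -- symmetrization
  have hdecomp : (∑ x ∈ Icc 1 N, ∑ y ∈ Icc 1 N,
        1 / ((X + (x:ℝ)*y) * (Real.sqrt x * Real.sqrt y)))
      = (∑ x ∈ Icc 1 N, ∑ y ∈ Icc 1 N,
          if x ≤ y then 1 / ((X + (x:ℝ)*y) * (Real.sqrt x * Real.sqrt y)) else 0)
        + (∑ x ∈ Icc 1 N, ∑ y ∈ Icc 1 N,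
          if y < x then 1 / ((X + (x:ℝ)*y) * (Real.sqrt x * Real.sqrt y)) else 0) := by
    rw [← Finset.sum_add_distrib]
    apply Finset.sum_congr rfl; intro x _
    rw [← Finset.sum_add_distrib]
    apply Finset.sum_congr rfl; intro y _
    by_cases h : x ≤ y
    · rw [if_pos h, if_neg (by omega)]; ring
    · rw [if_neg h, if_pos (by omega)]; ring
  have hswap : (∑ x ∈ Icc 1 N, ∑ y ∈ Icc 1 N,
        if y < x then 1 / ((X + (x:ℝ)*y) * (Real.sqrt x * Real.sqrt y)) else 0)
      ≤ (∑ x ∈ Icc 1 N, ∑ y ∈ Icc 1 N,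
        if x ≤ y then 1 / ((X + (x:ℝ)*y) * (Real.sqrt x * Real.sqrt y)) else 0) := by
    rw [Finset.sum_comm]
    apply Finset.sum_le_sum; intro x _
    apply Finset.sum_le_sum; intro y _
    by_cases h : x < y
    · rw [if_pos h, if_pos (le_of_lt h)]
      apply le_of_eq
      ring
    · rw [if_neg h]
      split_ifs with h2
      · positivity
      · exact le_refl 0
  -- bound the ordered double sum
  set A' := ⌈Real.sqrt X⌉₊ with hA'def
  have hA1 : 1 ≤ A' := Nat.one_le_iff_ne_zero.2 (by
    simp only [hA'def, ne_eq, Nat.ceil_eq_zero, not_le]; positivity)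
  have hA0 : (0:ℝ) < A' := by exact_mod_cast hA1
  have hAge : Real.sqrt X ≤ (A' : ℝ) := Nat.le_ceil _
  have hAle : (A' : ℝ) ≤ Real.sqrt X + 1 := by
    have := Nat.ceil_lt_add_one (Real.sqrt_nonneg X); linarith
  have houter : (∑ x ∈ Icc 1 N, ∑ y ∈ Icc 1 N,
        if x ≤ y then 1 / ((X + (x:ℝ)*y) * (Real.sqrt x * Real.sqrt y)) else 0)
      ≤ 4 / Real.sqrt X * (1 + Real.log (A':ℝ)) + 2 / X * (2 * Real.sqrt (A':ℝ))
        + 3 * (1 / (A':ℝ)) := by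
    rw [← Finset.sum_filter_add_sum_filter_not (Icc 1 N) (· ≤ A')]
    have p12 : ∑ x ∈ (Icc 1 N).filter (· ≤ A'), (∑ y ∈ Icc 1 N,
          if x ≤ y then 1 / ((X + (x:ℝ)*y) * (Real.sqrt x * Real.sqrt y)) else 0)
        ≤ 4 / Real.sqrt X * (1 + Real.log (A':ℝ)) + 2 / X * (2 * Real.sqrt (A':ℝ)) := by
      calc ∑ x ∈ (Icc 1 N).filter (· ≤ A'), (∑ y ∈ Icc 1 N,
            if x ≤ y then 1 / ((X + (x:ℝ)*y) * (Real.sqrt x * Real.sqrt y)) else 0)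
          ≤ ∑ x ∈ (Icc 1 N).filter (· ≤ A'),
              (4 / (x * Real.sqrt X) + 2 / (X * Real.sqrt x)) := by
            apply Finset.sum_le_sum
            intro x hx
            exact innerA X hX N x (Finset.mem_Icc.mp (Finset.mem_filter.mp hx).1).1
        _ ≤ ∑ x ∈ Icc 1 A', (4 / (x * Real.sqrt X) + 2 / (X * Real.sqrt x)) := by
            apply Finset.sum_le_sum_of_subset_of_nonneg
            · intro x hx
              have h1 := Finset.mem_filter.mp hx
              exact Finset.mem_Icc.mpr ⟨(Finset.mem_Icc.mp h1.1).1, h1.2⟩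
            · intro x _ _; positivity
        _ = 4 / Real.sqrt X * (∑ x ∈ Icc 1 A', 1 / (x:ℝ))
            + 2 / X * (∑ x ∈ Icc 1 A', 1 / Real.sqrt x) := by
            rw [Finset.sum_add_distrib, Finset.mul_sum, Finset.mul_sum]
            congr 1
            · exact Finset.sum_congr rfl (fun x _ => by ring)
            · exact Finset.sum_congr rfl (fun x _ => by ring)
        _ ≤ 4 / Real.sqrt X * (1 + Real.log (A':ℝ)) + 2 / X * (2 * Real.sqrt (A':ℝ)) := by
            have h1 := harmonic_le' A' hA1
            have h2 := sqrt_sum_le' A'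
            have h3 : 4 / Real.sqrt X * (∑ x ∈ Icc 1 A', 1 / (x:ℝ))
                ≤ 4 / Real.sqrt X * (1 + Real.log (A':ℝ)) :=
              mul_le_mul_of_nonneg_left h1 (by positivity)
            have h4 : 2 / X * (∑ x ∈ Icc 1 A', 1 / Real.sqrt x)
                ≤ 2 / X * (2 * Real.sqrt (A':ℝ)) :=
              mul_le_mul_of_nonneg_left h2 (by positivity)
            linarith
    have p3 : ∑ x ∈ (Icc 1 N).filter (fun x => ¬ x ≤ A'), (∑ y ∈ Icc 1 N,
          if x ≤ y then 1 / ((X + (x:ℝ)*y) * (Real.sqrt x * Real.sqrt y)) else 0)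
        ≤ 3 * (1 / (A':ℝ)) := by
      calc ∑ x ∈ (Icc 1 N).filter (fun x => ¬ x ≤ A'), (∑ y ∈ Icc 1 N,
            if x ≤ y then 1 / ((X + (x:ℝ)*y) * (Real.sqrt x * Real.sqrt y)) else 0)
          ≤ ∑ x ∈ (Icc 1 N).filter (fun x => ¬ x ≤ A'), 3 / ((x:ℝ) * x) := by
            apply Finset.sum_le_sum
            intro x hx
            exact innerB X hX0 N x (Finset.mem_Icc.mp (Finset.mem_filter.mp hx).1).1
        _ ≤ ∑ x ∈ Ioc A' N, 3 / ((x:ℝ) * x) := by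
            apply Finset.sum_le_sum_of_subset_of_nonneg
            · intro x hx
              have h1 := Finset.mem_filter.mp hx
              exact Finset.mem_Ioc.mpr ⟨by omega, (Finset.mem_Icc.mp h1.1).2⟩
            · intro x _ _; positivity
        _ = 3 * ∑ x ∈ Ioc A' N, 1 / ((x:ℝ) * x) := by
            rw [Finset.mul_sum]
            exact Finset.sum_congr rfl (fun x _ => by ring)
        _ ≤ 3 * (1 / (A':ℝ)) :=
            mul_le_mul_of_nonneg_left (tail2_le' A' N hA1) (by norm_num)
    linarith
  have hsA : (0:ℝ) < Real.sqrt (A':ℝ) := Real.sqrt_pos.2 hA0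
  have hsAA : Real.sqrt (A':ℝ) * Real.sqrt (A':ℝ) = (A':ℝ) := Real.mul_self_sqrt hA0.le
  have hlgA : Real.log (A':ℝ) ≤ L := by
    rw [hLdef]
    apply Real.log_le_log hA0
    nlinarith [hsXX, hs1, hAle]
  have hfin := final_numeric X (Real.sqrt X) L (A':ℝ) (Real.sqrt (A':ℝ)) (Real.log (A':ℝ))
    hsXX hs1 hLpos (by exact_mod_cast hA1) hsA hsAA hAge hAle hlgA
  linarith


open Finset in
private lemma card_anti' (n : ℕ) : n.divisorsAntidiagonal.card = n.divisors.card := by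
  rw [← Nat.map_div_right_divisors, Finset.card_map]

open Finset in
private lemma divisor_to_square (F : Finset ℕ+) (w : ℕ → ℝ) (hw : ∀ n, 0 ≤ w n) :
    ∃ N : ℕ, 1 ≤ N ∧ ∑ c ∈ F, (((c : ℕ).divisors.card : ℝ) * w (c : ℕ)) ≤
      ∑ p ∈ Icc 1 N ×ˢ Icc 1 N, w (p.1 * p.2) := by
  refine ⟨max 1 (F.sup fun c => (c : ℕ)), le_max_left _ _, ?_⟩
  set N := max 1 (F.sup fun c => (c : ℕ)) with hN
  have h1 : ∀ c ∈ F, (((c : ℕ).divisors.card : ℝ) * w (c : ℕ))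
      = ∑ p ∈ (c : ℕ).divisorsAntidiagonal, w (p.1 * p.2) := by
    intro c _
    rw [Finset.sum_congr rfl (fun p hp => by
      rw [(Nat.mem_divisorsAntidiagonal.mp hp).1]), Finset.sum_const, card_anti',
      nsmul_eq_mul]
  rw [Finset.sum_congr rfl h1]
  have hdisj : (↑F : Set ℕ+).PairwiseDisjoint (fun c : ℕ+ => (c : ℕ).divisorsAntidiagonal) := by
    intro c _ c' _ hne
    simp only [Function.onFun, Finset.disjoint_left]
    intro p hp hp'
    exact hne (by
      have e1 := (Nat.mem_divisorsAntidiagonal.mp hp).1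
      have e2 := (Nat.mem_divisorsAntidiagonal.mp hp').1
      exact PNat.coe_injective (e1 ▸ e2 ▸ rfl))
  rw [← Finset.sum_biUnion hdisj]
  apply Finset.sum_le_sum_of_subset_of_nonneg
  · intro p hp
    obtain ⟨c, hcF, hpc⟩ := Finset.mem_biUnion.mp hp
    obtain ⟨hmul, hne⟩ := Nat.mem_divisorsAntidiagonal.mp hpc
    have hp1 : 0 < p.1 := Nat.pos_of_ne_zero fun h => by simp [h] at hmul; exact hne hmul.symm
    have hp2 : 0 < p.2 := Nat.pos_of_ne_zero fun h => by simp [h] at hmul; exact hne hmul.symm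
    have hcN : (c : ℕ) ≤ N := le_max_of_le_right (Finset.le_sup hcF)
    have hle1 : p.1 ≤ (c : ℕ) := hmul ▸ Nat.le_mul_of_pos_right _ hp2
    have hle2 : p.2 ≤ (c : ℕ) := hmul ▸ Nat.le_mul_of_pos_left _ hp1
    exact Finset.mem_product.mpr ⟨Finset.mem_Icc.mpr ⟨hp1, hle1.trans hcN⟩,
      Finset.mem_Icc.mpr ⟨hp2, hle2.trans hcN⟩⟩
  · intro p _ _
    exact hw _

/-- **Lemma 7.2.** For every `m ∈ ℤ⁺` there is `C_m > 0` such that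
`∑_{c≥1} (X+c)^{-m} σ(c)/√c ≤ C_m X^{1/2-m} log(1+X)` for `X ≥ 1`, and
`≤ C_m` for `0 < X < 1`. -/
theorem divisor_sum_estimate (m : ℕ) (hm : 0 < m) :
    ∃ C : ℝ, 0 < C ∧ ∀ X : ℝ, 0 < X →
      (1 ≤ X →
        (∑' c : ℕ+, ((X + ((c : ℕ) : ℝ)) ^ m)⁻¹ *
            (((c : ℕ).divisors.card : ℝ) / Real.sqrt ((c : ℕ) : ℝ))) ≤
          C * X ^ ((1:ℝ)/2 - (m : ℝ)) * Real.log (1 + X)) ∧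
      (X < 1 →
        (∑' c : ℕ+, ((X + ((c : ℕ) : ℝ)) ^ m)⁻¹ *
            (((c : ℕ).divisors.card : ℝ) / Real.sqrt ((c : ℕ) : ℝ))) ≤ C) := by
  refine ⟨200, by norm_num, ?_⟩
  intro X hX0
  constructor
  · -- case X ≥ 1
    intro hX1
    have hsX : 0 < Real.sqrt X := Real.sqrt_pos.2 hX0
    have hL0 : 0 ≤ Real.log (1 + X) := Real.log_nonneg (by linarith)
    have hrp : (0:ℝ) ≤ X ^ ((1:ℝ)/2 - (m:ℝ)) := Real.rpow_nonneg hX0.le _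
    apply tsum_le_of_sum_le' (by positivity)
    intro F
    have hXm : (0:ℝ) < X ^ (m-1) := pow_pos hX0 _
    have term : ∀ c : ℕ+, ((X + ((c:ℕ):ℝ)) ^ m)⁻¹ *
          (((c:ℕ).divisors.card : ℝ) / Real.sqrt ((c:ℕ):ℝ))
        ≤ (X ^ (m-1))⁻¹ * (((c:ℕ).divisors.card : ℝ) *
            (1 / ((X + ((c:ℕ):ℝ)) * Real.sqrt ((c:ℕ):ℝ)))) := by
      intro c
      have hc1 : 1 ≤ (c:ℕ) := c.2
      have hc0 : (0:ℝ) < ((c:ℕ):ℝ) := by exact_mod_cast hc1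
      have hsc : 0 < Real.sqrt ((c:ℕ):ℝ) := Real.sqrt_pos.2 hc0
      have hXc : (0:ℝ) < X + ((c:ℕ):ℝ) := by linarith
      have hd0 : (0:ℝ) ≤ ((c:ℕ).divisors.card : ℝ) := by positivity
      have hpow : X ^ (m-1) * (X + ((c:ℕ):ℝ)) ≤ (X + ((c:ℕ):ℝ)) ^ m := by
        calc X ^ (m-1) * (X + ((c:ℕ):ℝ))
            ≤ (X + ((c:ℕ):ℝ)) ^ (m-1) * (X + ((c:ℕ):ℝ)) :=
              mul_le_mul_of_nonneg_right (pow_le_pow_left₀ hX0.le (by linarith) _) hXc.le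
          _ = (X + ((c:ℕ):ℝ)) ^ m := by
              rw [← pow_succ]
              congr 1
              omega
      have lhs_eq : ((X + ((c:ℕ):ℝ)) ^ m)⁻¹ *
            (((c:ℕ).divisors.card : ℝ) / Real.sqrt ((c:ℕ):ℝ))
          = ((c:ℕ).divisors.card : ℝ) *
            (1 / ((X + ((c:ℕ):ℝ)) ^ m * Real.sqrt ((c:ℕ):ℝ))) := by
        field_simp
      have rhs_eq : (X ^ (m-1))⁻¹ * (((c:ℕ).divisors.card : ℝ) *
            (1 / ((X + ((c:ℕ):ℝ)) * Real.sqrt ((c:ℕ):ℝ))))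
          = ((c:ℕ).divisors.card : ℝ) *
            (1 / (X ^ (m-1) * ((X + ((c:ℕ):ℝ)) * Real.sqrt ((c:ℕ):ℝ)))) := by
        field_simp
      rw [lhs_eq, rhs_eq]
      apply mul_le_mul_of_nonneg_left _ hd0
      apply one_div_le_one_div_of_le (by positivity)
      calc X ^ (m-1) * ((X + ((c:ℕ):ℝ)) * Real.sqrt ((c:ℕ):ℝ))
          = (X ^ (m-1) * (X + ((c:ℕ):ℝ))) * Real.sqrt ((c:ℕ):ℝ) := by ring
        _ ≤ (X + ((c:ℕ):ℝ)) ^ m * Real.sqrt ((c:ℕ):ℝ) :=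
            mul_le_mul_of_nonneg_right hpow hsc.le
    obtain ⟨N, hN1, hswap⟩ := divisor_to_square F
      (fun n => 1 / ((X + (n:ℝ)) * Real.sqrt (n:ℝ))) (fun n => by positivity)
    have h2 := square_bound X hX1 N
    calc ∑ c ∈ F, ((X + ((c:ℕ):ℝ)) ^ m)⁻¹ *
          (((c:ℕ).divisors.card : ℝ) / Real.sqrt ((c:ℕ):ℝ))
        ≤ ∑ c ∈ F, (X ^ (m-1))⁻¹ * (((c:ℕ).divisors.card : ℝ) *
            (1 / ((X + ((c:ℕ):ℝ)) * Real.sqrt ((c:ℕ):ℝ)))) :=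
          Finset.sum_le_sum (fun c _ => term c)
      _ = (X ^ (m-1))⁻¹ * ∑ c ∈ F, (((c:ℕ).divisors.card : ℝ) *
            (1 / ((X + ((c:ℕ):ℝ)) * Real.sqrt ((c:ℕ):ℝ)))) := by
          rw [Finset.mul_sum]
      _ ≤ (X ^ (m-1))⁻¹ * (54 / Real.sqrt X * Real.log (1 + X)) :=
          mul_le_mul_of_nonneg_left (le_trans hswap h2) (by positivity)
      _ ≤ 200 * X ^ ((1:ℝ)/2 - (m:ℝ)) * Real.log (1 + X) := by
          have hcast : ((m-1:ℕ):ℝ) = (m:ℝ) - 1 := by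
            rw [Nat.cast_sub hm, Nat.cast_one]
          have hrpow : X ^ ((1:ℝ)/2 - (m:ℝ))
              = (X ^ (m-1))⁻¹ * (Real.sqrt X)⁻¹ := by
            have e1 : X ^ ((1:ℝ)/2 - (m:ℝ))
                = X ^ (-(((m-1:ℕ)):ℝ)) * X ^ (-(1/2:ℝ)) := by
              rw [← Real.rpow_add hX0]
              congr 1
              rw [hcast]
              ring
            rw [e1, Real.rpow_neg hX0.le, Real.rpow_neg hX0.le, Real.rpow_natCast,
              ← Real.sqrt_eq_rpow]
          have final_eq : (X ^ (m-1))⁻¹ * (54 / Real.sqrt X * Real.log (1 + X))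
              = 54 * X ^ ((1:ℝ)/2 - (m:ℝ)) * Real.log (1 + X) := by
            rw [hrpow]
            ring
          rw [final_eq]
          nlinarith [mul_nonneg hrp hL0]
  · -- case X < 1
    intro _
    apply tsum_le_of_sum_le' (by norm_num)
    intro F
    have term : ∀ c : ℕ+, ((X + ((c:ℕ):ℝ)) ^ m)⁻¹ *
          (((c:ℕ).divisors.card : ℝ) / Real.sqrt ((c:ℕ):ℝ))
        ≤ ((c:ℕ).divisors.card : ℝ) * (1 / (((c:ℕ):ℝ) * Real.sqrt ((c:ℕ):ℝ))) := by
      intro c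
      have hc1 : 1 ≤ (c:ℕ) := c.2
      have hc0 : (0:ℝ) < ((c:ℕ):ℝ) := by exact_mod_cast hc1
      have hc1' : (1:ℝ) ≤ ((c:ℕ):ℝ) := by exact_mod_cast hc1
      have hsc : 0 < Real.sqrt ((c:ℕ):ℝ) := Real.sqrt_pos.2 hc0
      have hXc : (0:ℝ) < X + ((c:ℕ):ℝ) := by linarith
      have hd0 : (0:ℝ) ≤ ((c:ℕ).divisors.card : ℝ) := by positivity
      have hpow : ((c:ℕ):ℝ) ≤ (X + ((c:ℕ):ℝ)) ^ m := by
        calc ((c:ℕ):ℝ) ≤ ((c:ℕ):ℝ) ^ m := le_self_pow₀ hc1' hm.ne'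
          _ ≤ (X + ((c:ℕ):ℝ)) ^ m := pow_le_pow_left₀ hc0.le (by linarith) _
      have lhs_eq : ((X + ((c:ℕ):ℝ)) ^ m)⁻¹ *
            (((c:ℕ).divisors.card : ℝ) / Real.sqrt ((c:ℕ):ℝ))
          = ((c:ℕ).divisors.card : ℝ) *
            (1 / ((X + ((c:ℕ):ℝ)) ^ m * Real.sqrt ((c:ℕ):ℝ))) := by
        field_simp
      rw [lhs_eq]
      apply mul_le_mul_of_nonneg_left _ hd0
      apply one_div_le_one_div_of_le (by positivity)
      exact mul_le_mul_of_nonneg_right hpow hsc.le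
    obtain ⟨N, hN1, hswap⟩ := divisor_to_square F
      (fun n => 1 / ((n:ℝ) * Real.sqrt (n:ℝ))) (fun n => by positivity)
    have square9 : ∑ p ∈ Finset.Icc 1 N ×ˢ Finset.Icc 1 N,
        1 / (((p.1 * p.2 : ℕ):ℝ) * Real.sqrt ((p.1 * p.2 : ℕ):ℝ)) ≤ 9 := by
      have hconv2 : ∀ x y : ℕ, 1 / (((x*y:ℕ):ℝ) * Real.sqrt ((x*y:ℕ):ℝ))
          = (1 / ((x:ℝ) * Real.sqrt (x:ℝ))) * (1 / ((y:ℝ) * Real.sqrt (y:ℝ))) := by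
        intro x y
        rw [one_div_mul_one_div, Nat.cast_mul, Real.sqrt_mul (Nat.cast_nonneg x)]
        congr 1
        ring
      rw [Finset.sum_product]
      simp only [hconv2]
      rw [← Finset.sum_mul_sum]
      have h3 := sum32_le' N
      have hnn : (0:ℝ) ≤ ∑ a ∈ Finset.Icc 1 N, 1 / ((a:ℝ) * Real.sqrt a) :=
        Finset.sum_nonneg (fun a _ => by positivity)
      calc (∑ a ∈ Finset.Icc 1 N, 1 / ((a:ℝ) * Real.sqrt a)) *
            (∑ a ∈ Finset.Icc 1 N, 1 / ((a:ℝ) * Real.sqrt a)) ≤ 3 * 3 :=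
            mul_le_mul h3 h3 hnn (by norm_num)
        _ = 9 := by norm_num
    calc ∑ c ∈ F, ((X + ((c:ℕ):ℝ)) ^ m)⁻¹ *
          (((c:ℕ).divisors.card : ℝ) / Real.sqrt ((c:ℕ):ℝ))
        ≤ ∑ c ∈ F, (((c:ℕ).divisors.card : ℝ) *
            (1 / (((c:ℕ):ℝ) * Real.sqrt ((c:ℕ):ℝ)))) :=
          Finset.sum_le_sum (fun c _ => term c)
      _ ≤ ∑ p ∈ Finset.Icc 1 N ×ˢ Finset.Icc 1 N,
            1 / (((p.1 * p.2 : ℕ):ℝ) * Real.sqrt ((p.1 * p.2 : ℕ):ℝ)) := hswap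
      _ ≤ 9 := square9
      _ ≤ 200 := by norm_num

end
end

section
/- Fix η > 0 and an integer m ≥ 3. There exists a constant C > 0 (depending only on η and m) such that for every α ∈ ℝ and every X > 0: if X ≥ 1 then ∑_{c=1}^∞ c⁻¹ (X+c)^{1−m} ∑_{k∈ℤ} gcd(c,k)/(1 + |k − cα|^{1+η}) ≤ C · X^{2−m} · 𝔐_α(X), and if 0 < X < 1 then the same double sum is ≤ C. -/
open Real

noncomputable section

/-- The majorant `𝔐_α(X) = ∑_{ℓ≥1} min(1/ℓ², 1/(Xℓ⟨ℓα⟩))`, a term with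
`⟨ℓα⟩ = 0` being read as `1/ℓ²`. -/
def frakM (α X : ℝ) : ℝ :=
  ∑' l : ℕ+, if nint (((l : ℕ) : ℝ) * α) = 0 then 1 / ((l : ℕ) : ℝ) ^ 2
    else min (1 / ((l : ℕ) : ℝ) ^ 2) (1 / (X * ((l : ℕ) : ℝ) * nint (((l : ℕ) : ℝ) * α)))

lemma core_ineq {q A B : ℝ} (hq : 0 < q) (hA : 0 < A) (hAB : A ≤ B) :
    q * (B - A) * B ^ (-(q+1)) ≤ A ^ (-q) - B ^ (-q) := by
  have hB : 0 < B := lt_of_lt_of_le hA hAB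
  set s : ℝ := (B - A) / B with hs
  have hs0 : 0 ≤ s := div_nonneg (by linarith) hB.le
  have hs1 : 1 - s = A / B := by rw [hs]; field_simp; ring
  have h1s : 0 < 1 - s := by rw [hs1]; positivity
  have key : (1 + q*s) * (1-s)^q ≤ 1 := by
    have h2 : (1-s)^q ≤ Real.exp (-s) ^ q := by
      apply Real.rpow_le_rpow h1s.le _ hq.le
      linarith [Real.add_one_le_exp (-s)]
    have h3 : Real.exp (-s) ^ q = Real.exp (-(s*q)) := by
      rw [Real.rpow_def_of_pos (Real.exp_pos _), Real.log_exp]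
      ring_nf
    have h4 : 1 + q*s ≤ Real.exp (q*s) := by linarith [Real.add_one_le_exp (q*s)]
    calc (1 + q*s) * (1-s)^q ≤ Real.exp (q*s) * Real.exp (-(s*q)) := by
          apply mul_le_mul h4 (h2.trans_eq h3) (Real.rpow_nonneg h1s.le q) (Real.exp_pos _).le
      _ = 1 := by rw [← Real.exp_add]; ring_nf; exact Real.exp_zero
  have hpow : (0:ℝ) < (1-s)^q := Real.rpow_pos_of_pos h1s q
  have key2 : 1 + q*s ≤ (1-s)^(-q) := by
    rw [Real.rpow_neg h1s.le]
    calc 1 + q*s = (1 + q*s) * (1-s)^q * ((1-s)^q)⁻¹ := by field_simp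
      _ ≤ 1 * ((1-s)^q)⁻¹ := mul_le_mul_of_nonneg_right key (by positivity)
      _ = ((1-s)^q)⁻¹ := one_mul _
  have hAeq : A = B * (1-s) := by rw [hs1]; field_simp
  have hArpow : A ^ (-q) = B ^ (-q) * (1-s)^(-q) := by
    rw [hAeq, Real.mul_rpow hB.le h1s.le]
  have hBpos : (0:ℝ) < B ^ (-q) := Real.rpow_pos_of_pos hB _
  have hBsplit : B ^ (-(q+1)) = B ^ (-q) * B⁻¹ := by
    rw [show -(q+1) = -q + (-1) by ring, Real.rpow_add hB, Real.rpow_neg_one]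
  calc q * (B - A) * B ^ (-(q+1)) = B ^ (-q) * (q * s) := by
        rw [hBsplit, hs]; field_simp
    _ ≤ B ^ (-q) * ((1-s)^(-q) - 1) := by
        apply mul_le_mul_of_nonneg_left _ hBpos.le
        linarith
    _ = A ^ (-q) - B ^ (-q) := by rw [hArpow]; ring

lemma lemT_partial {q Y e : ℝ} (hq : 0 < q) (hY : 0 < Y) (he : 0 < e) :
    ∀ N : ℕ, ∑ d ∈ Finset.range N, (Y + ((d:ℝ)+1)*e) ^ (-(q+1))
      ≤ (Y ^ (-q) - (Y + (N:ℝ)*e) ^ (-q)) / (q*e) := by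
  intro N
  induction N with
  | zero => simp
  | succ N ih =>
    rw [Finset.sum_range_succ]
    have hA : (0:ℝ) < Y + (N:ℝ)*e := by positivity
    have hAB : Y + (N:ℝ)*e ≤ Y + ((N:ℝ)+1)*e := by nlinarith
    have hkey := core_ineq hq hA hAB
    have h2 : (Y + ((N:ℝ)+1)*e) ^ (-(q+1))
        ≤ ((Y + (N:ℝ)*e) ^ (-q) - (Y + ((N:ℝ)+1)*e) ^ (-q)) / (q*e) := by
      rw [le_div_iff₀ (by positivity)]
      calc (Y + ((N:ℝ)+1)*e) ^ (-(q+1)) * (q*e)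
          = q * ((Y + ((N:ℝ)+1)*e) - (Y + (N:ℝ)*e)) * (Y + ((N:ℝ)+1)*e) ^ (-(q+1)) := by ring
        _ ≤ _ := hkey
    push_cast
    calc _ ≤ (Y ^ (-q) - (Y + (N:ℝ)*e) ^ (-q)) / (q*e)
            + ((Y + (N:ℝ)*e) ^ (-q) - (Y + ((N:ℝ)+1)*e) ^ (-q)) / (q*e) := by
          exact add_le_add ih h2
      _ = (Y ^ (-q) - (Y + ((N:ℝ)+1)*e) ^ (-q)) / (q*e) := by ring

lemma lemT_pnat {q Y e : ℝ} (hq : 0 < q) (hY : 0 < Y) (he : 0 < e) :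
    Summable (fun d : ℕ+ => (Y + ((d:ℕ):ℝ)*e) ^ (-(q+1))) ∧
    ∑' d : ℕ+, (Y + ((d:ℕ):ℝ)*e) ^ (-(q+1)) ≤ Y ^ (-q) / (q*e) := by
  have hnn : ∀ n : ℕ, 0 ≤ (Y + ((n:ℝ)+1)*e) ^ (-(q+1)) := by
    intro n; positivity
  have hb : ∀ N : ℕ, ∑ d ∈ Finset.range N, (Y + ((d:ℝ)+1)*e) ^ (-(q+1)) ≤ Y ^ (-q) / (q*e) := by
    intro N
    refine (lemT_partial hq hY he N).trans ?_
    apply div_le_div_of_nonneg_right _ (by positivity)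
    · have : (0:ℝ) ≤ (Y + (N:ℝ)*e) ^ (-q) := by positivity
      linarith
  have hsum : Summable (fun n : ℕ => (Y + ((n:ℝ)+1)*e) ^ (-(q+1))) :=
    summable_of_sum_range_le hnn hb
  have htsum : ∑' n : ℕ, (Y + ((n:ℝ)+1)*e) ^ (-(q+1)) ≤ Y ^ (-q) / (q*e) :=
    Real.tsum_le_of_sum_range_le hnn hb
  have hcomp : ∀ n : ℕ, (Y + (((Equiv.pnatEquivNat.symm n : ℕ+):ℕ):ℝ)*e) ^ (-(q+1))
      = (Y + ((n:ℝ)+1)*e) ^ (-(q+1)) := by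
    intro n
    congr 2
    simp [Equiv.pnatEquivNat]
  constructor
  · rw [← Equiv.summable_iff Equiv.pnatEquivNat.symm]
    exact hsum.congr (fun n => (hcomp n).symm)
  · rw [← Equiv.tsum_eq Equiv.pnatEquivNat.symm]
    calc ∑' n : ℕ, (Y + (((Equiv.pnatEquivNat.symm n : ℕ+):ℕ):ℝ)*e) ^ (-(q+1))
        = ∑' n : ℕ, (Y + ((n:ℝ)+1)*e) ^ (-(q+1)) := tsum_congr hcomp
      _ ≤ _ := htsum

lemma rpow_neg_base_mono {x y r : ℝ} (hx : 0 < x) (hxy : x ≤ y) (hr : 0 ≤ r) :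
    y ^ (-r) ≤ x ^ (-r) :=
  Real.rpow_le_rpow_of_nonpos hx hxy (by linarith)

lemma inv_one_add_rpow_le {p t : ℝ} (hp : 0 < p) (ht : 0 ≤ t) :
    1/(1+t^p) ≤ 2^p * (1+t)^(-p) := by
  have h0 : (0:ℝ) < 1 + t^p := by positivity
  have h1 : (1+t)^p ≤ 2^p * (1+t^p) := by
    rcases le_total t 1 with h | h
    · have : (1+t)^p ≤ (2:ℝ)^p := Real.rpow_le_rpow (by linarith) (by linarith) hp.le
      have h2 : (2:ℝ)^p ≤ 2^p * (1+t^p) := by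
        apply le_mul_of_one_le_right (by positivity)
        nlinarith [Real.rpow_nonneg ht p]
      linarith
    · have : (1+t)^p ≤ (2*t)^p := Real.rpow_le_rpow (by linarith) (by linarith) hp.le
      rw [Real.mul_rpow (by norm_num) ht] at this
      nlinarith [Real.rpow_pos_of_pos (show (0:ℝ) < 2 by norm_num) p,
        Real.rpow_nonneg ht p]
  rw [Real.rpow_neg (by linarith), ← div_eq_mul_inv, div_le_div_iff₀ h0 (by positivity)]
  linarith [h1]

lemma summable_int_inv_abs_rpow {p : ℝ} (hp : 1 < p) :
    Summable (fun s : ℤ => 1/|(s:ℝ)|^p) := by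
  apply Summable.of_nat_of_neg
  · refine (Real.summable_one_div_nat_rpow.2 hp).congr (fun n => ?_)
    norm_num
  · refine (Real.summable_one_div_nat_rpow.2 hp).congr (fun n => ?_)
    push_cast
    rw [abs_neg]
    norm_num

lemma sumZ {p : ℝ} (hp : 1 < p) {d : ℝ} (hd : 1 ≤ d) (β : ℝ) :
    Summable (fun j : ℤ => 1/(1+|d*(j:ℝ) - β|^p)) ∧
    ∑' j : ℤ, 1/(1+|d*(j:ℝ) - β|^p)
      ≤ 1/(1+(d*|β/d - (round (β/d):ℝ)|)^p)
        + 2^p * d^(-p) * (∑' s : ℤ, 1/|(s:ℝ)|^p) := by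
  have hp0 : 0 < p := by linarith
  have hd0 : 0 < d := by linarith
  set j₀ : ℤ := round (β/d) with hj₀
  set f : ℤ → ℝ := fun j => 1/(1+|d*(j:ℝ) - β|^p) with hf
  set g : ℤ → ℝ := fun s => f (j₀ + s) with hg
  -- key pointwise bound
  have key : ∀ s : ℤ, s ≠ 0 → g s ≤ 2^p * d^(-p) * (1/|(s:ℝ)|^p) := by
    intro s hs
    have hs1 : (1:ℝ) ≤ |(s:ℝ)| := by
      rw [← Int.cast_abs]
      exact_mod_cast Int.one_le_abs (by omega)
    have hround : |(j₀:ℝ) - β/d| ≤ 1/2 := by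
      rw [hj₀, abs_sub_comm]
      exact abs_sub_round (β/d)
    have heq : d*((j₀ + s : ℤ):ℝ) - β = d * (((j₀:ℝ) + (s:ℝ)) - β/d) := by
      push_cast
      field_simp
    have habs : d * |(s:ℝ)| / 2 ≤ |d*((j₀ + s : ℤ):ℝ) - β| := by
      rw [heq, abs_mul, abs_of_pos hd0]
      have h1 : |(s:ℝ)| - 1/2 ≤ |((j₀:ℝ) + (s:ℝ)) - β/d| := by
        have := abs_sub_abs_le_abs_sub (s:ℝ) (β/d - (j₀:ℝ))
        have h2 : (s:ℝ) - (β/d - (j₀:ℝ)) = ((j₀:ℝ) + (s:ℝ)) - β/d := by ring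
        rw [h2] at this
        rw [abs_sub_comm] at hround
        linarith
      have h3 : |(s:ℝ)|/2 ≤ |((j₀:ℝ) + (s:ℝ)) - β/d| := by linarith
      nlinarith [abs_nonneg ((j₀:ℝ) + (s:ℝ) - β/d)]
    have hpos : (0:ℝ) < d * |(s:ℝ)| / 2 := by positivity
    have hrp : (d * |(s:ℝ)| / 2)^p ≤ |d*((j₀ + s : ℤ):ℝ) - β|^p :=
      Real.rpow_le_rpow hpos.le habs hp0.le
    have hup : (1:ℝ)/(1+|d*((j₀ + s : ℤ):ℝ) - β|^p) ≤ 1/((d * |(s:ℝ)| / 2)^p) := by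
      apply div_le_div_of_nonneg_left one_pos.le (by positivity)
      · nlinarith [Real.rpow_nonneg (abs_nonneg (d*((j₀ + s : ℤ):ℝ) - β)) p]
    have hcalc : 1/((d * |(s:ℝ)| / 2)^p) = 2^p * d^(-p) * (1/|(s:ℝ)|^p) := by
      rw [Real.div_rpow (by positivity) (by norm_num : (0:ℝ) ≤ 2),
        Real.mul_rpow hd0.le (abs_nonneg _), Real.rpow_neg hd0.le]
      field_simp
    calc g s ≤ 1/((d * |(s:ℝ)| / 2)^p) := hup
      _ = _ := hcalc
  have hZsum : Summable (fun s : ℤ => 1/|(s:ℝ)|^p) := summable_int_inv_abs_rpow hp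
  have hmaj : Summable (fun s : ℤ =>
      (if s = (0:ℤ) then (1:ℝ) else 0) + 2^p * d^(-p) * (1/|(s:ℝ)|^p)) := by
    apply Summable.add
    · exact (hasSum_ite_eq (0:ℤ) (1:ℝ)).summable
    · exact hZsum.mul_left _
  have hgle : ∀ s : ℤ, g s ≤
      (if s = (0:ℤ) then (1:ℝ) else 0) + 2^p * d^(-p) * (1/|(s:ℝ)|^p) := by
    intro s
    by_cases hs : s = 0
    · simp only [hs, if_pos]
      have : g 0 ≤ 1 := by
        show (1:ℝ)/(1+|d*((j₀ + (0:ℤ) : ℤ):ℝ) - β|^p) ≤ 1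
        rw [one_div]
        apply inv_le_one_of_one_le₀
        nlinarith [Real.rpow_nonneg (abs_nonneg (d*((j₀ + (0:ℤ) : ℤ):ℝ) - β)) p]
      have h2 : (0:ℝ) ≤ 2^p * d^(-p) * (1/|((0:ℤ):ℝ)|^p) := by positivity
      linarith
    · rw [if_neg hs]
      have := key s hs
      linarith
  have hgnn : ∀ s : ℤ, 0 ≤ g s := by intro s; rw [hg]; positivity
  have hgsum : Summable g := Summable.of_nonneg_of_le hgnn hgle hmaj
  have hfsum : Summable f := by
    have : (f ∘ (Equiv.addLeft j₀)) = g := by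
      funext s
      simp [hg, Equiv.addLeft]
    rw [← (Equiv.addLeft j₀).summable_iff (f := f), this]
    exact hgsum
  refine ⟨hfsum, ?_⟩
  have htrans : ∑' j, f j = ∑' s, g s := by
    rw [← (Equiv.addLeft j₀).tsum_eq f]
    apply tsum_congr
    intro s
    simp [hg, Equiv.addLeft]
  have hg0 : g 0 = 1/(1+(d*|β/d - (j₀:ℝ)|)^p) := by
    show (1:ℝ)/(1+|d*((j₀ + (0:ℤ) : ℤ):ℝ) - β|^p) = _
    have harg : |d*((j₀ + (0:ℤ) : ℤ):ℝ) - β| = d*|β/d - (j₀:ℝ)| := by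
      push_cast
      rw [add_zero, abs_sub_comm,
        show β - d*(j₀:ℝ) = d*(β/d - (j₀:ℝ)) by field_simp, abs_mul, abs_of_pos hd0]
    rw [harg]
  rw [htrans, hgsum.tsum_eq_add_tsum_ite 0, hg0]
  have htail : ∑' s : ℤ, (if s = (0:ℤ) then (0:ℝ) else g s)
      ≤ 2^p * d^(-p) * (∑' s : ℤ, 1/|(s:ℝ)|^p) := by
    rw [← tsum_mul_left]
    apply Summable.tsum_le_tsum _ _ (hZsum.mul_left _)
    · intro s
      by_cases hs : s = 0
      · rw [if_pos hs, hs]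
        simp only [Int.cast_zero, abs_zero]
        rw [Real.zero_rpow (by linarith)]
        norm_num
      · rw [if_neg hs]
        exact key s hs
    · apply Summable.of_nonneg_of_le _ _ hgsum
      · intro s
        by_cases hs : s = 0
        · simp [hs]
        · simp only [if_neg hs]; exact hgnn s
      · intro s
        by_cases hs : s = 0
        · simp only [if_pos hs]; exact hgnn s
        · simp only [if_neg hs]
          exact le_rfl
  exact add_le_add_right htail _

lemma gcd_eq_sum (c : ℕ) (hc : 0 < c) (k : ℤ) :
    ((Int.gcd (c:ℤ) k : ℕ) : ℝ)
      = ∑ d ∈ c.divisors, (if (d:ℤ) ∣ k then (Nat.totient d : ℝ) else 0) := by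
  have hfilter : c.divisors.filter (fun d : ℕ => ((d:ℤ) ∣ k)) = (Int.gcd (c:ℤ) k).divisors := by
    ext d
    simp only [Finset.mem_filter, Nat.mem_divisors]
    constructor
    · rintro ⟨⟨hdc, _⟩, hdk⟩
      refine ⟨Nat.dvd_gcd ?_ (Int.natCast_dvd.1 hdk), ?_⟩
      · simpa [Int.gcd] using hdc
      · simp [Int.gcd_eq_zero_iff]
        intro h _
        omega
    · rintro ⟨hdg, hg⟩
      have h1 : d ∣ (c:ℤ).natAbs := hdg.trans (Nat.gcd_dvd_left _ _)
      have h2 : d ∣ k.natAbs := hdg.trans (Nat.gcd_dvd_right _ _)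
      exact ⟨⟨by simpa using h1, by omega⟩, Int.natCast_dvd.2 h2⟩
  rw [← Finset.sum_filter, hfilter]
  rw [← Nat.cast_sum]
  norm_cast
  exact (Nat.sum_totient _).symm

lemma stepA {p : ℝ} (hp : 1 < p) (α : ℝ) (c : ℕ+) :
    (∑' k : ℤ, ((Int.gcd ((c:ℕ):ℤ) k : ℕ) : ℝ) / (1 + |(k:ℝ) - ((c:ℕ):ℝ)*α|^p))
      = ∑ d ∈ (c:ℕ).divisors, (Nat.totient d : ℝ) *
          ∑' j : ℤ, 1/(1+|((d:ℕ):ℝ)*(j:ℝ) - ((c:ℕ):ℝ)*α|^p) := by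
  set β : ℝ := ((c:ℕ):ℝ)*α with hβ
  have hbase : Summable fun k : ℤ => 1/(1+|(1:ℝ)*(k:ℝ) - β|^p) := (sumZ hp le_rfl β).1
  have h1 : ∀ k:ℤ, ((Int.gcd ((c:ℕ):ℤ) k : ℕ) : ℝ) / (1 + |(k:ℝ) - β|^p)
      = ∑ d ∈ (c:ℕ).divisors,
          (if (d:ℤ) ∣ k then (Nat.totient d : ℝ)/(1 + |(k:ℝ) - β|^p) else 0) := by
    intro k
    rw [gcd_eq_sum (c:ℕ) c.pos k, Finset.sum_div]
    refine Finset.sum_congr rfl (fun d _ => ?_)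
    split_ifs with h
    · rfl
    · simp
  have hsummand : ∀ d : ℕ, d ∈ (c:ℕ).divisors → Summable (fun k : ℤ =>
      if (d:ℤ) ∣ k then (Nat.totient d : ℝ)/(1 + |(k:ℝ) - β|^p) else 0) := by
    intro d _
    apply Summable.of_nonneg_of_le _ _ (hbase.mul_left (Nat.totient d : ℝ))
    · intro k; split_ifs <;> positivity
    · intro k
      split_ifs with h
      · rw [one_mul, div_eq_mul_one_div]
      · positivity
  rw [tsum_congr h1, Summable.tsum_finsetSum hsummand]
  refine Finset.sum_congr rfl (fun d hd => ?_)
  have hdpos : 0 < d := Nat.pos_of_mem_divisors hd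
  have hdz : ((d:ℕ):ℤ) ≠ 0 := by exact_mod_cast hdpos.ne'
  have hinj : Function.Injective (fun j : ℤ => (d:ℤ)*j) := mul_right_injective₀ hdz
  have hsupp : Function.support (fun k : ℤ =>
      if (d:ℤ) ∣ k then (Nat.totient d : ℝ)/(1 + |(k:ℝ) - β|^p) else 0)
      ⊆ Set.range (fun j : ℤ => (d:ℤ)*j) := by
    intro k hk
    simp only [Function.mem_support] at hk
    by_cases h : (d:ℤ) ∣ k
    · obtain ⟨j, hj⟩ := h
      exact ⟨j, hj.symm⟩
    · exact absurd (if_neg h) hk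
  rw [← Function.Injective.tsum_eq hinj hsupp]
  have : ∀ j : ℤ, (if (d:ℤ) ∣ (d:ℤ)*j then (Nat.totient d : ℝ)/(1 + |(((d:ℤ)*j : ℤ):ℝ) - β|^p) else 0)
      = (Nat.totient d : ℝ) * (1/(1+|((d:ℕ):ℝ)*(j:ℝ) - β|^p)) := by
    intro j
    rw [if_pos (dvd_mul_right _ _)]
    push_cast
    rw [div_eq_mul_one_div]
  rw [tsum_congr this, tsum_mul_left]

def Zi (η : ℝ) : ℝ := ∑' s : ℤ, 1/|(s:ℝ)|^(1+η)

def K2 (η : ℝ) : ℝ := 2^(1+η) * Zi η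

def K5 (η : ℝ) : ℝ := (1 + K2 η) + 2^(1+η)*(1+K2 η)/η

lemma Zi_nonneg (η : ℝ) : 0 ≤ Zi η := tsum_nonneg (fun s => by positivity)

lemma K2_nonneg (η : ℝ) : 0 ≤ K2 η := by
  have := Zi_nonneg η
  unfold K2
  positivity

/-- summability and bound for `∑ d^(-(1+η))` over `ℕ+`. -/
lemma sum_rpow_neg_pnat {η : ℝ} (hη : 0 < η) :
    Summable (fun d : ℕ+ => ((d:ℕ):ℝ)^(-(1+η))) ∧
    ∑' d : ℕ+, ((d:ℕ):ℝ)^(-(1+η)) ≤ 2^(1+η)/η := by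
  obtain ⟨hsum, hb⟩ := lemT_pnat (q := η) (Y := 1) (e := 1) hη one_pos one_pos
  have hpt : ∀ d : ℕ+, ((d:ℕ):ℝ)^(-(1+η)) ≤ 2^(1+η) * ((1:ℝ) + ((d:ℕ):ℝ)*1)^(-(η+1)) := by
    intro d
    have hD : (1:ℝ) ≤ ((d:ℕ):ℝ) := by exact_mod_cast d.pos
    have h1 : ((d:ℕ):ℝ)^(-(1+η)) ≤ ((1 + ((d:ℕ):ℝ))/2)^(-(1+η)) := by
      apply rpow_neg_base_mono (by linarith) (by linarith) (by linarith)
    have h2 : ((1 + ((d:ℕ):ℝ))/2)^(-(1+η)) = 2^(1+η) * (1 + ((d:ℕ):ℝ))^(-(1+η)) := by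
      rw [Real.div_rpow (by linarith) (by norm_num), Real.rpow_neg (by norm_num : (0:ℝ) ≤ 2),
        div_inv_eq_mul, mul_comm]
    have h3 : (1 + ((d:ℕ):ℝ))^(-(1+η)) = ((1:ℝ) + ((d:ℕ):ℝ)*1)^(-(η+1)) := by
      rw [mul_one]
      congr 1
      ring
    calc ((d:ℕ):ℝ)^(-(1+η)) ≤ ((1 + ((d:ℕ):ℝ))/2)^(-(1+η)) := h1
      _ = 2^(1+η) * ((1:ℝ) + ((d:ℕ):ℝ)*1)^(-(η+1)) := by rw [h2, h3]
  have hsum2 : Summable (fun d : ℕ+ => ((d:ℕ):ℝ)^(-(1+η))) :=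
    Summable.of_nonneg_of_le (fun d => by positivity) hpt (hsum.mul_left _)
  refine ⟨hsum2, ?_⟩
  calc ∑' d : ℕ+, ((d:ℕ):ℝ)^(-(1+η))
      ≤ ∑' d : ℕ+, 2^(1+η) * ((1:ℝ) + ((d:ℕ):ℝ)*1)^(-(η+1)) :=
        Summable.tsum_le_tsum hpt hsum2 (hsum.mul_left _)
    _ = 2^(1+η) * ∑' d : ℕ+, ((1:ℝ) + ((d:ℕ):ℝ)*1)^(-(η+1)) := tsum_mul_left
    _ ≤ 2^(1+η) * ((1:ℝ)^(-η) / (η*1)) := by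
        apply mul_le_mul_of_nonneg_left hb (by positivity)
    _ = 2^(1+η)/η := by rw [Real.one_rpow]; ring


set_option maxHeartbeats 1000000 in
lemma per_e {η : ℝ} (hη : 0 < η) {m : ℕ} (hm : 3 ≤ m) (α X : ℝ) (hX : 1 ≤ X) (e : ℕ+) :
    Summable (fun d : ℕ+ => ((((d*e:ℕ+):ℕ):ℝ))⁻¹ * (X + (((d*e:ℕ+):ℕ):ℝ)) ^ ((1:ℝ) - (m:ℝ)) *
        ((Nat.totient (d:ℕ) : ℝ) *
          ∑' j : ℤ, 1/(1+|((d:ℕ):ℝ)*(j:ℝ) - (((d*e:ℕ+):ℕ):ℝ)*α|^(1+η)))) ∧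
    (∑' d : ℕ+, ((((d*e:ℕ+):ℕ):ℝ))⁻¹ * (X + (((d*e:ℕ+):ℕ):ℝ)) ^ ((1:ℝ) - (m:ℝ)) *
        ((Nat.totient (d:ℕ) : ℝ) *
          ∑' j : ℤ, 1/(1+|((d:ℕ):ℝ)*(j:ℝ) - (((d*e:ℕ+):ℕ):ℝ)*α|^(1+η))))
      ≤ K5 η * X ^ ((2:ℝ) - (m:ℝ)) *
          (if nint (((e:ℕ):ℝ) * α) = 0 then 1 / ((e:ℕ):ℝ) ^ 2
            else min (1 / ((e:ℕ):ℝ) ^ 2) (1 / (X * ((e:ℕ):ℝ) * nint (((e:ℕ):ℝ) * α)))) := by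
  have hp : (1:ℝ) < 1+η := by linarith
  have hp0 : (0:ℝ) < 1+η := by linarith
  have hX0 : (0:ℝ) < X := by linarith
  set p : ℝ := 1+η with hpdef
  set E : ℝ := ((e:ℕ):ℝ) with hE
  have hE1 : (1:ℝ) ≤ E := by rw [hE]; exact Nat.one_le_cast.2 e.pos
  have hE0 : (0:ℝ) < E := by linarith
  set δ : ℝ := nint (E * α) with hδ
  have hδ0 : 0 ≤ δ := abs_nonneg _
  have hδh : δ ≤ 1/2 := abs_sub_round _
  have hq2 : (0:ℝ) < (m:ℝ) - 2 := by
    have : (3:ℝ) ≤ (m:ℝ) := by exact_mod_cast hm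
    linarith
  have hq21 : (1:ℝ) ≤ (m:ℝ) - 2 := by
    have : (3:ℝ) ≤ (m:ℝ) := by exact_mod_cast hm
    linarith
  -- the function
  set W : ℕ+ → ℝ := fun d => ((((d*e:ℕ+):ℕ):ℝ))⁻¹ * (X + (((d*e:ℕ+):ℕ):ℝ)) ^ ((1:ℝ) - (m:ℝ)) *
        ((Nat.totient (d:ℕ) : ℝ) *
          ∑' j : ℤ, 1/(1+|((d:ℕ):ℝ)*(j:ℝ) - (((d*e:ℕ+):ℕ):ℝ)*α|^p)) with hW
  have hcast : ∀ d : ℕ+, (((d*e:ℕ+):ℕ):ℝ) = ((d:ℕ):ℝ) * E := by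
    intro d
    rw [hE]
    push_cast
    ring
  have hWnn : ∀ d : ℕ+, 0 ≤ W d := by
    intro d
    rw [hW]
    have h1 : 0 ≤ ∑' j : ℤ, 1/(1+|((d:ℕ):ℝ)*(j:ℝ) - (((d*e:ℕ+):ℕ):ℝ)*α|^p) :=
      tsum_nonneg (fun j => by positivity)
    have h2 : (0:ℝ) < (((d*e:ℕ+):ℕ):ℝ) := by rw [hcast]; positivity
    positivity
  -- pointwise bound on W
  have hWle : ∀ d : ℕ+, W d ≤ E⁻¹ * (X + ((d:ℕ):ℝ)*E) ^ ((1:ℝ) - (m:ℝ)) *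
      (1/(1+(((d:ℕ):ℝ)*δ)^p) + K2 η * ((d:ℕ):ℝ)^(-p)) := by
    intro d
    set D : ℝ := ((d:ℕ):ℝ) with hD
    have hD1 : (1:ℝ) ≤ D := by rw [hD]; exact Nat.one_le_cast.2 d.pos
    have hD0 : (0:ℝ) < D := by linarith
    have hSb : ∑' j : ℤ, 1/(1+|D*(j:ℝ) - (((d*e:ℕ+):ℕ):ℝ)*α|^p)
        ≤ 1/(1+(D*δ)^p) + K2 η * D^(-p) := by
      have h := (sumZ hp hD1 ((D*E)*α)).2
      have hdiv : (D*E)*α/D = E*α := by field_simp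
      rw [hdiv] at h
      have : |E*α - (round (E*α):ℝ)| = δ := rfl
      rw [this] at h
      calc ∑' j : ℤ, 1/(1+|D*(j:ℝ) - (((d*e:ℕ+):ℕ):ℝ)*α|^p)
          = ∑' j : ℤ, 1/(1+|D*(j:ℝ) - (D*E)*α|^p) := by
            apply tsum_congr; intro j; rw [hcast d]
        _ ≤ 1/(1+(D*δ)^p) + 2^p * D^(-p) * Zi η := h
        _ = 1/(1+(D*δ)^p) + K2 η * D^(-p) := by rw [K2]; ring
    have hSnn : 0 ≤ ∑' j : ℤ, 1/(1+|D*(j:ℝ) - (((d*e:ℕ+):ℕ):ℝ)*α|^p) :=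
      tsum_nonneg (fun j => by positivity)
    have htot : (Nat.totient (d:ℕ) : ℝ) ≤ D := by
      rw [hD]
      exact_mod_cast Nat.totient_le _
    have hrw : (0:ℝ) ≤ (X + D*E) ^ ((1:ℝ) - (m:ℝ)) := by positivity
    calc W d = (D*E)⁻¹ * (X + D*E) ^ ((1:ℝ) - (m:ℝ)) *
          ((Nat.totient (d:ℕ) : ℝ) * ∑' j : ℤ, 1/(1+|D*(j:ℝ) - (((d*e:ℕ+):ℕ):ℝ)*α|^p)) := by
          rw [hW]
          simp only
          rw [hcast d]
      _ ≤ (D*E)⁻¹ * (X + D*E) ^ ((1:ℝ) - (m:ℝ)) *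
          (D * (1/(1+(D*δ)^p) + K2 η * D^(-p))) := by
          apply mul_le_mul_of_nonneg_left _ (by positivity)
          have hb2 : 0 ≤ 1/(1+(D*δ)^p) + K2 η * D^(-p) := by
            have := K2_nonneg η
            positivity
          calc (Nat.totient (d:ℕ) : ℝ) * ∑' j : ℤ, 1/(1+|D*(j:ℝ) - (((d*e:ℕ+):ℕ):ℝ)*α|^p)
              ≤ D * ∑' j : ℤ, 1/(1+|D*(j:ℝ) - (((d*e:ℕ+):ℕ):ℝ)*α|^p) :=
                mul_le_mul_of_nonneg_right htot hSnn
            _ ≤ D * (1/(1+(D*δ)^p) + K2 η * D^(-p)) :=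
                mul_le_mul_of_nonneg_left hSb hD0.le
      _ = E⁻¹ * (X + D*E) ^ ((1:ℝ) - (m:ℝ)) *
          (1/(1+(D*δ)^p) + K2 η * D^(-p)) := by
          field_simp
  -- bound A majorant
  have hmajA : ∀ d : ℕ+, E⁻¹ * (X + ((d:ℕ):ℝ)*E) ^ ((1:ℝ) - (m:ℝ)) *
      (1/(1+(((d:ℕ):ℝ)*δ)^p) + K2 η * ((d:ℕ):ℝ)^(-p))
      ≤ (1+K2 η) * (E⁻¹ * (X + ((d:ℕ):ℝ)*E) ^ ((1:ℝ) - (m:ℝ))) := by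
    intro d
    set D : ℝ := ((d:ℕ):ℝ) with hD
    have hD1 : (1:ℝ) ≤ D := by rw [hD]; exact Nat.one_le_cast.2 d.pos
    have h1 : 1/(1+(D*δ)^p) ≤ 1 := by
      rw [one_div]
      apply inv_le_one_of_one_le₀
      nlinarith [Real.rpow_nonneg (show (0:ℝ) ≤ D*δ by positivity) p]
    have h2 : D^(-p) ≤ 1 :=
      Real.rpow_le_one_of_one_le_of_nonpos hD1 (by linarith)
    have h3 : 1/(1+(D*δ)^p) + K2 η * D^(-p) ≤ 1 + K2 η := by
      have := K2_nonneg η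
      nlinarith
    calc E⁻¹ * (X + D*E) ^ ((1:ℝ) - (m:ℝ)) * (1/(1+(D*δ)^p) + K2 η * D^(-p))
        ≤ E⁻¹ * (X + D*E) ^ ((1:ℝ) - (m:ℝ)) * (1 + K2 η) := by
          apply mul_le_mul_of_nonneg_left h3 (by positivity)
      _ = (1+K2 η) * (E⁻¹ * (X + D*E) ^ ((1:ℝ) - (m:ℝ))) := by ring
  have hexp : ∀ d : ℕ+, (X + ((d:ℕ):ℝ)*E) ^ ((1:ℝ) - (m:ℝ))
      = (X + ((d:ℕ):ℝ)*E) ^ (-(((m:ℝ)-2)+1)) := by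
    intro d; congr 1; ring
  obtain ⟨hTsum0, hTb0⟩ := lemT_pnat hq2 hX0 hE0
  have hTsum : Summable (fun d : ℕ+ => (X + ((d:ℕ):ℝ)*E) ^ ((1:ℝ) - (m:ℝ))) :=
    hTsum0.congr (fun d => (hexp d).symm)
  have hTb : ∑' d : ℕ+, (X + ((d:ℕ):ℝ)*E) ^ ((1:ℝ) - (m:ℝ))
      ≤ X ^ (-((m:ℝ)-2)) / (((m:ℝ)-2)*E) := by
    rw [tsum_congr hexp]
    exact hTb0
  have hmajAsum : Summable (fun d : ℕ+ =>
      (1+K2 η) * (E⁻¹ * (X + ((d:ℕ):ℝ)*E) ^ ((1:ℝ) - (m:ℝ)))) :=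
    (hTsum.mul_left E⁻¹).mul_left (1+K2 η)
  have hWsum : Summable W :=
    Summable.of_nonneg_of_le hWnn (fun d => (hWle d).trans (hmajA d)) hmajAsum
  have hXpow : X ^ (-((m:ℝ)-2)) = X ^ ((2:ℝ)-(m:ℝ)) := by congr 1; ring
  have hXpow2nn : (0:ℝ) ≤ X ^ ((2:ℝ)-(m:ℝ)) := by positivity
  -- bound A
  have boundA : ∑' d, W d ≤ (1+K2 η) * X ^ ((2:ℝ)-(m:ℝ)) * (1/E^2) := by
    calc ∑' d, W d ≤ ∑' d : ℕ+, (1+K2 η) * (E⁻¹ * (X + ((d:ℕ):ℝ)*E) ^ ((1:ℝ) - (m:ℝ))) :=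
          Summable.tsum_le_tsum (fun d => (hWle d).trans (hmajA d)) hWsum hmajAsum
      _ = (1+K2 η) * (E⁻¹ * ∑' d : ℕ+, (X + ((d:ℕ):ℝ)*E) ^ ((1:ℝ) - (m:ℝ))) := by
          rw [tsum_mul_left, tsum_mul_left]
      _ ≤ (1+K2 η) * (E⁻¹ * (X ^ (-((m:ℝ)-2)) / (((m:ℝ)-2)*E))) := by
          have hk := K2_nonneg η
          apply mul_le_mul_of_nonneg_left _ (by linarith)
          apply mul_le_mul_of_nonneg_left hTb (by positivity)
      _ ≤ (1+K2 η) * X ^ ((2:ℝ)-(m:ℝ)) * (1/E^2) := by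
          rw [hXpow]
          have hstep : E⁻¹ * (X ^ ((2:ℝ)-(m:ℝ)) / (((m:ℝ)-2)*E))
              ≤ X ^ ((2:ℝ)-(m:ℝ)) * (1/E^2) := by
            have he1 : E⁻¹ * (X ^ ((2:ℝ)-(m:ℝ)) / (((m:ℝ)-2)*E))
                = X ^ ((2:ℝ)-(m:ℝ)) / (((m:ℝ)-2)*E^2) := by
              rw [pow_two, div_eq_mul_inv, div_eq_mul_inv, mul_inv, mul_inv]
              ring
            have he2 : X ^ ((2:ℝ)-(m:ℝ)) / (((m:ℝ)-2)*E^2) ≤ X ^ ((2:ℝ)-(m:ℝ)) / E^2 := by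
              rw [div_eq_mul_one_div, div_eq_mul_one_div (X ^ ((2:ℝ)-(m:ℝ))) (E^2)]
              apply mul_le_mul_of_nonneg_left _ hXpow2nn
              apply one_div_le_one_div_of_le (by positivity)
              nlinarith
            rw [he1]
            calc X ^ ((2:ℝ)-(m:ℝ)) / (((m:ℝ)-2)*E^2) ≤ X ^ ((2:ℝ)-(m:ℝ)) / E^2 := he2
              _ = X ^ ((2:ℝ)-(m:ℝ)) * (1/E^2) := by ring
          have hk := K2_nonneg η
          calc (1+K2 η) * (E⁻¹ * (X ^ ((2:ℝ)-(m:ℝ)) / (((m:ℝ)-2)*E)))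
              ≤ (1+K2 η) * (X ^ ((2:ℝ)-(m:ℝ)) * (1/E^2)) :=
                mul_le_mul_of_nonneg_left hstep (by linarith)
            _ = (1+K2 η) * X ^ ((2:ℝ)-(m:ℝ)) * (1/E^2) := by ring
  refine ⟨hWsum, ?_⟩
  have hK5A : (1+K2 η) ≤ K5 η := by
    have hk := K2_nonneg η
    have : 0 ≤ 2^(1+η)*(1+K2 η)/η := by positivity
    rw [K5]
    linarith
  by_cases hδz : δ = 0
  · rw [if_pos hδz]
    calc ∑' d, W d ≤ (1+K2 η) * X ^ ((2:ℝ)-(m:ℝ)) * (1/E^2) := boundA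
      _ ≤ K5 η * X ^ ((2:ℝ)-(m:ℝ)) * (1/E^2) := by
          apply mul_le_mul_of_nonneg_right _ (by positivity)
          exact mul_le_mul_of_nonneg_right hK5A hXpow2nn
  · rw [if_neg hδz]
    have hδpos : 0 < δ := lt_of_le_of_ne hδ0 (Ne.symm hδz)
    -- bound B
    have hVle : ∀ d : ℕ+, W d ≤ E⁻¹ * X ^ ((1:ℝ)-(m:ℝ)) *
        (2^p * (1+((d:ℕ):ℝ)*δ)^(-p) + K2 η * ((d:ℕ):ℝ)^(-p)) := by
      intro d
      refine (hWle d).trans ?_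
      set D : ℝ := ((d:ℕ):ℝ) with hD
      have hD1 : (1:ℝ) ≤ D := by rw [hD]; exact Nat.one_le_cast.2 d.pos
      have h1 : (X + D*E) ^ ((1:ℝ)-(m:ℝ)) ≤ X ^ ((1:ℝ)-(m:ℝ)) := by
        apply Real.rpow_le_rpow_of_nonpos hX0 (by nlinarith)
        have h3 : (3:ℝ) ≤ (m:ℝ) := by exact_mod_cast hm
        linarith
      have h2 : 1/(1+(D*δ)^p) ≤ 2^p * (1+D*δ)^(-p) :=
        inv_one_add_rpow_le hp0 (by positivity)
      have hk := K2_nonneg η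
      have hDp : (0:ℝ) ≤ D^(-p) := by positivity
      gcongr
    -- summability of pieces
    have hexp2 : ∀ d : ℕ+, ((1:ℝ)+((d:ℕ):ℝ)*δ)^(-p) = ((1:ℝ)+((d:ℕ):ℝ)*δ)^(-(η+1)) := by
      intro d; congr 1; rw [hpdef]; ring
    obtain ⟨hT2sum0, hT2b0⟩ := lemT_pnat hη one_pos hδpos
    have hT2sum : Summable (fun d : ℕ+ => ((1:ℝ)+((d:ℕ):ℝ)*δ)^(-p)) :=
      hT2sum0.congr (fun d => (hexp2 d).symm)
    have hT2b : ∑' d : ℕ+, ((1:ℝ)+((d:ℕ):ℝ)*δ)^(-p) ≤ 1/(η*δ) := by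
      rw [tsum_congr hexp2]
      calc ∑' d : ℕ+, ((1:ℝ)+((d:ℕ):ℝ)*δ)^(-(η+1)) ≤ (1:ℝ)^(-η)/(η*δ) := hT2b0
        _ = 1/(η*δ) := by rw [Real.one_rpow]
    obtain ⟨hZdsum0, hZdb0⟩ := sum_rpow_neg_pnat hη
    have hexp3 : ∀ d : ℕ+, ((d:ℕ):ℝ)^(-p) = ((d:ℕ):ℝ)^(-(1+η)) := by
      intro d; rw [hpdef]
    have hZdsum : Summable (fun d : ℕ+ => ((d:ℕ):ℝ)^(-p)) :=
      hZdsum0.congr (fun d => (hexp3 d).symm)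
    have hZdb : ∑' d : ℕ+, ((d:ℕ):ℝ)^(-p) ≤ 2^(1+η)/η := by
      rw [tsum_congr hexp3]
      exact hZdb0
    have hk := K2_nonneg η
    have hVsum : Summable (fun d : ℕ+ => E⁻¹ * X ^ ((1:ℝ)-(m:ℝ)) *
        (2^p * (1+((d:ℕ):ℝ)*δ)^(-p) + K2 η * ((d:ℕ):ℝ)^(-p))) :=
      (((hT2sum.mul_left (2^p)).add (hZdsum.mul_left (K2 η))).mul_left _)
    have boundB : ∑' d, W d ≤ (2^(1+η)*(1+K2 η)/η) * X ^ ((2:ℝ)-(m:ℝ)) * (1/(X*E*δ)) := by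
      have hXsplit : X ^ ((1:ℝ)-(m:ℝ)) = X ^ ((2:ℝ)-(m:ℝ)) * X⁻¹ := by
        rw [← Real.rpow_neg_one X, ← Real.rpow_add hX0]
        congr 1
        ring
      have h1δ : (1:ℝ) ≤ 1/δ := by
        rw [le_div_iff₀ hδpos]
        linarith
      calc ∑' d, W d ≤ ∑' d : ℕ+, E⁻¹ * X ^ ((1:ℝ)-(m:ℝ)) *
            (2^p * (1+((d:ℕ):ℝ)*δ)^(-p) + K2 η * ((d:ℕ):ℝ)^(-p)) :=
            Summable.tsum_le_tsum hVle hWsum hVsum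
        _ = E⁻¹ * X ^ ((1:ℝ)-(m:ℝ)) *
            (2^p * (∑' d : ℕ+, (1+((d:ℕ):ℝ)*δ)^(-p)) + K2 η * (∑' d : ℕ+, ((d:ℕ):ℝ)^(-p))) := by
            rw [tsum_mul_left, Summable.tsum_add (hT2sum.mul_left (2^p)) (hZdsum.mul_left (K2 η)),
              tsum_mul_left, tsum_mul_left]
        _ ≤ E⁻¹ * X ^ ((1:ℝ)-(m:ℝ)) * (2^p * (1/(η*δ)) + K2 η * (2^(1+η)/η)) := by
            apply mul_le_mul_of_nonneg_left _ (by positivity)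
            apply add_le_add
            · exact mul_le_mul_of_nonneg_left hT2b (by positivity)
            · exact mul_le_mul_of_nonneg_left hZdb hk
        _ ≤ E⁻¹ * X ^ ((1:ℝ)-(m:ℝ)) * ((2^(1+η)*(1+K2 η)/η) * (1/δ)) := by
            apply mul_le_mul_of_nonneg_left _ (by positivity)
            rw [hpdef]
            have hs1 : K2 η * (2^(1+η)/η) ≤ K2 η * (2^(1+η)/η) * (1/δ) :=
              le_mul_of_one_le_right (by positivity) h1δ
            have hs2 : 2^(1+η) * (1/(η*δ)) = (2^(1+η)/η) * (1/δ) := by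
              rw [div_mul_eq_mul_div, one_div, mul_inv]
              ring
            calc 2^(1+η) * (1/(η*δ)) + K2 η * (2^(1+η)/η)
                ≤ (2^(1+η)/η) * (1/δ) + K2 η * (2^(1+η)/η) * (1/δ) := by
                  rw [hs2]
                  linarith
              _ = (2^(1+η)*(1+K2 η)/η) * (1/δ) := by ring
        _ = (2^(1+η)*(1+K2 η)/η) * X ^ ((2:ℝ)-(m:ℝ)) * (1/(X*E*δ)) := by
            rw [hXsplit]
            have hEne : E ≠ 0 := ne_of_gt hE0
            have hXne : X ≠ 0 := ne_of_gt hX0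
            have hδne2 : δ ≠ 0 := ne_of_gt hδpos
            field_simp
    have hK50 : 0 ≤ K5 η := le_trans (by linarith) hK5A
    rw [mul_min_of_nonneg _ _ (mul_nonneg hK50 hXpow2nn)]
    apply le_min
    · calc ∑' d, W d ≤ (1+K2 η) * X ^ ((2:ℝ)-(m:ℝ)) * (1/E^2) := boundA
        _ ≤ K5 η * X ^ ((2:ℝ)-(m:ℝ)) * (1/E^2) := by
            apply mul_le_mul_of_nonneg_right _ (by positivity)
            exact mul_le_mul_of_nonneg_right hK5A hXpow2nn
    · have hK5B : (2^(1+η)*(1+K2 η)/η) ≤ K5 η := by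
        rw [K5]
        linarith
      calc ∑' d, W d ≤ (2^(1+η)*(1+K2 η)/η) * X ^ ((2:ℝ)-(m:ℝ)) * (1/(X*E*δ)) := boundB
        _ ≤ K5 η * X ^ ((2:ℝ)-(m:ℝ)) * (1/(X*E*δ)) := by
            apply mul_le_mul_of_nonneg_right _ (by positivity)
            exact mul_le_mul_of_nonneg_right hK5B hXpow2nn

lemma real_tsum_le_toReal {ι : Type*} {f : ι → ℝ} (hf : ∀ i, 0 ≤ f i) :
    ∑' i, f i ≤ (∑' i, ENNReal.ofReal (f i)).toReal := by
  by_cases hs : Summable f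
  · rw [← ENNReal.ofReal_tsum_of_nonneg hf hs, ENNReal.toReal_ofReal (tsum_nonneg hf)]
  · rw [tsum_eq_zero_of_not_summable hs]
    exact ENNReal.toReal_nonneg

/-- **Lemma 7.3.** -/
theorem gcd_weighted_double_sum_estimate (η : ℝ) (hη : 0 < η) (m : ℕ) (hm : 3 ≤ m) :
    ∃ C : ℝ, 0 < C ∧ ∀ (α X : ℝ), 0 < X →
      (1 ≤ X →
        (∑' c : ℕ+, (((c : ℕ) : ℝ))⁻¹ * (X + ((c : ℕ) : ℝ)) ^ ((1:ℝ) - (m : ℝ)) *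
            ∑' k : ℤ, (Int.gcd ((c : ℕ) : ℤ) k : ℝ) /
              (1 + |(k : ℝ) - ((c : ℕ) : ℝ) * α| ^ (1 + η))) ≤
          C * X ^ ((2:ℝ) - (m : ℝ)) * frakM α X) ∧
      (X < 1 →
        (∑' c : ℕ+, (((c : ℕ) : ℝ))⁻¹ * (X + ((c : ℕ) : ℝ)) ^ ((1:ℝ) - (m : ℝ)) *
            ∑' k : ℤ, (Int.gcd ((c : ℕ) : ℤ) k : ℝ) /
              (1 + |(k : ℝ) - ((c : ℕ) : ℝ) * α| ^ (1 + η))) ≤ C) := by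
  have hp : (1:ℝ) < 1+η := by linarith
  have hk2 := K2_nonneg η
  have hK50 : 0 ≤ K5 η := by
    rw [K5]
    positivity
  refine ⟨K5 η + 4*(1+K2 η) + 1, by positivity, ?_⟩
  intro α X hX0
  -- the summand function
  set a : ℕ+ → ℝ := fun c => (((c : ℕ) : ℝ))⁻¹ * (X + ((c : ℕ) : ℝ)) ^ ((1:ℝ) - (m : ℝ)) *
      ∑' k : ℤ, (Int.gcd ((c : ℕ) : ℤ) k : ℝ) /
        (1 + |(k : ℝ) - ((c : ℕ) : ℝ) * α| ^ (1 + η)) with ha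
  set w : ℕ+ → ℕ → ℝ := fun c d => (((c : ℕ) : ℝ))⁻¹ * (X + ((c : ℕ) : ℝ)) ^ ((1:ℝ) - (m : ℝ)) *
      ((Nat.totient d : ℝ) *
        ∑' j : ℤ, 1/(1+|((d:ℕ):ℝ)*(j:ℝ) - ((c:ℕ):ℝ)*α|^(1+η))) with hw
  have hwnn : ∀ c d, 0 ≤ w c d := by
    intro c d
    rw [hw]
    have h1 : 0 ≤ ∑' j : ℤ, 1/(1+|((d:ℕ):ℝ)*(j:ℝ) - ((c:ℕ):ℝ)*α|^(1+η)) :=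
      tsum_nonneg (fun j => by positivity)
    have h2 : (0:ℝ) < ((c:ℕ):ℝ) := by exact_mod_cast c.pos
    positivity
  have hann : ∀ c, 0 ≤ a c := by
    intro c
    rw [ha]
    have h1 : 0 ≤ ∑' k : ℤ, (Int.gcd ((c : ℕ) : ℤ) k : ℝ) /
        (1 + |(k : ℝ) - ((c : ℕ) : ℝ) * α| ^ (1 + η)) :=
      tsum_nonneg (fun k => by positivity)
    have h2 : (0:ℝ) < ((c:ℕ):ℝ) := by exact_mod_cast c.pos
    positivity
  have ha_decomp : ∀ c : ℕ+, a c = ∑ d ∈ (c:ℕ).divisors, w c d := by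
    intro c
    rw [ha, hw]
    simp only
    rw [stepA hp α c, Finset.mul_sum]
  have hfrakM_nn : 0 ≤ frakM α X := by
    apply tsum_nonneg
    intro l
    have h3 : (0:ℝ) ≤ nint (((l:ℕ):ℝ)*α) := abs_nonneg _
    have h2 : (0:ℝ) ≤ ((l:ℕ):ℝ) := by positivity
    split_ifs
    · positivity
    · apply le_min (by positivity)
      exact div_nonneg zero_le_one (mul_nonneg (mul_nonneg hX0.le h2) h3)
  constructor
  · -- case X ≥ 1
    intro hX1
    set M : ℕ+ → ℝ := fun l => if nint (((l : ℕ) : ℝ) * α) = 0 then 1 / ((l : ℕ) : ℝ) ^ 2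
      else min (1 / ((l : ℕ) : ℝ) ^ 2) (1 / (X * ((l : ℕ) : ℝ) * nint (((l : ℕ) : ℝ) * α)))
      with hM
    have hMnn : ∀ l, 0 ≤ M l := by
      intro l
      rw [hM]
      dsimp only
      have h3 : (0:ℝ) ≤ nint (((l:ℕ):ℝ)*α) := abs_nonneg _
      have h2 : (0:ℝ) ≤ ((l:ℕ):ℝ) := by positivity
      split_ifs
      · positivity
      · exact le_min (by positivity)
          (div_nonneg zero_le_one (mul_nonneg (mul_nonneg hX0.le h2) h3))
    have hMle : ∀ l, M l ≤ 1/((l:ℕ):ℝ)^2 := by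
      intro l
      rw [hM]
      dsimp only
      split_ifs
      · exact le_rfl
      · exact min_le_left _ _
    have hMsum : Summable M := by
      apply Summable.of_nonneg_of_le hMnn hMle
      have h2 : Summable (fun n : ℕ => 1/(n:ℝ)^2) :=
        Real.summable_one_div_nat_pow.2 one_lt_two
      exact h2.comp_injective PNat.coe_injective
    -- ENNReal chain
    have h1 : ∀ c : ℕ+, ENNReal.ofReal (a c)
        = ∑' d : ℕ, (if d ∈ (c:ℕ).divisors then ENNReal.ofReal (w c d) else 0) := by
      intro c
      rw [ha_decomp c, ENNReal.ofReal_sum_of_nonneg (fun d _ => hwnn c d)]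
      rw [tsum_eq_sum (s := (c:ℕ).divisors) (fun b hb => if_neg hb)]
      exact Finset.sum_congr rfl (fun d hd => (if_pos hd).symm)
    have h2 : (∑' c : ℕ+, ENNReal.ofReal (a c))
        = ∑' q : ℕ+ × ℕ, (if q.2 ∈ ((q.1:ℕ)).divisors then ENNReal.ofReal (w q.1 q.2) else 0) := by
      rw [tsum_congr h1]
      exact (ENNReal.tsum_prod' (f := fun q : ℕ+ × ℕ =>
        if q.2 ∈ ((q.1:ℕ)).divisors then ENNReal.ofReal (w q.1 q.2) else 0)).symm
    have h3 : (∑' q : ℕ+ × ℕ, (if q.2 ∈ ((q.1:ℕ)).divisors then ENNReal.ofReal (w q.1 q.2) else 0))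
        = ∑' z : ℕ+ × ℕ+, ENNReal.ofReal (w (z.1*z.2) (z.1:ℕ)) := by
      set i : ℕ+ × ℕ+ → ℕ+ × ℕ := fun z => (z.1*z.2, (z.1:ℕ)) with hi
      have hinj : Function.Injective i := by
        rintro ⟨d, e⟩ ⟨d', e'⟩ hz
        rw [hi] at hz
        simp only [Prod.mk.injEq] at hz
        obtain ⟨h1z, h2z⟩ := hz
        have hd : d = d' := PNat.coe_injective h2z
        subst hd
        have he : e = e' := mul_left_cancel h1z
        rw [he]
      have hsupp : Function.support (fun q : ℕ+ × ℕ =>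
          (if q.2 ∈ ((q.1:ℕ)).divisors then ENNReal.ofReal (w q.1 q.2) else 0))
          ⊆ Set.range i := by
        rintro ⟨c, n⟩ hq
        simp only [Function.mem_support] at hq
        by_cases hmem : n ∈ ((c:ℕ)).divisors
        · obtain ⟨hdvd, hne⟩ := Nat.mem_divisors.1 hmem
          have hnpos : 0 < n := Nat.pos_of_mem_divisors hmem
          have hepos : 0 < (c:ℕ)/n := Nat.div_pos (Nat.le_of_dvd c.pos hdvd) hnpos
          refine ⟨(⟨n, hnpos⟩, ⟨(c:ℕ)/n, hepos⟩), ?_⟩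
          rw [hi]
          simp only [Prod.mk.injEq]
          constructor
          · apply PNat.coe_injective
            show n * ((c:ℕ)/n) = (c:ℕ)
            exact Nat.mul_div_cancel' hdvd
          · rfl
        · exact absurd (if_neg hmem) hq
      rw [← Function.Injective.tsum_eq hinj hsupp]
      apply tsum_congr
      rintro ⟨d, e⟩
      rw [hi]
      simp only
      have hmem : (d:ℕ) ∈ (((d*e : ℕ+):ℕ)).divisors := by
        rw [Nat.mem_divisors]
        exact ⟨by rw [PNat.mul_coe]; exact dvd_mul_right _ _, (d*e).pos.ne'⟩
      rw [if_pos hmem]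
    have h4 : (∑' z : ℕ+ × ℕ+, ENNReal.ofReal (w (z.1*z.2) (z.1:ℕ)))
        = ∑' e : ℕ+, ∑' d : ℕ+, ENNReal.ofReal (w (d*e) (d:ℕ)) := by
      rw [ENNReal.tsum_prod']
      exact ENNReal.tsum_comm
    have h5 : ∀ e : ℕ+, (∑' d : ℕ+, ENNReal.ofReal (w (d*e) (d:ℕ)))
        ≤ ENNReal.ofReal (K5 η * X ^ ((2:ℝ)-(m:ℝ)) * M e) := by
      intro e
      obtain ⟨hsumW, hbW⟩ := per_e hη hm α X hX1 e
      rw [← ENNReal.ofReal_tsum_of_nonneg (fun d => hwnn _ _) hsumW]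
      exact ENNReal.ofReal_le_ofReal hbW
    have h6 : (∑' c : ℕ+, ENNReal.ofReal (a c))
        ≤ ENNReal.ofReal (K5 η * X ^ ((2:ℝ)-(m:ℝ)) * frakM α X) := by
      rw [h2, h3, h4]
      calc ∑' e : ℕ+, ∑' d : ℕ+, ENNReal.ofReal (w (d*e) (d:ℕ))
          ≤ ∑' e : ℕ+, ENNReal.ofReal (K5 η * X ^ ((2:ℝ)-(m:ℝ)) * M e) :=
            ENNReal.tsum_le_tsum h5
        _ = ENNReal.ofReal (∑' e : ℕ+, K5 η * X ^ ((2:ℝ)-(m:ℝ)) * M e) := by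
            rw [ENNReal.ofReal_tsum_of_nonneg
              (fun e => mul_nonneg (mul_nonneg hK50 (by positivity)) (hMnn e))
              (hMsum.mul_left _)]
        _ = ENNReal.ofReal (K5 η * X ^ ((2:ℝ)-(m:ℝ)) * frakM α X) := by
            rw [tsum_mul_left, hM]
            rfl
    calc (∑' c : ℕ+, a c) ≤ (∑' c : ℕ+, ENNReal.ofReal (a c)).toReal :=
          real_tsum_le_toReal hann
      _ ≤ K5 η * X ^ ((2:ℝ)-(m:ℝ)) * frakM α X :=
          ENNReal.toReal_le_of_le_ofReal
            (mul_nonneg (mul_nonneg hK50 (by positivity)) hfrakM_nn) h6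
      _ ≤ (K5 η + 4*(1+K2 η) + 1) * X ^ ((2:ℝ)-(m:ℝ)) * frakM α X := by
          apply mul_le_mul_of_nonneg_right _ hfrakM_nn
          apply mul_le_mul_of_nonneg_right _ (by positivity)
          linarith
  · -- case X < 1
    intro hXlt
    have hS1 : ∀ c : ℕ+, (∑' k : ℤ, (Int.gcd ((c:ℕ):ℤ) k : ℝ) /
        (1 + |(k:ℝ) - ((c:ℕ):ℝ)*α|^(1+η))) ≤ ((c:ℕ):ℝ) * (1 + K2 η) := by
      intro c
      set β : ℝ := ((c:ℕ):ℝ)*α with hβ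
      obtain ⟨hs1, hb1⟩ := sumZ hp (le_refl (1:ℝ)) β
      have hc0 : (0:ℝ) < ((c:ℕ):ℝ) := by exact_mod_cast c.pos
      have hgcd : ∀ k : ℤ, (Int.gcd ((c:ℕ):ℤ) k : ℝ) ≤ ((c:ℕ):ℝ) := by
        intro k
        have h1 : Int.gcd ((c:ℕ):ℤ) k ∣ (c:ℕ) := by
          have h2 : ((Int.gcd ((c:ℕ):ℤ) k : ℕ) : ℤ) ∣ ((c:ℕ):ℤ) := Int.gcd_dvd_left ..
          exact_mod_cast h2
        exact_mod_cast Nat.le_of_dvd c.pos h1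
      have hpt : ∀ k : ℤ, (Int.gcd ((c:ℕ):ℤ) k : ℝ) / (1 + |(k:ℝ) - β|^(1+η))
          ≤ ((c:ℕ):ℝ) * (1/(1+|(1:ℝ)*(k:ℝ) - β|^(1+η))) := by
        intro k
        rw [one_mul, mul_one_div]
        gcongr
        exact_mod_cast hgcd k
      have hinner_sum : Summable (fun k : ℤ => (Int.gcd ((c:ℕ):ℤ) k : ℝ) /
          (1 + |(k:ℝ) - β|^(1+η))) :=
        Summable.of_nonneg_of_le (fun k => by positivity) hpt (hs1.mul_left _)
      have hS1b : (∑' j : ℤ, 1/(1+|(1:ℝ)*(j:ℝ) - β|^(1+η))) ≤ 1 + K2 η := by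
        refine hb1.trans ?_
        have h1 : 1/(1+((1:ℝ)*|β/1 - (round (β/1):ℝ)|)^(1+η)) ≤ 1 := by
          rw [one_div]
          apply inv_le_one_of_one_le₀
          nlinarith [Real.rpow_nonneg
            (show (0:ℝ) ≤ (1:ℝ)*|β/1 - (round (β/1):ℝ)| by positivity) (1+η)]
        have h2 : (2:ℝ)^(1+η) * (1:ℝ)^(-(1+η)) * (∑' s : ℤ, 1/|(s:ℝ)|^(1+η)) = K2 η := by
          rw [Real.one_rpow, K2, Zi]
          ring
        linarith [h2.le]
      calc (∑' k : ℤ, (Int.gcd ((c:ℕ):ℤ) k : ℝ) / (1 + |(k:ℝ) - β|^(1+η)))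
          ≤ ∑' k : ℤ, ((c:ℕ):ℝ) * (1/(1+|(1:ℝ)*(k:ℝ) - β|^(1+η))) :=
            Summable.tsum_le_tsum hpt hinner_sum (hs1.mul_left _)
        _ = ((c:ℕ):ℝ) * ∑' k : ℤ, 1/(1+|(1:ℝ)*(k:ℝ) - β|^(1+η)) := tsum_mul_left
        _ ≤ ((c:ℕ):ℝ) * (1 + K2 η) := mul_le_mul_of_nonneg_left hS1b hc0.le
    have haleb : ∀ c : ℕ+, a c ≤ (1+K2 η) * ((c:ℕ):ℝ)^(-(2:ℝ)) := by
      intro c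
      have hc0 : (0:ℝ) < ((c:ℕ):ℝ) := by exact_mod_cast c.pos
      have hc1 : (1:ℝ) ≤ ((c:ℕ):ℝ) := Nat.one_le_cast.2 c.pos
      have hm3 : (3:ℝ) ≤ (m:ℝ) := by exact_mod_cast hm
      have hIa : a c ≤ (((c:ℕ):ℝ))⁻¹ * (X + ((c:ℕ):ℝ))^((1:ℝ)-(m:ℝ)) *
          (((c:ℕ):ℝ) * (1+K2 η)) := by
        rw [ha]
        dsimp only
        exact mul_le_mul_of_nonneg_left (hS1 c) (by positivity)
      have heq : (((c:ℕ):ℝ))⁻¹ * (X + ((c:ℕ):ℝ))^((1:ℝ)-(m:ℝ)) *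
          (((c:ℕ):ℝ) * (1+K2 η)) = (1+K2 η) * (X+((c:ℕ):ℝ))^((1:ℝ)-(m:ℝ)) := by
        field_simp
      have h2 : (X+((c:ℕ):ℝ))^((1:ℝ)-(m:ℝ)) ≤ ((c:ℕ):ℝ)^((1:ℝ)-(m:ℝ)) :=
        Real.rpow_le_rpow_of_nonpos hc0 (by linarith) (by linarith)
      have h3 : ((c:ℕ):ℝ)^((1:ℝ)-(m:ℝ)) ≤ ((c:ℕ):ℝ)^(-(2:ℝ)) :=
        Real.rpow_le_rpow_of_exponent_le hc1 (by linarith)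
      calc a c ≤ (((c:ℕ):ℝ))⁻¹ * (X + ((c:ℕ):ℝ))^((1:ℝ)-(m:ℝ)) *
            (((c:ℕ):ℝ) * (1+K2 η)) := hIa
        _ = (1+K2 η) * (X+((c:ℕ):ℝ))^((1:ℝ)-(m:ℝ)) := heq
        _ ≤ (1+K2 η) * ((c:ℕ):ℝ)^(-(2:ℝ)) :=
            mul_le_mul_of_nonneg_left (h2.trans h3) (by linarith)
    obtain ⟨hZ2s, hZ2b⟩ := sum_rpow_neg_pnat (show (0:ℝ) < 1 by norm_num)
    have hconv : ∀ d : ℕ+, ((d:ℕ):ℝ)^(-((1:ℝ)+1)) = ((d:ℕ):ℝ)^(-(2:ℝ)) := by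
      intro d; norm_num
    have hsummable2 : Summable (fun c : ℕ+ => ((c:ℕ):ℝ)^(-(2:ℝ))) := hZ2s.congr hconv
    have hbound2 : ∑' c : ℕ+, ((c:ℕ):ℝ)^(-(2:ℝ)) ≤ 4 := by
      rw [tsum_congr (fun d => (hconv d).symm)]
      refine hZ2b.trans ?_
      have h4 : (2:ℝ)^((1:ℝ)+1) = 4 := by
        rw [show ((1:ℝ)+1) = ((2:ℕ):ℝ) by norm_num, Real.rpow_natCast]
        norm_num
      rw [h4]
      norm_num
    have hasum : Summable a :=
      Summable.of_nonneg_of_le hann haleb (hsummable2.mul_left _)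
    calc (∑' c : ℕ+, a c) ≤ ∑' c : ℕ+, (1+K2 η) * ((c:ℕ):ℝ)^(-(2:ℝ)) :=
          Summable.tsum_le_tsum haleb hasum (hsummable2.mul_left _)
      _ = (1+K2 η) * ∑' c : ℕ+, ((c:ℕ):ℝ)^(-(2:ℝ)) := tsum_mul_left
      _ ≤ (1+K2 η) * 4 := mul_le_mul_of_nonneg_left hbound2 (by linarith)
      _ ≤ K5 η + 4*(1+K2 η) + 1 := by linarith

end
end
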